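/- arXiv:1602.07751 — 2 statements merged into one kernel-verified Lean document; each statement's English description precedes it below -/
import Mathlib

section
/- 𝒫^sc is a nonempty compact subset of [0,1]^𝒜 endowed with the product topology of pointwise convergence, and for every F ∈ 𝒜 the envelopes are attained and satisfy min{μ(F) : μ ∈ 𝒫^sc} = ∫_* σ(F|H_i) π(dH_i) and max{μ(F) : μ ∈ 𝒫^sc} = ∫^* σ(F|H_i) π(dH_i). -/
open Set

open scoped Classical

variable {Ω : Type*}

/-- A field of sets on `Ω`: contains `univ`, closed under complements and finite unions. -/
def IsSetField (𝒜 : Set (Set Ω)) : Prop :=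
  Set.univ ∈ 𝒜 ∧ (∀ A ∈ 𝒜, Aᶜ ∈ 𝒜) ∧ ∀ A ∈ 𝒜, ∀ B ∈ 𝒜, A ∪ B ∈ 𝒜

/-- A finitely additive probability on the field `𝒜`. -/
def IsFAP (𝒜 : Set (Set Ω)) (P : Set Ω → ℝ) : Prop :=
  (∀ A ∈ 𝒜, 0 ≤ P A ∧ P A ≤ 1) ∧ P Set.univ = 1 ∧
    ∀ A ∈ 𝒜, ∀ B ∈ 𝒜, Disjoint A B → P (A ∪ B) = P A + P B

/-- A partition of `Ω` into nonempty pairwise disjoint pieces. -/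
def IsPartition {ι : Type*} (H : ι → Set Ω) : Prop :=
  (∀ i, (H i).Nonempty) ∧ (Pairwise fun i j => Disjoint (H i) (H j)) ∧
    (⋃ i, H i) = Set.univ

/-- A field containing every member of the partition `H` and whose members are
unions of members of the partition. -/
def IsFieldOver {ι : Type*} (H : ι → Set Ω) (𝒜L : Set (Set Ω)) : Prop :=
  IsSetField 𝒜L ∧ (∀ i, H i ∈ 𝒜L) ∧ ∀ A ∈ 𝒜L, ∃ S : Set ι, A = ⋃ i ∈ S, H i

/-- A field containing `𝒜L ∪ 𝒜E` whose members are unions of the atoms `H i ∩ E j`. -/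
def IsJointField {ι κ : Type*} (H : ι → Set Ω) (E : κ → Set Ω)
    (𝒜L 𝒜E 𝒜 : Set (Set Ω)) : Prop :=
  IsSetField 𝒜 ∧ 𝒜L ⊆ 𝒜 ∧ 𝒜E ⊆ 𝒜 ∧
    ∀ A ∈ 𝒜, ∃ S : Set (ι × κ), A = ⋃ p ∈ S, H p.1 ∩ E p.2

/-- A strategy on `𝒜 × ℒ`: each `σ (·|H i)` is a finitely additive probability on `𝒜`
equal to `1` on events implied by `H i`. -/
def IsStrategy {ι : Type*} (𝒜 : Set (Set Ω)) (H : ι → Set Ω) (σ : Set Ω → ι → ℝ) : Prop :=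
  ∀ i, IsFAP 𝒜 (fun F => σ F i) ∧ ∀ F ∈ 𝒜, H i ⊆ F → σ F i = 1

/-- A full conditional probability on the field `𝒜` (conditions (C1), (C2), (C3)). -/
def IsFCP (𝒜 : Set (Set Ω)) (P : Set Ω → Set Ω → ℝ) : Prop :=
  (∀ E ∈ 𝒜, ∀ K ∈ 𝒜, K.Nonempty → P E K = P (E ∩ K) K) ∧
  (∀ K ∈ 𝒜, K.Nonempty → IsFAP 𝒜 fun E => P E K) ∧
  ∀ E ∈ 𝒜, ∀ F ∈ 𝒜, ∀ K ∈ 𝒜, K.Nonempty → (E ∩ K).Nonempty →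
    P (E ∩ F) K = P E K * P F (E ∩ K)

/-- `P` extends the prior `π` on `𝒜L` and the strategy `σ` on `𝒜 × ℒ`. -/
def ExtendsPriorStrategy {ι : Type*} (𝒜 𝒜L : Set (Set Ω)) (H : ι → Set Ω)
    (π : Set Ω → ℝ) (σ : Set Ω → ι → ℝ) (P : Set Ω → Set Ω → ℝ) : Prop :=
  (∀ B ∈ 𝒜L, P B Set.univ = π B) ∧ ∀ F ∈ 𝒜, ∀ i, P F (H i) = σ F i

/-- The set `𝒫` of full conditional probabilities on `𝒜` extending `{π, σ}`. -/
def FCPSet {ι : Type*} (𝒜 𝒜L : Set (Set Ω)) (H : ι → Set Ω)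
    (π : Set Ω → ℝ) (σ : Set Ω → ι → ℝ) : Set (Set Ω → Set Ω → ℝ) :=
  {P | IsFCP 𝒜 P ∧ ExtendsPriorStrategy 𝒜 𝒜L H π σ P}

/-- Lower envelope of a set of conditional probabilities at `F|K`. -/
noncomputable def lowEnv (Ps : Set (Set Ω → Set Ω → ℝ)) (F K : Set Ω) : ℝ :=
  sInf ((fun P => P F K) '' Ps)

/-- Upper envelope of a set of conditional probabilities at `F|K`. -/
noncomputable def upEnv (Ps : Set (Set Ω → Set Ω → ℝ)) (F K : Set Ω) : ℝ :=
  sSup ((fun P => P F K) '' Ps)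

/-- A finite partition of `Ω` contained in `𝒜L`. -/
def IsFinPart (𝒜L : Set (Set Ω)) (T : Finset (Set Ω)) : Prop :=
  (↑T : Set (Set Ω)) ⊆ 𝒜L ∧ (∀ A ∈ T, (A : Set Ω).Nonempty) ∧
    (∀ A ∈ T, ∀ B ∈ T, A ≠ B → Disjoint A B) ∧ ⋃₀ (↑T : Set (Set Ω)) = Set.univ

/-- Lower Stieltjes integral of `X : ℒ → ℝ` with respect to `μ` on `𝒜L`. -/
noncomputable def lowerSInt {ι : Type*} (H : ι → Set Ω) (𝒜L : Set (Set Ω))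
    (X : ι → ℝ) (μ : Set Ω → ℝ) : ℝ :=
  sSup {x | ∃ T : Finset (Set Ω), IsFinPart 𝒜L T ∧
    x = ∑ A ∈ T, sInf {y | ∃ i, H i ⊆ A ∧ y = X i} * μ A}

/-- Upper Stieltjes integral of `X : ℒ → ℝ` with respect to `μ` on `𝒜L`. -/
noncomputable def upperSInt {ι : Type*} (H : ι → Set Ω) (𝒜L : Set (Set Ω))
    (X : ι → ℝ) (μ : Set Ω → ℝ) : ℝ :=
  sInf {x | ∃ T : Finset (Set Ω), IsFinPart 𝒜L T ∧
    x = ∑ A ∈ T, sSup {y | ∃ i, H i ⊆ A ∧ y = X i} * μ A}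

/-- `𝒜L`-continuity of a bounded function `X : ℒ → ℝ`. -/
def ALContinuous {ι : Type*} (H : ι → Set Ω) (𝒜L : Set (Set Ω)) (X : ι → ℝ) : Prop :=
  (∃ M : ℝ, ∀ i, |X i| ≤ M) ∧ ∀ t : ℝ, ∀ ε > (0 : ℝ), ∃ A ∈ 𝒜L,
    (⋃ i ∈ {i | t + ε ≤ X i}, H i) ⊆ A ∧ A ⊆ ⋃ i ∈ {i | t ≤ X i}, H i

/-- Countable additivity of `P` on the field `𝒜`. -/
def CountablyAdditiveOn (𝒜 : Set (Set Ω)) (P : Set Ω → ℝ) : Prop :=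
  ∀ A : ℕ → Set Ω, (∀ n, A n ∈ 𝒜) → (Pairwise fun m n => Disjoint (A m) (A n)) →
    (⋃ n, A n) ∈ 𝒜 → HasSum (fun n => P (A n)) (P (⋃ n, A n))

/-- A (normalized) capacity on the field `𝒜`. -/
def IsCapacity (𝒜 : Set (Set Ω)) (φ : Set Ω → ℝ) : Prop :=
  φ ∅ = 0 ∧ φ Set.univ = 1 ∧ (∀ A ∈ 𝒜, 0 ≤ φ A ∧ φ A ≤ 1) ∧
    ∀ A ∈ 𝒜, ∀ B ∈ 𝒜, A ⊆ B → φ A ≤ φ B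

/-- Total monotonicity of a capacity `φ` on the field `𝒜`. -/
def TotallyMonotone (𝒜 : Set (Set Ω)) (φ : Set Ω → ℝ) : Prop :=
  ∀ n : ℕ, 2 ≤ n → ∀ A : Fin n → Set Ω, (∀ i, A i ∈ 𝒜) →
    ∑ s ∈ Finset.univ.powerset.filter (fun s : Finset (Fin n) => s.Nonempty),
      (-1 : ℝ) ^ (s.card - 1) * φ (⋂ i ∈ s, A i) ≤ φ (⋃ i, A i)

/-- Restriction of a conditional probability to the domain `𝒜 × ℬ⁰`, viewed as a point
of the product space `ℝ^(𝒜 × ℬ⁰)`. -/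
def restrictPairs (𝒜 ℬ : Set (Set Ω)) (Q : Set Ω → Set Ω → ℝ)
    (p : {p : Set Ω × Set Ω // p.1 ∈ 𝒜 ∧ p.2 ∈ ℬ ∧ p.2.Nonempty}) : ℝ :=
  Q p.val.1 p.val.2

/-- Restriction of a set function to the domain `𝒜`, viewed as a point of `ℝ^𝒜`. -/
def restrictDom (𝒜 : Set (Set Ω)) (μ : Set Ω → ℝ) (A : {A : Set Ω // A ∈ 𝒜}) : ℝ :=
  μ A.val

/-- The field of all unions of members of the partition `H`, i.e. `⟨ℒ⟩*`. -/
def unionsOf {ι : Type*} (H : ι → Set Ω) : Set (Set Ω) :=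
  {A | ∃ S : Set ι, A = ⋃ i ∈ S, H i}

/-- The set `𝒬^fd` of fully ℒ-disintegrable full conditional probabilities on `𝒜`
extending `{π, σ}`. -/
def QfdSet {ι : Type*} (𝒜 𝒜L : Set (Set Ω)) (H : ι → Set Ω)
    (π : Set Ω → ℝ) (σ : Set Ω → ι → ℝ) : Set (Set Ω → Set Ω → ℝ) :=
  {Q | IsFCP 𝒜 Q ∧ ExtendsPriorStrategy 𝒜 𝒜L H π σ Q ∧
    ∀ F ∈ 𝒜, ∀ K ∈ 𝒜L, K.Nonempty →
      Q F K = lowerSInt H 𝒜L (fun i => σ F i) fun B => Q B K}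

/-- The set `𝒬^fsc` of fully strongly ℒ-conglomerable full conditional probabilities
on `𝒜` extending `{π, σ}`. -/
def QfscSet {ι : Type*} (𝒜 𝒜L : Set (Set Ω)) (H : ι → Set Ω)
    (π : Set Ω → ℝ) (σ : Set Ω → ι → ℝ) : Set (Set Ω → Set Ω → ℝ) :=
  {Q | IsFCP 𝒜 Q ∧ ExtendsPriorStrategy 𝒜 𝒜L H π σ Q ∧
    ∀ F ∈ 𝒜, ∀ K ∈ 𝒜L, K.Nonempty → ∀ B ∈ 𝒜L, B.Nonempty → B ⊆ K →
      Q B K * sInf {x | ∃ i, H i ⊆ B ∧ x = σ F i} ≤ Q (F ∩ B) K ∧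
      Q (F ∩ B) K ≤ Q B K * sSup {x | ∃ i, H i ⊆ B ∧ x = σ F i}}

/-- The set `𝒫^sc` of strongly ℒ-conglomerable joint probabilities consistent with `{π, σ}`. -/
def PscSet {ι : Type*} (𝒜 𝒜L : Set (Set Ω)) (H : ι → Set Ω)
    (π : Set Ω → ℝ) (σ : Set Ω → ι → ℝ) : Set (Set Ω → ℝ) :=
  {μ | (∃ P ∈ FCPSet 𝒜 𝒜L H π σ, μ = fun F => P F Set.univ) ∧
    ∀ F ∈ 𝒜, ∀ B ∈ 𝒜L, B.Nonempty →
      π B * sInf {x | ∃ i, H i ⊆ B ∧ x = σ F i} ≤ μ (F ∩ B) ∧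
      μ (F ∩ B) ≤ π B * sSup {x | ∃ i, H i ⊆ B ∧ x = σ F i}}

/-- The set `𝒫^fd` of fully ℒ-disintegrable conditional probabilities on `𝒜 × 𝒜L⁰`
extending `{π, σ}`. -/
def PfdSet {ι : Type*} (𝒜 𝒜L : Set (Set Ω)) (H : ι → Set Ω)
    (π : Set Ω → ℝ) (σ : Set Ω → ι → ℝ) : Set (Set Ω → Set Ω → ℝ) :=
  {P | (∀ E ∈ 𝒜, ∀ K ∈ 𝒜L, K.Nonempty → P E K = P (E ∩ K) K) ∧
    (∀ K ∈ 𝒜L, K.Nonempty → IsFAP 𝒜 fun E => P E K) ∧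
    (∀ E ∈ 𝒜, ∀ F ∈ 𝒜, ∀ K ∈ 𝒜L, K.Nonempty → E ∩ K ∈ 𝒜L → (E ∩ K).Nonempty →
      P (E ∩ F) K = P E K * P F (E ∩ K)) ∧
    (∀ B ∈ 𝒜L, P B Set.univ = π B) ∧ (∀ F ∈ 𝒜, ∀ i, P F (H i) = σ F i) ∧
    ∀ F ∈ 𝒜, ∀ K ∈ 𝒜L, K.Nonempty →
      P F K = lowerSInt H 𝒜L (fun i => σ F i) fun B => P B K}

/-- The Choquet integral `C∫ X dφ = ∫₀¹ φ₊((X ≥ t)) dt` of a `[0,1]`-valued `X : ℒ → ℝ`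
with respect to a capacity `φ` on `𝒜L`, where `φ₊` is the inner extension of `φ`. -/
noncomputable def choquetInt {ι : Type*} (H : ι → Set Ω) (𝒜L : Set (Set Ω))
    (X : ι → ℝ) (φ : Set Ω → ℝ) : ℝ :=
  ∫ t in (0 : ℝ)..(1 : ℝ),
    sSup {y | ∃ B ∈ 𝒜L, B ⊆ (⋃ i ∈ {i | t ≤ X i}, H i) ∧ y = φ B}


/-! ### Auxiliary lemmas for statement10 -/

section Aux10

variable {ι : Type*}

lemma sf_empty {𝒜 : Set (Set Ω)} (h : IsSetField 𝒜) : (∅ : Set Ω) ∈ 𝒜 := by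
  have := h.2.1 _ h.1
  simpa using this

lemma sf_inter {𝒜 : Set (Set Ω)} (h : IsSetField 𝒜) {A B : Set Ω} (hA : A ∈ 𝒜)
    (hB : B ∈ 𝒜) : A ∩ B ∈ 𝒜 := by
  have : A ∩ B = (Aᶜ ∪ Bᶜ)ᶜ := by simp [Set.compl_union]
  rw [this]
  exact h.2.1 _ (h.2.2 _ (h.2.1 _ hA) _ (h.2.1 _ hB))

lemma sf_biUnion {𝒜 : Set (Set Ω)} (h : IsSetField 𝒜) {β : Type*} (T : Finset β)
    (f : β → Set Ω) (hf : ∀ b ∈ T, f b ∈ 𝒜) : (⋃ b ∈ T, f b) ∈ 𝒜 := by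
  classical
  induction T using Finset.induction_on with
  | empty => simpa using sf_empty h
  | @insert a s ha ih =>
    rw [Finset.set_biUnion_insert]
    exact h.2.2 _ (hf a (Finset.mem_insert_self a s)) _
      (ih fun b hbs => hf b (Finset.mem_insert_of_mem hbs))

lemma fap_empty {𝒜 : Set (Set Ω)} {P : Set Ω → ℝ} (hf : IsSetField 𝒜)
    (h : IsFAP 𝒜 P) : P ∅ = 0 := by
  have := h.2.2 ∅ (sf_empty hf) ∅ (sf_empty hf) (by simp)
  simp at this
  linarith

lemma fap_diff {𝒜 : Set (Set Ω)} {P : Set Ω → ℝ} (hf : IsSetField 𝒜)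
    (h : IsFAP 𝒜 P) {A B : Set Ω} (hA : A ∈ 𝒜) (hB : B ∈ 𝒜) (hAB : A ⊆ B) :
    P B = P A + P (B ∩ Aᶜ) := by
  have h1 : B = A ∪ B ∩ Aᶜ := by
    ext x; by_cases hx : x ∈ A <;> simp [hx] <;> tauto
  have h2 : Disjoint A (B ∩ Aᶜ) := by
    rw [Set.disjoint_iff]; intro x hx; exact absurd hx.1 hx.2.2
  calc P B = P (A ∪ B ∩ Aᶜ) := by rw [← h1]
    _ = P A + P (B ∩ Aᶜ) := h.2.2 _ hA _ (sf_inter hf hB (hf.2.1 _ hA)) h2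

lemma fap_mono {𝒜 : Set (Set Ω)} {P : Set Ω → ℝ} (hf : IsSetField 𝒜)
    (h : IsFAP 𝒜 P) {A B : Set Ω} (hA : A ∈ 𝒜) (hB : B ∈ 𝒜) (hAB : A ⊆ B) :
    P A ≤ P B := by
  rw [fap_diff hf h hA hB hAB]
  have := (h.1 _ (sf_inter hf hB (hf.2.1 _ hA))).1
  linarith

lemma fap_sum {𝒜 : Set (Set Ω)} {P : Set Ω → ℝ} (hf : IsSetField 𝒜)
    (h : IsFAP 𝒜 P) {β : Type*} (T : Finset β) (f : β → Set Ω)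
    (hmem : ∀ b ∈ T, f b ∈ 𝒜)
    (hdisj : ∀ a ∈ T, ∀ b ∈ T, a ≠ b → Disjoint (f a) (f b)) :
    P (⋃ b ∈ T, f b) = ∑ b ∈ T, P (f b) := by
  classical
  induction T using Finset.induction_on with
  | empty => simpa using fap_empty hf h
  | @insert a s ha ih =>
    rw [Finset.set_biUnion_insert, Finset.sum_insert ha]
    have hd : Disjoint (f a) (⋃ b ∈ s, f b) := by
      rw [Set.disjoint_iUnion_right]
      intro b
      rw [Set.disjoint_iUnion_right]
      intro hbs
      exact hdisj a (Finset.mem_insert_self a s) b (Finset.mem_insert_of_mem hbs)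
        (fun hab => ha (hab ▸ hbs))
    rw [h.2.2 _ (hmem a (Finset.mem_insert_self a s)) _
      (sf_biUnion hf s f fun b hbs => hmem b (Finset.mem_insert_of_mem hbs)) hd,
      ih (fun b hbs => hmem b (Finset.mem_insert_of_mem hbs))
        (fun x hx y hy hxy => hdisj x (Finset.mem_insert_of_mem hx) y
          (Finset.mem_insert_of_mem hy) hxy)]

lemma fap_compl {𝒜 : Set (Set Ω)} {P : Set Ω → ℝ} (hf : IsSetField 𝒜)
    (h : IsFAP 𝒜 P) {A : Set Ω} (hA : A ∈ 𝒜) : P Aᶜ = 1 - P A := by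
  have := h.2.2 A hA Aᶜ (hf.2.1 _ hA) disjoint_compl_right
  simp only [Set.union_compl_self] at this
  rw [h.2.1] at this
  linarith

section Strategy

variable {Ω : Type*} {ι : Type*} {𝒜 : Set (Set Ω)} {H : ι → Set Ω} {σ : Set Ω → ι → ℝ}

lemma str_nonneg (hσ : IsStrategy 𝒜 H σ) {F : Set Ω} (hF : F ∈ 𝒜) (i : ι) :
    0 ≤ σ F i := by
  obtain ⟨⟨h1, _⟩, _⟩ := hσ i
  exact (h1 F hF).1

lemma str_le_one (hσ : IsStrategy 𝒜 H σ) {F : Set Ω} (hF : F ∈ 𝒜) (i : ι) :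
    σ F i ≤ 1 := by
  obtain ⟨⟨h1, _⟩, _⟩ := hσ i
  exact (h1 F hF).2

lemma str_mono (hf : IsSetField 𝒜) (hσ : IsStrategy 𝒜 H σ) {F G : Set Ω}
    (hF : F ∈ 𝒜) (hG : G ∈ 𝒜) (hFG : F ⊆ G) (i : ι) : σ F i ≤ σ G i :=
  fap_mono hf (hσ i).1 hF hG hFG

lemma str_zero (hf : IsSetField 𝒜) (hσ : IsStrategy 𝒜 H σ) {F : Set Ω}
    (hF : F ∈ 𝒜) {i : ι} (hi : H i ⊆ Fᶜ) : σ F i = 0 := by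
  have h1 : σ Fᶜ i = 1 := (hσ i).2 Fᶜ (hf.2.1 _ hF) hi
  have h2 := fap_compl hf (hσ i).1 hF
  rw [h1] at h2
  linarith

lemma str_inter_eq (hf : IsSetField 𝒜) (hσ : IsStrategy 𝒜 H σ) {F B : Set Ω}
    (hF : F ∈ 𝒜) (hB : B ∈ 𝒜) {i : ι} (hi : H i ⊆ B) : σ (F ∩ B) i = σ F i := by
  have hsplit : σ (F ∩ B) i + σ (F ∩ Bᶜ) i = σ F i := by
    obtain ⟨⟨_, _, hadd⟩, _⟩ := hσ i
    have := hadd (F ∩ B) (sf_inter hf hF hB) (F ∩ Bᶜ)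
      (sf_inter hf hF (hf.2.1 _ hB))
      (by rw [Set.disjoint_iff]; intro x hx; exact absurd hx.1.2 hx.2.2)
    simp only [← Set.inter_union_distrib_left, Set.union_compl_self, Set.inter_univ] at this
    linarith [this]
  have hz : σ (F ∩ Bᶜ) i = 0 := by
    have hle := str_mono hf hσ (sf_inter hf hF (hf.2.1 _ hB)) (hf.2.1 _ hB)
      Set.inter_subset_right i
    have hBc : σ Bᶜ i = 0 := by
      have h1 : σ B i = 1 := (hσ i).2 B hB hi
      have h2 := fap_compl hf (hσ i).1 hB
      rw [h1] at h2; linarith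
    have := str_nonneg hσ (sf_inter hf hF (hf.2.1 _ hB)) i
    linarith
  linarith

lemma str_inter_zero (hf : IsSetField 𝒜) (hσ : IsStrategy 𝒜 H σ) {F B : Set Ω}
    (hF : F ∈ 𝒜) (hB : B ∈ 𝒜) {i : ι} (hi : H i ⊆ Bᶜ) : σ (F ∩ B) i = 0 := by
  have hle := str_mono hf hσ (sf_inter hf hF hB) hB Set.inter_subset_right i
  have hBz : σ B i = 0 := str_zero hf hσ hB hi
  have := str_nonneg hσ (sf_inter hf hF hB) i
  linarith

end Strategy

section Part

variable {Ω : Type*} {ι : Type*} {H : ι → Set Ω} {𝒜L : Set (Set Ω)}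

lemma part_subset_of_mem (h𝒜L : IsFieldOver H 𝒜L) {A : Set Ω} (hA : A ∈ 𝒜L)
    {i : ι} (hHA : (H i ∩ A).Nonempty) (hH : IsPartition H) : H i ⊆ A := by
  obtain ⟨S, hS⟩ := h𝒜L.2.2 A hA
  obtain ⟨x, hxH, hxA⟩ := hHA
  rw [hS] at hxA
  simp only [Set.mem_iUnion] at hxA
  obtain ⟨j, hjS, hxj⟩ := hxA
  have hij : i = j := by
    by_contra hne
    exact Set.disjoint_iff.mp (hH.2.1 hne) ⟨hxH, hxj⟩
  subst hij
  rw [hS]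
  exact Set.subset_biUnion_of_mem hjS

lemma part_mem_or_compl (hH : IsPartition H) (h𝒜L : IsFieldOver H 𝒜L) {A : Set Ω}
    (hA : A ∈ 𝒜L) (i : ι) : H i ⊆ A ∨ H i ⊆ Aᶜ := by
  by_cases h : (H i ∩ A).Nonempty
  · exact Or.inl (part_subset_of_mem h𝒜L hA h hH)
  · right
    intro x hx
    by_contra hxc
    simp only [Set.mem_compl_iff, not_not] at hxc
    exact h ⟨x, hx, hxc⟩

lemma part_exists_subset (hH : IsPartition H) (h𝒜L : IsFieldOver H 𝒜L) {A : Set Ω}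
    (hA : A ∈ 𝒜L) (hne : A.Nonempty) : ∃ i, H i ⊆ A := by
  obtain ⟨S, hS⟩ := h𝒜L.2.2 A hA
  obtain ⟨x, hx⟩ := hne
  rw [hS] at hx
  simp only [Set.mem_iUnion] at hx
  obtain ⟨j, hjS, _⟩ := hx
  exact ⟨j, hS ▸ Set.subset_biUnion_of_mem hjS⟩

lemma part_nonempty_index [Nonempty Ω] (hH : IsPartition H) : Nonempty ι := by
  obtain ⟨x⟩ := ‹Nonempty Ω›
  have : x ∈ ⋃ i, H i := hH.2.2 ▸ Set.mem_univ x
  simp only [Set.mem_iUnion] at this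
  exact ⟨this.choose⟩

end Part

end Aux10


section Stieltjes

variable {Ω : Type*} {ι : Type*}

/-- `inf {X i | H i ⊆ A}`. -/
noncomputable def infOn (H : ι → Set Ω) (X : ι → ℝ) (A : Set Ω) : ℝ :=
  sInf {y | ∃ i, H i ⊆ A ∧ y = X i}

/-- `sup {X i | H i ⊆ A}`. -/
noncomputable def supOn (H : ι → Set Ω) (X : ι → ℝ) (A : Set Ω) : ℝ :=
  sSup {y | ∃ i, H i ⊆ A ∧ y = X i}

/-- Lower sum of `X` over the finite partition `T`. -/
noncomputable def lowSum (H : ι → Set Ω) (X : ι → ℝ) (μ : Set Ω → ℝ)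
    (T : Finset (Set Ω)) : ℝ := ∑ A ∈ T, infOn H X A * μ A

/-- Upper sum of `X` over the finite partition `T`. -/
noncomputable def upSum (H : ι → Set Ω) (X : ι → ℝ) (μ : Set Ω → ℝ)
    (T : Finset (Set Ω)) : ℝ := ∑ A ∈ T, supOn H X A * μ A

lemma lowerSInt_eq (H : ι → Set Ω) (𝒜L : Set (Set Ω)) (X : ι → ℝ) (μ : Set Ω → ℝ) :
    lowerSInt H 𝒜L X μ = sSup {x | ∃ T : Finset (Set Ω), IsFinPart 𝒜L T ∧
      x = lowSum H X μ T} := rfl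

lemma upperSInt_eq (H : ι → Set Ω) (𝒜L : Set (Set Ω)) (X : ι → ℝ) (μ : Set Ω → ℝ) :
    upperSInt H 𝒜L X μ = sInf {x | ∃ T : Finset (Set Ω), IsFinPart 𝒜L T ∧
      x = upSum H X μ T} := rfl

variable {H : ι → Set Ω} {𝒜L : Set (Set Ω)} {π : Set Ω → ℝ} {X Y : ι → ℝ} {M : ℝ}

lemma finPart_univ [Nonempty Ω] (h𝒜L : IsFieldOver H 𝒜L) :
    IsFinPart 𝒜L ({Set.univ} : Finset (Set Ω)) := by
  refine ⟨?_, ?_, ?_, ?_⟩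
  · intro A hA
    simp only [Finset.coe_singleton, Set.mem_singleton_iff] at hA
    rw [hA]; exact h𝒜L.1.1
  · intro A hA
    simp only [Finset.mem_singleton] at hA
    rw [hA]; exact Set.univ_nonempty
  · intro A hA B hB hAB
    simp only [Finset.mem_singleton] at hA hB
    exact absurd (hA.trans hB.symm) hAB
  · simp

lemma bddBelow_setOn (hX : ∀ i, |X i| ≤ M) (A : Set Ω) :
    BddBelow {y | ∃ i, H i ⊆ A ∧ y = X i} := by
  refine ⟨-M, fun y hy => ?_⟩
  obtain ⟨i, _, rfl⟩ := hy
  linarith [abs_le.mp (hX i) |>.1]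

lemma bddAbove_setOn (hX : ∀ i, |X i| ≤ M) (A : Set Ω) :
    BddAbove {y | ∃ i, H i ⊆ A ∧ y = X i} := by
  refine ⟨M, fun y hy => ?_⟩
  obtain ⟨i, _, rfl⟩ := hy
  linarith [abs_le.mp (hX i) |>.2]

lemma infOn_le (hX : ∀ i, |X i| ≤ M) {A : Set Ω} {i : ι} (hi : H i ⊆ A) :
    infOn H X A ≤ X i :=
  csInf_le (bddBelow_setOn hX A) ⟨i, hi, rfl⟩

lemma le_supOn (hX : ∀ i, |X i| ≤ M) {A : Set Ω} {i : ι} (hi : H i ⊆ A) :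
    X i ≤ supOn H X A :=
  le_csSup (bddAbove_setOn hX A) ⟨i, hi, rfl⟩

lemma le_infOn {c : ℝ} {A : Set Ω} (hc : ∀ i, H i ⊆ A → c ≤ X i)
    (hne : ∃ i, H i ⊆ A) : c ≤ infOn H X A := by
  obtain ⟨i, hi⟩ := hne
  exact le_csInf ⟨X i, i, hi, rfl⟩ (fun y hy => by obtain ⟨j, hj, rfl⟩ := hy; exact hc j hj)

lemma supOn_le {c : ℝ} {A : Set Ω} (hc : ∀ i, H i ⊆ A → X i ≤ c)
    (hne : ∃ i, H i ⊆ A) : supOn H X A ≤ c := by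
  obtain ⟨i, hi⟩ := hne
  exact csSup_le ⟨X i, i, hi, rfl⟩ (fun y hy => by obtain ⟨j, hj, rfl⟩ := hy; exact hc j hj)

lemma pi_split (h𝒜L : IsFieldOver H 𝒜L) (hπ : IsFAP 𝒜L π) {A : Set Ω} (hA : A ∈ 𝒜L)
    {T : Finset (Set Ω)} (hT : IsFinPart 𝒜L T) : π A = ∑ B ∈ T, π (A ∩ B) := by
  have hU : (⋃ B ∈ T, A ∩ B) = A := by
    ext x
    simp only [Set.mem_iUnion, Set.mem_inter_iff, exists_prop]
    constructor
    · rintro ⟨B, _, _, hxB⟩; tauto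
    · intro hx
      have : x ∈ ⋃₀ (↑T : Set (Set Ω)) := hT.2.2.2 ▸ Set.mem_univ x
      obtain ⟨B, hBT, hxB⟩ := this
      exact ⟨B, hBT, hx, hxB⟩
  calc π A = π (⋃ B ∈ T, A ∩ B) := by rw [hU]
    _ = ∑ B ∈ T, π (A ∩ B) :=
      fap_sum h𝒜L.1 hπ T (fun B => A ∩ B)
        (fun B hB => sf_inter h𝒜L.1 hA (hT.1 hB))
        (fun B hB C hC hBC => ((hT.2.2.1 B hB C hC hBC).inter_left' A).inter_right' A)

lemma pi_nonneg (hπ : IsFAP 𝒜L π) {A : Set Ω} (hA : A ∈ 𝒜L) : 0 ≤ π A := (hπ.1 A hA).1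

lemma lowSum_le_upSum [Nonempty Ω] (hH : IsPartition H) (h𝒜L : IsFieldOver H 𝒜L)
    (hπ : IsFAP 𝒜L π) (hX : ∀ i, |X i| ≤ M) {T T' : Finset (Set Ω)}
    (hT : IsFinPart 𝒜L T) (hT' : IsFinPart 𝒜L T') :
    lowSum H X π T ≤ upSum H X π T' := by
  classical
  have key : ∀ A ∈ T, ∀ B ∈ T', infOn H X A * π (A ∩ B) ≤ supOn H X B * π (A ∩ B) := by
    intro A hA B hB
    by_cases hne : (A ∩ B).Nonempty
    · have hmem : A ∩ B ∈ 𝒜L := sf_inter h𝒜L.1 (hT.1 hA) (hT'.1 hB)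
      obtain ⟨i, hi⟩ := part_exists_subset hH h𝒜L hmem hne
      have h1 : infOn H X A ≤ X i := infOn_le hX (hi.trans Set.inter_subset_left)
      have h2 : X i ≤ supOn H X B := le_supOn hX (hi.trans Set.inter_subset_right)
      exact mul_le_mul_of_nonneg_right (h1.trans h2) (pi_nonneg hπ hmem)
    · rw [Set.not_nonempty_iff_eq_empty] at hne
      rw [hne, fap_empty h𝒜L.1 hπ, mul_zero, mul_zero]
  calc lowSum H X π T = ∑ A ∈ T, infOn H X A * ∑ B ∈ T', π (A ∩ B) := by
        unfold lowSum
        exact Finset.sum_congr rfl fun A hA => by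
          rw [← pi_split h𝒜L hπ (hT.1 hA) hT']
    _ = ∑ A ∈ T, ∑ B ∈ T', infOn H X A * π (A ∩ B) := by
        exact Finset.sum_congr rfl fun A hA => Finset.mul_sum _ _ _
    _ ≤ ∑ A ∈ T, ∑ B ∈ T', supOn H X B * π (A ∩ B) := by
        exact Finset.sum_le_sum fun A hA => Finset.sum_le_sum fun B hB => key A hA B hB
    _ = ∑ B ∈ T', ∑ A ∈ T, supOn H X B * π (A ∩ B) := Finset.sum_comm
    _ = upSum H X π T' := by
        unfold upSum
        refine Finset.sum_congr rfl fun B hB => ?_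
        rw [← Finset.mul_sum]
        congr 1
        rw [pi_split h𝒜L hπ (hT'.1 hB) hT]
        exact Finset.sum_congr rfl fun A hA => by rw [Set.inter_comm]

lemma lowSet_nonempty [Nonempty Ω] (h𝒜L : IsFieldOver H 𝒜L) :
    {x | ∃ T : Finset (Set Ω), IsFinPart 𝒜L T ∧ x = lowSum H X π T}.Nonempty :=
  ⟨_, {Set.univ}, finPart_univ h𝒜L, rfl⟩

lemma upSet_nonempty [Nonempty Ω] (h𝒜L : IsFieldOver H 𝒜L) :
    {x | ∃ T : Finset (Set Ω), IsFinPart 𝒜L T ∧ x = upSum H X π T}.Nonempty :=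
  ⟨_, {Set.univ}, finPart_univ h𝒜L, rfl⟩

lemma lowSum_le_lowerSInt [Nonempty Ω] (hH : IsPartition H) (h𝒜L : IsFieldOver H 𝒜L)
    (hπ : IsFAP 𝒜L π) (hX : ∀ i, |X i| ≤ M) {T : Finset (Set Ω)}
    (hT : IsFinPart 𝒜L T) : lowSum H X π T ≤ lowerSInt H 𝒜L X π := by
  rw [lowerSInt_eq]
  refine le_csSup ⟨upSum H X π {Set.univ}, fun x hx => ?_⟩ ⟨T, hT, rfl⟩
  obtain ⟨T', hT', rfl⟩ := hx
  exact lowSum_le_upSum hH h𝒜L hπ hX hT' (finPart_univ h𝒜L)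

lemma upperSInt_le_upSum [Nonempty Ω] (hH : IsPartition H) (h𝒜L : IsFieldOver H 𝒜L)
    (hπ : IsFAP 𝒜L π) (hX : ∀ i, |X i| ≤ M) {T : Finset (Set Ω)}
    (hT : IsFinPart 𝒜L T) : upperSInt H 𝒜L X π ≤ upSum H X π T := by
  rw [upperSInt_eq]
  refine csInf_le ⟨lowSum H X π {Set.univ}, fun x hx => ?_⟩ ⟨T, hT, rfl⟩
  obtain ⟨T', hT', rfl⟩ := hx
  exact lowSum_le_upSum hH h𝒜L hπ hX (finPart_univ h𝒜L) hT'

lemma lowerSInt_le_upperSInt [Nonempty Ω] (hH : IsPartition H) (h𝒜L : IsFieldOver H 𝒜L)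
    (hπ : IsFAP 𝒜L π) (hX : ∀ i, |X i| ≤ M) :
    lowerSInt H 𝒜L X π ≤ upperSInt H 𝒜L X π := by
  rw [lowerSInt_eq]
  refine csSup_le (lowSet_nonempty h𝒜L) fun x hx => ?_
  obtain ⟨T, hT, rfl⟩ := hx
  rw [upperSInt_eq]
  refine le_csInf (upSet_nonempty h𝒜L) fun y hy => ?_
  obtain ⟨T', hT', rfl⟩ := hy
  exact lowSum_le_upSum hH h𝒜L hπ hX hT hT'

end Stieltjes


section Stieltjes2

variable {Ω : Type*} {ι : Type*} {H : ι → Set Ω} {𝒜L : Set (Set Ω)} {π : Set Ω → ℝ}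
  {X Y : ι → ℝ} {M M' : ℝ}

/-- Common refinement of two finite partitions. -/
noncomputable def refi (T T' : Finset (Set Ω)) : Finset (Set Ω) :=
  Finset.image (fun p : Set Ω × Set Ω => p.1 ∩ p.2)
    ((T ×ˢ T').filter fun p => (p.1 ∩ p.2).Nonempty)

lemma refi_finPart (h𝒜L : IsFieldOver H 𝒜L) {T T' : Finset (Set Ω)}
    (hT : IsFinPart 𝒜L T) (hT' : IsFinPart 𝒜L T') : IsFinPart 𝒜L (refi T T') := by
  classical
  refine ⟨?_, ?_, ?_, ?_⟩
  · intro C hC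
    simp only [refi, Finset.coe_image, Set.mem_image, Finset.mem_coe,
      Finset.mem_filter, Finset.mem_product] at hC
    obtain ⟨p, ⟨⟨h1, h2⟩, _⟩, rfl⟩ := hC
    exact sf_inter h𝒜L.1 (hT.1 h1) (hT'.1 h2)
  · intro C hC
    simp only [refi, Finset.mem_image, Finset.mem_filter, Finset.mem_product] at hC
    obtain ⟨p, ⟨_, hne⟩, rfl⟩ := hC
    exact hne
  · intro C hC D hD hCD
    simp only [refi, Finset.mem_image, Finset.mem_filter, Finset.mem_product] at hC hD
    obtain ⟨p, ⟨⟨hp1, hp2⟩, hpne⟩, rfl⟩ := hC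
    obtain ⟨q, ⟨⟨hq1, hq2⟩, hqne⟩, rfl⟩ := hD
    rw [Set.disjoint_iff]
    rintro x ⟨⟨hxp1, hxp2⟩, hxq1, hxq2⟩
    by_cases h1 : p.1 = q.1
    · have h2 : p.2 ≠ q.2 := fun h => hCD (by rw [h1, h])
      exact Set.disjoint_iff.mp (hT'.2.2.1 p.2 hp2 q.2 hq2 h2) ⟨hxp2, hxq2⟩
    · exact Set.disjoint_iff.mp (hT.2.2.1 p.1 hp1 q.1 hq1 h1) ⟨hxp1, hxq1⟩
  · ext x
    simp only [Set.mem_sUnion, Finset.mem_coe, Set.mem_univ, iff_true]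
    have hx1 : x ∈ ⋃₀ (↑T : Set (Set Ω)) := hT.2.2.2 ▸ Set.mem_univ x
    have hx2 : x ∈ ⋃₀ (↑T' : Set (Set Ω)) := hT'.2.2.2 ▸ Set.mem_univ x
    obtain ⟨A, hAT, hxA⟩ := hx1
    obtain ⟨B, hBT, hxB⟩ := hx2
    refine ⟨A ∩ B, ?_, hxA, hxB⟩
    simp only [refi, Finset.mem_image, Finset.mem_filter, Finset.mem_product]
    exact ⟨(A, B), ⟨⟨hAT, hBT⟩, ⟨x, hxA, hxB⟩⟩, rfl⟩

lemma refi_inj {T T' : Finset (Set Ω)} (hT : IsFinPart 𝒜L T) (hT' : IsFinPart 𝒜L T') :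
    ∀ p ∈ (T ×ˢ T').filter (fun p : Set Ω × Set Ω => (p.1 ∩ p.2).Nonempty),
    ∀ q ∈ (T ×ˢ T').filter (fun p : Set Ω × Set Ω => (p.1 ∩ p.2).Nonempty),
      p.1 ∩ p.2 = q.1 ∩ q.2 → p = q := by
  intro p hp q hq heq
  simp only [Finset.mem_filter, Finset.mem_product] at hp hq
  obtain ⟨x, hx1, hx2⟩ := hp.2
  have hxq : x ∈ q.1 ∩ q.2 := heq ▸ ⟨hx1, hx2⟩
  have h1 : p.1 = q.1 := by
    by_contra hne
    exact Set.disjoint_iff.mp (hT.2.2.1 p.1 hp.1.1 q.1 hq.1.1 hne) ⟨hx1, hxq.1⟩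
  have h2 : p.2 = q.2 := by
    by_contra hne
    exact Set.disjoint_iff.mp (hT'.2.2.1 p.2 hp.1.2 q.2 hq.1.2 hne) ⟨hx2, hxq.2⟩
  exact Prod.ext h1 h2

lemma upSum_refi_eq [Nonempty Ω] (hH : IsPartition H) (h𝒜L : IsFieldOver H 𝒜L)
    (hπ : IsFAP 𝒜L π) {T T' : Finset (Set Ω)}
    (hT : IsFinPart 𝒜L T) (hT' : IsFinPart 𝒜L T') :
    upSum H X π (refi T T') =
      ∑ p ∈ (T ×ˢ T').filter (fun p : Set Ω × Set Ω => (p.1 ∩ p.2).Nonempty),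
        supOn H X (p.1 ∩ p.2) * π (p.1 ∩ p.2) := by
  classical
  unfold upSum refi
  rw [Finset.sum_image (refi_inj hT hT')]

lemma upSum_refi_le_left [Nonempty Ω] (hH : IsPartition H) (h𝒜L : IsFieldOver H 𝒜L)
    (hπ : IsFAP 𝒜L π) (hX : ∀ i, |X i| ≤ M) {T T' : Finset (Set Ω)}
    (hT : IsFinPart 𝒜L T) (hT' : IsFinPart 𝒜L T') :
    upSum H X π (refi T T') ≤ upSum H X π T := by
  classical
  rw [upSum_refi_eq hH h𝒜L hπ hT hT']
  have hstep : ∑ p ∈ (T ×ˢ T').filter (fun p : Set Ω × Set Ω => (p.1 ∩ p.2).Nonempty),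
      supOn H X (p.1 ∩ p.2) * π (p.1 ∩ p.2)
      ≤ ∑ p ∈ (T ×ˢ T').filter (fun p : Set Ω × Set Ω => (p.1 ∩ p.2).Nonempty),
        supOn H X p.1 * π (p.1 ∩ p.2) := by
    refine Finset.sum_le_sum fun p hp => ?_
    simp only [Finset.mem_filter, Finset.mem_product] at hp
    have hmem : p.1 ∩ p.2 ∈ 𝒜L := sf_inter h𝒜L.1 (hT.1 hp.1.1) (hT'.1 hp.1.2)
    have hexu : ∃ i, H i ⊆ p.1 ∩ p.2 := part_exists_subset hH h𝒜L hmem hp.2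
    have hle : supOn H X (p.1 ∩ p.2) ≤ supOn H X p.1 :=
      supOn_le (fun i hi => le_supOn hX (hi.trans Set.inter_subset_left)) hexu
    exact mul_le_mul_of_nonneg_right hle (pi_nonneg hπ hmem)
  refine hstep.trans ?_
  have : ∑ p ∈ (T ×ˢ T').filter (fun p : Set Ω × Set Ω => (p.1 ∩ p.2).Nonempty),
      supOn H X p.1 * π (p.1 ∩ p.2)
      = ∑ p ∈ T ×ˢ T', if (p.1 ∩ p.2).Nonempty then supOn H X p.1 * π (p.1 ∩ p.2) else 0 :=
    Finset.sum_filter _ _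
  rw [this]
  have h2 : ∑ p ∈ T ×ˢ T', (if (p.1 ∩ p.2).Nonempty then supOn H X p.1 * π (p.1 ∩ p.2) else 0)
      = ∑ p ∈ T ×ˢ T', supOn H X p.1 * π (p.1 ∩ p.2) := by
    refine Finset.sum_congr rfl fun p hp => ?_
    by_cases hne : (p.1 ∩ p.2).Nonempty
    · rw [if_pos hne]
    · rw [if_neg hne, Set.not_nonempty_iff_eq_empty.mp hne, fap_empty h𝒜L.1 hπ, mul_zero]
  rw [h2, Finset.sum_product]
  unfold upSum
  refine le_of_eq (Finset.sum_congr rfl fun A hA => ?_)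
  show ∑ y ∈ T', supOn H X A * π (A ∩ y) = supOn H X A * π A
  rw [← Finset.mul_sum, ← pi_split h𝒜L hπ (hT.1 hA) hT']

lemma upSum_add_le [Nonempty Ω] (hH : IsPartition H) (h𝒜L : IsFieldOver H 𝒜L)
    (hπ : IsFAP 𝒜L π) (hX : ∀ i, |X i| ≤ M) (hY : ∀ i, |Y i| ≤ M')
    {T : Finset (Set Ω)} (hT : IsFinPart 𝒜L T) :
    upSum H (fun i => X i + Y i) π T ≤ upSum H X π T + upSum H Y π T := by
  unfold upSum
  rw [← Finset.sum_add_distrib]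
  refine Finset.sum_le_sum fun A hA => ?_
  have hex : ∃ i, H i ⊆ A := part_exists_subset hH h𝒜L (hT.1 hA) (hT.2.1 A hA)
  have hle : supOn H (fun i => X i + Y i) A ≤ supOn H X A + supOn H Y A :=
    supOn_le (fun i hi => add_le_add (le_supOn hX hi) (le_supOn hY hi)) hex
  rw [← add_mul]
  exact mul_le_mul_of_nonneg_right hle (pi_nonneg hπ (hT.1 hA))

lemma upperSInt_subadd [Nonempty Ω] (hH : IsPartition H) (h𝒜L : IsFieldOver H 𝒜L)
    (hπ : IsFAP 𝒜L π) (hX : ∀ i, |X i| ≤ M) (hY : ∀ i, |Y i| ≤ M') :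
    upperSInt H 𝒜L (fun i => X i + Y i) π ≤ upperSInt H 𝒜L X π + upperSInt H 𝒜L Y π := by
  refine le_of_forall_pos_le_add fun ε hε => ?_
  obtain ⟨x, ⟨T, hT, rfl⟩, hx⟩ := exists_lt_of_csInf_lt (upSet_nonempty h𝒜L (X := X))
    (lt_add_of_pos_right (upperSInt H 𝒜L X π) (half_pos hε))
  obtain ⟨y, ⟨T', hT', rfl⟩, hy⟩ := exists_lt_of_csInf_lt (upSet_nonempty h𝒜L (X := Y))
    (lt_add_of_pos_right (upperSInt H 𝒜L Y π) (half_pos hε))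
  have hXY : ∀ i, |X i + Y i| ≤ M + M' := fun i => (abs_add_le _ _).trans (add_le_add (hX i) (hY i))
  have hR := refi_finPart h𝒜L hT hT'
  have h1 : upperSInt H 𝒜L (fun i => X i + Y i) π ≤ upSum H (fun i => X i + Y i) π (refi T T') :=
    upperSInt_le_upSum hH h𝒜L hπ hXY hR
  have h2 := upSum_add_le hH h𝒜L hπ hX hY hR
  have h3 := upSum_refi_le_left hH h𝒜L hπ hX hT hT' (X := X)
  have h4 : upSum H Y π (refi T T') ≤ upSum H Y π T' := by
    have hsymm : refi T T' = refi T' T := by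
      classical
      unfold refi
      apply Finset.ext
      intro C
      simp only [Finset.mem_image, Finset.mem_filter, Finset.mem_product]
      constructor
      · rintro ⟨p, ⟨⟨h1, h2⟩, hne⟩, rfl⟩
        exact ⟨(p.2, p.1), ⟨⟨h2, h1⟩, by rwa [Set.inter_comm]⟩, Set.inter_comm _ _⟩
      · rintro ⟨p, ⟨⟨h1, h2⟩, hne⟩, rfl⟩
        exact ⟨(p.2, p.1), ⟨⟨h2, h1⟩, by rwa [Set.inter_comm]⟩, Set.inter_comm _ _⟩
    rw [hsymm]
    exact upSum_refi_le_left hH h𝒜L hπ hY hT' hT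
  linarith

lemma upperSInt_smul_le [Nonempty Ω] (hH : IsPartition H) (h𝒜L : IsFieldOver H 𝒜L)
    (hπ : IsFAP 𝒜L π) (hX : ∀ i, |X i| ≤ M) {c : ℝ} (hc : 0 < c) :
    upperSInt H 𝒜L (fun i => c * X i) π ≤ c * upperSInt H 𝒜L X π := by
  have hcX : ∀ i, |c * X i| ≤ c * M := fun i => by
    rw [abs_mul, abs_of_pos hc]
    exact mul_le_mul_of_nonneg_left (hX i) hc.le
  have key : ∀ u ∈ {x | ∃ T : Finset (Set Ω), IsFinPart 𝒜L T ∧ x = upSum H X π T},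
      upperSInt H 𝒜L (fun i => c * X i) π / c ≤ u := by
    rintro u ⟨T, hT, rfl⟩
    rw [div_le_iff₀ hc, mul_comm]
    refine (upperSInt_le_upSum hH h𝒜L hπ hcX hT).trans (le_of_eq ?_)
    unfold upSum
    rw [Finset.mul_sum]
    refine Finset.sum_congr rfl fun A hA => ?_
    have hex : ∃ i, H i ⊆ A := part_exists_subset hH h𝒜L (hT.1 hA) (hT.2.1 A hA)
    have hsup : supOn H (fun i => c * X i) A = c * supOn H X A := by
      refine le_antisymm ?_ ?_
      · exact supOn_le (fun i hi => mul_le_mul_of_nonneg_left (le_supOn hX hi) hc.le) hex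
      · rw [mul_comm, ← le_div_iff₀ hc]
        refine supOn_le (fun i hi => ?_) hex
        rw [le_div_iff₀ hc, mul_comm]
        exact le_supOn hcX hi
    rw [hsup, mul_assoc]
  have h2 : upperSInt H 𝒜L (fun i => c * X i) π / c ≤ upperSInt H 𝒜L X π :=
    le_csInf (upSet_nonempty h𝒜L) key
  rwa [div_le_iff₀ hc, mul_comm] at h2

lemma upperSInt_smul [Nonempty Ω] (hH : IsPartition H) (h𝒜L : IsFieldOver H 𝒜L)
    (hπ : IsFAP 𝒜L π) (hX : ∀ i, |X i| ≤ M) {c : ℝ} (hc : 0 < c) :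
    upperSInt H 𝒜L (fun i => c * X i) π = c * upperSInt H 𝒜L X π := by
  refine le_antisymm (upperSInt_smul_le hH h𝒜L hπ hX hc) ?_
  have hcX : ∀ i, |c * X i| ≤ c * M := fun i => by
    rw [abs_mul, abs_of_pos hc]
    exact mul_le_mul_of_nonneg_left (hX i) hc.le
  have := upperSInt_smul_le hH h𝒜L hπ hcX (c := c⁻¹) (by positivity)
  have heq : (fun i => c⁻¹ * (c * X i)) = X := by
    funext i; field_simp
  rw [heq] at this
  calc c * upperSInt H 𝒜L X π ≤ c * (c⁻¹ * upperSInt H 𝒜L (fun i => c * X i) π) :=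
        mul_le_mul_of_nonneg_left this hc.le
    _ = upperSInt H 𝒜L (fun i => c * X i) π := by field_simp

lemma supOn_neg (A : Set Ω) : supOn H (fun i => -X i) A = - infOn H X A := by
  unfold supOn infOn
  rw [Real.sInf_def, neg_neg]
  congr 1
  ext y
  simp only [Set.mem_neg, Set.mem_setOf_eq]
  constructor
  · rintro ⟨i, hi, hy⟩
    exact ⟨i, hi, by linarith⟩
  · rintro ⟨i, hi, hy⟩
    exact ⟨i, hi, by linarith⟩

lemma upSum_neg (T : Finset (Set Ω)) :
    upSum H (fun i => -X i) π T = - lowSum H X π T := by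
  unfold upSum lowSum
  rw [← Finset.sum_neg_distrib]
  exact Finset.sum_congr rfl fun A hA => by rw [supOn_neg, neg_mul]

lemma upperSInt_neg : upperSInt H 𝒜L (fun i => -X i) π = - lowerSInt H 𝒜L X π := by
  rw [upperSInt_eq, lowerSInt_eq, Real.sInf_def]
  congr 2
  ext y
  simp only [Set.mem_neg, Set.mem_setOf_eq]
  constructor
  · rintro ⟨T, hT, h⟩
    rw [upSum_neg] at h
    exact ⟨T, hT, by linarith⟩
  · rintro ⟨T, hT, h⟩
    exact ⟨T, hT, by rw [upSum_neg]; linarith⟩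

end Stieltjes2


section HB

variable {Ω : Type*} {ι : Type*} {H : ι → Set Ω} {𝒜L : Set (Set Ω)} {π : Set Ω → ℝ}
  {X : ι → ℝ} {M : ℝ}

/-- The submodule of bounded functions `ι → ℝ`. -/
def bddV (ι : Type*) : Submodule ℝ (ι → ℝ) where
  carrier := {X | ∃ M, ∀ i, |X i| ≤ M}
  add_mem' := by
    rintro X Y ⟨M, hM⟩ ⟨M', hM'⟩
    exact ⟨M + M', fun i => (abs_add_le _ _).trans (add_le_add (hM i) (hM' i))⟩
  zero_mem' := ⟨0, by simp⟩
  smul_mem' := by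
    rintro c X ⟨M, hM⟩
    refine ⟨|c| * M, fun i => ?_⟩
    rw [Pi.smul_apply, smul_eq_mul, abs_mul]
    exact mul_le_mul_of_nonneg_left (hM i) (abs_nonneg c)

lemma supOn_const [Nonempty Ω] (hH : IsPartition H) (h𝒜L : IsFieldOver H 𝒜L) {c : ℝ}
    {A : Set Ω} (hA : A ∈ 𝒜L) (hne : A.Nonempty) : supOn H (fun _ => c) A = c := by
  obtain ⟨i, hi⟩ := part_exists_subset hH h𝒜L hA hne
  have : {y | ∃ i, H i ⊆ A ∧ y = c} = {c} := by
    ext y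
    simp only [Set.mem_setOf_eq, Set.mem_singleton_iff]
    exact ⟨fun ⟨_, _, h⟩ => h, fun h => ⟨i, hi, h⟩⟩
  unfold supOn
  rw [this, csSup_singleton]

lemma infOn_const [Nonempty Ω] (hH : IsPartition H) (h𝒜L : IsFieldOver H 𝒜L) {c : ℝ}
    {A : Set Ω} (hA : A ∈ 𝒜L) (hne : A.Nonempty) : infOn H (fun _ => c) A = c := by
  obtain ⟨i, hi⟩ := part_exists_subset hH h𝒜L hA hne
  have : {y | ∃ i, H i ⊆ A ∧ y = c} = {c} := by
    ext y
    simp only [Set.mem_setOf_eq, Set.mem_singleton_iff]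
    exact ⟨fun ⟨_, _, h⟩ => h, fun h => ⟨i, hi, h⟩⟩
  unfold infOn
  rw [this, csInf_singleton]

lemma sum_pi_eq_one (h𝒜L : IsFieldOver H 𝒜L) (hπ : IsFAP 𝒜L π)
    {T : Finset (Set Ω)} (hT : IsFinPart 𝒜L T) : ∑ A ∈ T, π A = 1 := by
  have := pi_split h𝒜L hπ h𝒜L.1.1 hT
  rw [hπ.2.1] at this
  simp only [Set.univ_inter] at this
  exact this.symm

lemma upSum_const [Nonempty Ω] (hH : IsPartition H) (h𝒜L : IsFieldOver H 𝒜L)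
    (hπ : IsFAP 𝒜L π) {c : ℝ} {T : Finset (Set Ω)} (hT : IsFinPart 𝒜L T) :
    upSum H (fun _ => c) π T = c := by
  unfold upSum
  have : ∀ A ∈ T, supOn H (fun _ => c) A * π A = c * π A := fun A hA => by
    rw [supOn_const hH h𝒜L (hT.1 hA) (hT.2.1 A hA)]
  rw [Finset.sum_congr rfl this, ← Finset.mul_sum, sum_pi_eq_one h𝒜L hπ hT, mul_one]

lemma lowSum_const [Nonempty Ω] (hH : IsPartition H) (h𝒜L : IsFieldOver H 𝒜L)
    (hπ : IsFAP 𝒜L π) {c : ℝ} {T : Finset (Set Ω)} (hT : IsFinPart 𝒜L T) :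
    lowSum H (fun _ => c) π T = c := by
  unfold lowSum
  have : ∀ A ∈ T, infOn H (fun _ => c) A * π A = c * π A := fun A hA => by
    rw [infOn_const hH h𝒜L (hT.1 hA) (hT.2.1 A hA)]
  rw [Finset.sum_congr rfl this, ← Finset.mul_sum, sum_pi_eq_one h𝒜L hπ hT, mul_one]

lemma upperSInt_const [Nonempty Ω] (hH : IsPartition H) (h𝒜L : IsFieldOver H 𝒜L)
    (hπ : IsFAP 𝒜L π) {c : ℝ} : upperSInt H 𝒜L (fun _ => c) π = c := by
  rw [upperSInt_eq]
  refine le_antisymm (csInf_le ⟨c, fun x hx => ?_⟩ ⟨{Set.univ}, finPart_univ h𝒜L, ?_⟩)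
    (le_csInf (upSet_nonempty h𝒜L) fun x hx => ?_)
  · obtain ⟨T, hT, rfl⟩ := hx
    rw [upSum_const hH h𝒜L hπ hT]
  · rw [upSum_const hH h𝒜L hπ (finPart_univ h𝒜L)]
  · obtain ⟨T, hT, rfl⟩ := hx
    rw [upSum_const hH h𝒜L hπ hT]

lemma lowerSInt_const [Nonempty Ω] (hH : IsPartition H) (h𝒜L : IsFieldOver H 𝒜L)
    (hπ : IsFAP 𝒜L π) {c : ℝ} : lowerSInt H 𝒜L (fun _ => c) π = c := by
  rw [lowerSInt_eq]
  refine le_antisymm (csSup_le (lowSet_nonempty h𝒜L) fun x hx => ?_)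
    (le_csSup ⟨c, fun x hx => ?_⟩ ⟨{Set.univ}, finPart_univ h𝒜L, ?_⟩)
  · obtain ⟨T, hT, rfl⟩ := hx
    rw [lowSum_const hH h𝒜L hπ hT]
  · obtain ⟨T, hT, rfl⟩ := hx
    rw [lowSum_const hH h𝒜L hπ hT]
  · rw [lowSum_const hH h𝒜L hπ (finPart_univ h𝒜L)]

set_option maxHeartbeats 2000000 in
/-- Hahn–Banach: a linear functional between the lower and upper Stieltjes integrals,
with a prescribed value at one bounded function. -/
lemma exists_lin [Nonempty Ω] (hH : IsPartition H) (h𝒜L : IsFieldOver H 𝒜L)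
    (hπ : IsFAP 𝒜L π) (v₀ : ↥(bddV ι)) {l : ℝ}
    (hl1 : lowerSInt H 𝒜L ↑v₀ π ≤ l) (hl2 : l ≤ upperSInt H 𝒜L ↑v₀ π) :
    ∃ g : ↥(bddV ι) →ₗ[ℝ] ℝ, g v₀ = l ∧ ∀ x : ↥(bddV ι), g x ≤ upperSInt H 𝒜L ↑x π := by
  have hι : Nonempty ι := part_nonempty_index hH
  set N : ↥(bddV ι) → ℝ := fun x => upperSInt H 𝒜L ↑x π with hN
  have N_hom : ∀ c : ℝ, 0 < c → ∀ x : ↥(bddV ι), N (c • x) = c * N x := by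
    intro c hc x
    obtain ⟨M, hM⟩ := x.2
    have : ((c • x : ↥(bddV ι)) : ι → ℝ) = fun i => c * (x : ι → ℝ) i := rfl
    rw [hN]
    simp only [this]
    exact upperSInt_smul hH h𝒜L hπ hM hc
  have N_add : ∀ x y : ↥(bddV ι), N (x + y) ≤ N x + N y := by
    intro x y
    obtain ⟨M, hM⟩ := x.2
    obtain ⟨M', hM'⟩ := y.2
    have : ((x + y : ↥(bddV ι)) : ι → ℝ) = fun i => (x : ι → ℝ) i + (y : ι → ℝ) i := rfl
    rw [hN]
    simp only [this]
    exact upperSInt_subadd hH h𝒜L hπ hM hM'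
  have hdom : ∀ (w : ↥(bddV ι)) (lw : ℝ), lowerSInt H 𝒜L ↑w π ≤ lw →
      lw ≤ upperSInt H 𝒜L ↑w π → ∀ c : ℝ, c * lw ≤ N (c • w) := by
    intro w lw hw1 hw2 c
    obtain ⟨M, hM⟩ := w.2
    rcases lt_trichotomy c 0 with hc | hc | hc
    · have hneg : ((c • w : ↥(bddV ι)) : ι → ℝ) = fun i => -((-c) * (w : ι → ℝ) i) := by
        funext i; simp [neg_mul]
      have hbnd : ∀ i, |(-c) * (w : ι → ℝ) i| ≤ (-c) * M := fun i => by
        rw [abs_mul, abs_of_pos (by linarith)]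
        exact mul_le_mul_of_nonneg_left (hM i) (by linarith)
      rw [hN]
      simp only [hneg]
      rw [upperSInt_neg (X := fun i => (-c) * (w : ι → ℝ) i)]
      have hlow : lowerSInt H 𝒜L (fun i => (-c) * (w : ι → ℝ) i) π
          = (-c) * lowerSInt H 𝒜L ↑w π := by
        have h1 : (fun i => -((-c) * (w : ι → ℝ) i)) = fun i => c * (w : ι → ℝ) i := by
          funext i; ring_nf
        have := upperSInt_neg (X := fun i => (-c) * (w : ι → ℝ) i) (𝒜L := 𝒜L) (π := π) (H := H)
        -- instead compute via smul on lower: lower (a•X) for a>0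
        have h2 : upperSInt H 𝒜L (fun i => (-c) * (-(w : ι → ℝ) i)) π
            = (-c) * upperSInt H 𝒜L (fun i => -(w : ι → ℝ) i) π :=
          upperSInt_smul hH h𝒜L hπ (fun i => by rw [abs_neg]; exact hM i) (by linarith)
        have h3 : (fun i => (-c) * (-(w : ι → ℝ) i)) = fun i => -((-c) * (w : ι → ℝ) i) := by
          funext i; ring_nf
        rw [h3] at h2
        rw [upperSInt_neg (X := fun i => (-c) * (w : ι → ℝ) i),
          upperSInt_neg (X := (w : ι → ℝ))] at h2
        linarith
      rw [hlow]
      have := mul_le_mul_of_nonneg_left hw1 (le_of_lt (neg_pos.mpr hc))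
      nlinarith
    · subst hc
      have h0 : ((0 : ℝ) • w : ↥(bddV ι)) = 0 := by simp
      rw [h0, hN]
      have : ((0 : ↥(bddV ι)) : ι → ℝ) = fun _ => (0 : ℝ) := rfl
      simp only [this]
      rw [upperSInt_const hH h𝒜L hπ]
      simp
    · rw [hN]
      have : ((c • w : ↥(bddV ι)) : ι → ℝ) = fun i => c * (w : ι → ℝ) i := rfl
      simp only [this]
      rw [upperSInt_smul hH h𝒜L hπ hM hc]
      exact mul_le_mul_of_nonneg_left hw2 hc.le
  by_cases hv : v₀ = 0
  · -- then l = 0 and we can use any dominated functional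
    have hz : ((v₀ : ι → ℝ)) = fun _ => (0 : ℝ) := by rw [hv]; rfl
    have hl0 : l = 0 := by
      rw [hz] at hl1 hl2
      rw [lowerSInt_const hH h𝒜L hπ] at hl1
      rw [upperSInt_const hH h𝒜L hπ] at hl2
      linarith
    set one : ↥(bddV ι) := ⟨fun _ => (1 : ℝ), 1, fun i => by norm_num⟩ with hone
    have hone_ne : one ≠ 0 := by
      intro h
      have := congrArg (fun v : ↥(bddV ι) => (v : ι → ℝ) (Classical.arbitrary ι)) h
      simpa [hone] using this
    have hfdom : ∀ x : ↥(LinearPMap.mkSpanSingleton (K := ℝ) (L := ℝ) (σ := RingHom.id ℝ) one (1 : ℝ) hone_ne).domain,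
        (LinearPMap.mkSpanSingleton (K := ℝ) (L := ℝ) (σ := RingHom.id ℝ) one (1 : ℝ) hone_ne) x ≤ N ↑x := by
      rintro ⟨x, hx⟩
      obtain ⟨c, hc⟩ := Submodule.mem_span_singleton.mp hx
      subst hc
      have h1 : (⟨c • one, hx⟩ :
          ↥(LinearPMap.mkSpanSingleton (K := ℝ) (L := ℝ) (σ := RingHom.id ℝ) one (1:ℝ) hone_ne).domain)
          = c • ⟨one, Submodule.mem_span_singleton_self one⟩ := rfl
      rw [h1, LinearPMap.map_smul, LinearPMap.mkSpanSingleton_apply]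
      have hlow1 : lowerSInt H 𝒜L ↑one π ≤ 1 := by
        have h2 : ((one : ι → ℝ)) = fun _ => (1 : ℝ) := rfl
        rw [h2, lowerSInt_const hH h𝒜L hπ]
      have hup1 : (1 : ℝ) ≤ upperSInt H 𝒜L ↑one π := by
        have h2 : ((one : ι → ℝ)) = fun _ => (1 : ℝ) := rfl
        rw [h2, upperSInt_const hH h𝒜L hπ]
      have := hdom one 1 hlow1 hup1 c
      show _ ≤ N (c • _)
      simpa using this
    obtain ⟨g, hg1, hg2⟩ := exists_extension_of_le_sublinear
      (LinearPMap.mkSpanSingleton (K := ℝ) (L := ℝ) (σ := RingHom.id ℝ) one (1 : ℝ) hone_ne) N N_hom N_add hfdom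
    refine ⟨g, ?_, hg2⟩
    rw [hv, hl0, map_zero]
  · have hfdom : ∀ x : ↥(LinearPMap.mkSpanSingleton (K := ℝ) (L := ℝ) (σ := RingHom.id ℝ) v₀ l hv).domain,
        (LinearPMap.mkSpanSingleton (K := ℝ) (L := ℝ) (σ := RingHom.id ℝ) v₀ l hv) x ≤ N ↑x := by
      rintro ⟨x, hx⟩
      obtain ⟨c, hc⟩ := Submodule.mem_span_singleton.mp hx
      subst hc
      have h1 : (⟨c • v₀, hx⟩ :
          ↥(LinearPMap.mkSpanSingleton (K := ℝ) (L := ℝ) (σ := RingHom.id ℝ) v₀ l hv).domain)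
          = c • ⟨v₀, Submodule.mem_span_singleton_self v₀⟩ := rfl
      rw [h1, LinearPMap.map_smul, LinearPMap.mkSpanSingleton_apply]
      have := hdom v₀ l hl1 hl2 c
      show _ ≤ N (c • _)
      simpa using this
    obtain ⟨g, hg1, hg2⟩ := exists_extension_of_le_sublinear
      (LinearPMap.mkSpanSingleton (K := ℝ) (L := ℝ) (σ := RingHom.id ℝ) v₀ l hv) N N_hom N_add hfdom
    refine ⟨g, ?_, hg2⟩
    have := hg1 ⟨v₀, Submodule.mem_span_singleton_self v₀⟩
    rw [this, LinearPMap.mkSpanSingleton_apply]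

end HB


section Nu

variable {Ω : Type*} {ι : Type*} {H : ι → Set Ω} {𝒜L 𝒜 : Set (Set Ω)} {π : Set Ω → ℝ}
  {σ : Set Ω → ι → ℝ}

lemma str_bdd (hσ : IsStrategy 𝒜 H σ) {F : Set Ω} (hF : F ∈ 𝒜) :
    ∀ i, |σ F i| ≤ 1 := fun i =>
  abs_le.mpr ⟨by linarith [str_nonneg hσ hF i], str_le_one hσ hF i⟩

/-- Conglomerability upper bound for the upper Stieltjes integral. -/
lemma cong_up [Nonempty Ω] (hH : IsPartition H) (h𝒜L : IsFieldOver H 𝒜L)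
    (h𝒜f : IsSetField 𝒜) (hsub : 𝒜L ⊆ 𝒜) (hπ : IsFAP 𝒜L π) (hσ : IsStrategy 𝒜 H σ)
    {F B : Set Ω} (hF : F ∈ 𝒜) (hB : B ∈ 𝒜L) (hBne : B.Nonempty) :
    upperSInt H 𝒜L (fun i => σ (F ∩ B) i) π ≤ π B * supOn H (fun i => σ F i) B := by
  by_cases hBc : Bᶜ = (∅ : Set Ω)
  · have hBuniv : B = Set.univ := by
      rw [← Set.compl_empty, ← hBc, compl_compl]
    subst hBuniv
    have hfe : (fun i => σ (F ∩ Set.univ) i) = fun i => σ F i := by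
      funext i; rw [Set.inter_univ]
    rw [hfe, hπ.2.1, one_mul]
    refine (upperSInt_le_upSum hH h𝒜L hπ (str_bdd hσ hF) (finPart_univ h𝒜L)).trans
      (le_of_eq ?_)
    unfold upSum
    rw [Finset.sum_singleton, hπ.2.1, mul_one]
  · have hBcne : (Bᶜ).Nonempty := Set.nonempty_iff_ne_empty.mpr hBc
    have hBc𝒜L : Bᶜ ∈ 𝒜L := h𝒜L.1.2.1 _ hB
    have hBne' : B ≠ Bᶜ := by
      intro h
      obtain ⟨x, hx⟩ := hBne
      exact (h ▸ hx) hx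
    set T : Finset (Set Ω) := {B, Bᶜ} with hT
    have hTpart : IsFinPart 𝒜L T := by
      refine ⟨?_, ?_, ?_, ?_⟩
      · intro A hA
        simp only [hT, Finset.coe_insert, Finset.coe_singleton, Set.mem_insert_iff,
          Set.mem_singleton_iff] at hA
        rcases hA with rfl | rfl
        · exact hB
        · exact hBc𝒜L
      · intro A hA
        simp only [hT, Finset.mem_insert, Finset.mem_singleton] at hA
        rcases hA with rfl | rfl
        · exact hBne
        · exact hBcne
      · intro A hA A' hA' hne
        simp only [hT, Finset.mem_insert, Finset.mem_singleton] at hA hA'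
        rcases hA with rfl | rfl <;> rcases hA' with rfl | rfl
        · exact absurd rfl hne
        · exact disjoint_compl_right
        · exact disjoint_compl_left
        · exact absurd rfl hne
      · simp [hT]
    have h1 : upperSInt H 𝒜L (fun i => σ (F ∩ B) i) π
        ≤ upSum H (fun i => σ (F ∩ B) i) π T :=
      upperSInt_le_upSum hH h𝒜L hπ (str_bdd hσ (sf_inter h𝒜f hF (hsub hB))) hTpart
    refine h1.trans (le_of_eq ?_)
    unfold upSum
    rw [hT, Finset.sum_insert (by simpa using hBne'), Finset.sum_singleton]
    have hs1 : supOn H (fun i => σ (F ∩ B) i) B = supOn H (fun i => σ F i) B := by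
      unfold supOn
      congr 1
      ext y
      simp only [Set.mem_setOf_eq]
      constructor
      · rintro ⟨i, hi, rfl⟩
        exact ⟨i, hi, str_inter_eq h𝒜f hσ hF (hsub hB) hi⟩
      · rintro ⟨i, hi, rfl⟩
        exact ⟨i, hi, (str_inter_eq h𝒜f hσ hF (hsub hB) hi).symm⟩
    have hs2 : supOn H (fun i => σ (F ∩ B) i) Bᶜ = 0 := by
      unfold supOn
      have : {y | ∃ i, H i ⊆ Bᶜ ∧ y = σ (F ∩ B) i} = {0} := by
        ext y
        simp only [Set.mem_setOf_eq, Set.mem_singleton_iff]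
        constructor
        · rintro ⟨i, hi, rfl⟩
          exact str_inter_zero h𝒜f hσ hF (hsub hB) hi
        · intro hy
          obtain ⟨i, hi⟩ := part_exists_subset hH h𝒜L hBc𝒜L hBcne
          exact ⟨i, hi, hy ▸ (str_inter_zero h𝒜f hσ hF (hsub hB) hi).symm⟩
      rw [this, csSup_singleton]
    rw [hs1, hs2, zero_mul, add_zero, mul_comm]

/-- Conglomerability lower bound for the lower Stieltjes integral. -/
lemma cong_low [Nonempty Ω] (hH : IsPartition H) (h𝒜L : IsFieldOver H 𝒜L)
    (h𝒜f : IsSetField 𝒜) (hsub : 𝒜L ⊆ 𝒜) (hπ : IsFAP 𝒜L π) (hσ : IsStrategy 𝒜 H σ)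
    {F B : Set Ω} (hF : F ∈ 𝒜) (hB : B ∈ 𝒜L) (hBne : B.Nonempty) :
    π B * infOn H (fun i => σ F i) B ≤ lowerSInt H 𝒜L (fun i => σ (F ∩ B) i) π := by
  by_cases hBc : Bᶜ = (∅ : Set Ω)
  · have hBuniv : B = Set.univ := by
      rw [← Set.compl_empty, ← hBc, compl_compl]
    subst hBuniv
    have hfe : (fun i => σ (F ∩ Set.univ) i) = fun i => σ F i := by
      funext i; rw [Set.inter_univ]
    rw [hfe, hπ.2.1, one_mul]
    refine le_trans (le_of_eq ?_)
      (lowSum_le_lowerSInt hH h𝒜L hπ (str_bdd hσ hF) (finPart_univ h𝒜L))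
    unfold lowSum
    rw [Finset.sum_singleton, hπ.2.1, mul_one]
  · have hBcne : (Bᶜ).Nonempty := Set.nonempty_iff_ne_empty.mpr hBc
    have hBc𝒜L : Bᶜ ∈ 𝒜L := h𝒜L.1.2.1 _ hB
    have hBne' : B ≠ Bᶜ := by
      intro h
      obtain ⟨x, hx⟩ := hBne
      exact (h ▸ hx) hx
    set T : Finset (Set Ω) := {B, Bᶜ} with hT
    have hTpart : IsFinPart 𝒜L T := by
      refine ⟨?_, ?_, ?_, ?_⟩
      · intro A hA
        simp only [hT, Finset.coe_insert, Finset.coe_singleton, Set.mem_insert_iff,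
          Set.mem_singleton_iff] at hA
        rcases hA with rfl | rfl
        · exact hB
        · exact hBc𝒜L
      · intro A hA
        simp only [hT, Finset.mem_insert, Finset.mem_singleton] at hA
        rcases hA with rfl | rfl
        · exact hBne
        · exact hBcne
      · intro A hA A' hA' hne
        simp only [hT, Finset.mem_insert, Finset.mem_singleton] at hA hA'
        rcases hA with rfl | rfl <;> rcases hA' with rfl | rfl
        · exact absurd rfl hne
        · exact disjoint_compl_right
        · exact disjoint_compl_left
        · exact absurd rfl hne
      · simp [hT]
    have h1 : lowSum H (fun i => σ (F ∩ B) i) π T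
        ≤ lowerSInt H 𝒜L (fun i => σ (F ∩ B) i) π :=
      lowSum_le_lowerSInt hH h𝒜L hπ (str_bdd hσ (sf_inter h𝒜f hF (hsub hB))) hTpart
    refine le_trans (le_of_eq ?_) h1
    unfold lowSum
    rw [hT, Finset.sum_insert (by simpa using hBne'), Finset.sum_singleton]
    have hs1 : infOn H (fun i => σ (F ∩ B) i) B = infOn H (fun i => σ F i) B := by
      unfold infOn
      congr 1
      ext y
      simp only [Set.mem_setOf_eq]
      constructor
      · rintro ⟨i, hi, rfl⟩
        exact ⟨i, hi, str_inter_eq h𝒜f hσ hF (hsub hB) hi⟩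
      · rintro ⟨i, hi, rfl⟩
        exact ⟨i, hi, (str_inter_eq h𝒜f hσ hF (hsub hB) hi).symm⟩
    have hs2 : infOn H (fun i => σ (F ∩ B) i) Bᶜ = 0 := by
      unfold infOn
      have : {y | ∃ i, H i ⊆ Bᶜ ∧ y = σ (F ∩ B) i} = {0} := by
        ext y
        simp only [Set.mem_setOf_eq, Set.mem_singleton_iff]
        constructor
        · rintro ⟨i, hi, rfl⟩
          exact str_inter_zero h𝒜f hσ hF (hsub hB) hi
        · intro hy
          obtain ⟨i, hi⟩ := part_exists_subset hH h𝒜L hBc𝒜L hBcne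
          exact ⟨i, hi, hy ▸ (str_inter_zero h𝒜f hσ hF (hsub hB) hi).symm⟩
      rw [this, csInf_singleton]
    rw [hs1, hs2, zero_mul, add_zero, mul_comm]

/-- Clip a real number to `[0,1]`. -/
noncomputable def clip (t : ℝ) : ℝ := max 0 (min 1 t)

lemma clip_bdd (t : ℝ) : |clip t| ≤ 1 := by
  rw [abs_le]
  constructor
  · unfold clip
    have : (0:ℝ) ≤ max 0 (min 1 t) := le_max_left _ _
    linarith
  · unfold clip
    rw [max_le_iff]
    exact ⟨by norm_num, (min_le_left _ _)⟩

lemma clip_eq {t : ℝ} (h0 : 0 ≤ t) (h1 : t ≤ 1) : clip t = t := by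
  unfold clip
  rw [min_eq_right h1, max_eq_right h0]

set_option maxHeartbeats 1000000 in
/-- The joint finitely additive probability `ν` on `𝒜` obtained from Hahn–Banach, matching
`π` on `𝒜L`, the product rule on each `H i`, conglomerability, and `ν F₀ = l`. -/
lemma exists_nu [Nonempty Ω] (hH : IsPartition H) (h𝒜L : IsFieldOver H 𝒜L)
    (h𝒜f : IsSetField 𝒜) (hsub : 𝒜L ⊆ 𝒜) (hπ : IsFAP 𝒜L π) (hσ : IsStrategy 𝒜 H σ)
    {F₀ : Set Ω} (hF₀ : F₀ ∈ 𝒜) {l : ℝ}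
    (hl1 : lowerSInt H 𝒜L (fun i => σ F₀ i) π ≤ l)
    (hl2 : l ≤ upperSInt H 𝒜L (fun i => σ F₀ i) π) :
    ∃ ν : Set Ω → ℝ, IsFAP 𝒜 ν ∧ (∀ B ∈ 𝒜L, ν B = π B) ∧ ν F₀ = l ∧
      (∀ F ∈ 𝒜, ∀ i, ν (F ∩ H i) = σ F i * ν (H i)) ∧
      (∀ F ∈ 𝒜, ∀ B ∈ 𝒜L, B.Nonempty →
        π B * infOn H (fun i => σ F i) B ≤ ν (F ∩ B) ∧
        ν (F ∩ B) ≤ π B * supOn H (fun i => σ F i) B) := by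
  classical
  have hι : Nonempty ι := part_nonempty_index hH
  obtain ⟨g, hg0, hgle⟩ := exists_lin hH h𝒜L hπ
    (⟨fun i => σ F₀ i, 1, str_bdd hσ hF₀⟩ : ↥(bddV ι)) hl1 hl2
  have hgle' : ∀ (X : ι → ℝ) (hX : X ∈ bddV ι), g ⟨X, hX⟩ ≤ upperSInt H 𝒜L X π :=
    fun X hX => hgle ⟨X, hX⟩
  have hglow' : ∀ (X : ι → ℝ) (hX : X ∈ bddV ι), lowerSInt H 𝒜L X π ≤ g ⟨X, hX⟩ := by
    intro X hX
    have h1 := hgle (-(⟨X, hX⟩ : ↥(bddV ι)))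
    rw [map_neg] at h1
    have h2 : ((-(⟨X, hX⟩ : ↥(bddV ι)) : ↥(bddV ι)) : ι → ℝ) = fun i => -(X i) := rfl
    rw [h2, upperSInt_neg] at h1
    linarith
  have hclipmem : ∀ F : Set Ω, (fun i => clip (σ F i)) ∈ bddV ι :=
    fun F => ⟨1, fun i => clip_bdd _⟩
  set ν : Set Ω → ℝ := fun F => g ⟨fun i => clip (σ F i), hclipmem F⟩ with hν
  have hXc : ∀ {F : Set Ω}, F ∈ 𝒜 → (fun i => clip (σ F i)) = fun i => σ F i := by
    intro F hF
    funext i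
    exact clip_eq (str_nonneg hσ hF i) (str_le_one hσ hF i)
  have νapp : ∀ {F : Set Ω} (hF : F ∈ 𝒜),
      ν F = g ⟨fun i => σ F i, 1, str_bdd hσ hF⟩ := by
    intro F hF
    rw [hν]
    exact congrArg g (Subtype.ext (hXc hF))
  have hbound : ∀ {F : Set Ω}, F ∈ 𝒜 →
      lowerSInt H 𝒜L (fun i => σ F i) π ≤ ν F ∧
      ν F ≤ upperSInt H 𝒜L (fun i => σ F i) π := by
    intro F hF
    rw [νapp hF]
    exact ⟨hglow' _ _, hgle' _ _⟩
  have hlow01 : ∀ {F : Set Ω}, F ∈ 𝒜 → 0 ≤ lowerSInt H 𝒜L (fun i => σ F i) π := by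
    intro F hF
    have h1 := lowSum_le_lowerSInt hH h𝒜L hπ (str_bdd hσ hF) (finPart_univ h𝒜L)
    refine le_trans ?_ h1
    unfold lowSum
    rw [Finset.sum_singleton, hπ.2.1, mul_one]
    exact le_infOn (fun i _ => str_nonneg hσ hF i) ⟨Classical.arbitrary ι, Set.subset_univ _⟩
  have hup01 : ∀ {F : Set Ω}, F ∈ 𝒜 → upperSInt H 𝒜L (fun i => σ F i) π ≤ 1 := by
    intro F hF
    have h1 := upperSInt_le_upSum hH h𝒜L hπ (str_bdd hσ hF) (finPart_univ h𝒜L)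
    refine h1.trans ?_
    unfold upSum
    rw [Finset.sum_singleton, hπ.2.1, mul_one]
    exact supOn_le (fun i _ => str_le_one hσ hF i) ⟨Classical.arbitrary ι, Set.subset_univ _⟩
  have hν01 : ∀ {F : Set Ω}, F ∈ 𝒜 → 0 ≤ ν F ∧ ν F ≤ 1 := by
    intro F hF
    exact ⟨(hlow01 hF).trans (hbound hF).1, (hbound hF).2.trans (hup01 hF)⟩
  have hνuniv : ν Set.univ = 1 := by
    have huniv𝒜 : Set.univ ∈ 𝒜 := h𝒜f.1
    have hcst : (fun i => σ Set.univ i) = fun _ => (1:ℝ) := by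
      funext i
      exact (hσ i).2 Set.univ huniv𝒜 (Set.subset_univ _)
    have h1 := (hbound huniv𝒜).1
    have h2 := (hbound huniv𝒜).2
    rw [hcst, lowerSInt_const hH h𝒜L hπ] at h1
    rw [hcst, upperSInt_const hH h𝒜L hπ] at h2
    linarith
  have hνadd : ∀ A ∈ 𝒜, ∀ B ∈ 𝒜, Disjoint A B → ν (A ∪ B) = ν A + ν B := by
    intro A hA B hB hAB
    have hAB𝒜 : A ∪ B ∈ 𝒜 := h𝒜f.2.2 _ hA _ hB
    have hXadd : (⟨fun i => σ (A ∪ B) i, 1, str_bdd hσ hAB𝒜⟩ : ↥(bddV ι))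
        = ⟨fun i => σ A i, 1, str_bdd hσ hA⟩ + ⟨fun i => σ B i, 1, str_bdd hσ hB⟩ := by
      refine Subtype.ext (funext fun i => ?_)
      exact (hσ i).1.2.2 A hA B hB hAB
    rw [νapp hAB𝒜, νapp hA, νapp hB, hXadd, map_add]
  have hνFAP : IsFAP 𝒜 ν := ⟨fun A hA => hν01 hA, hνuniv, hνadd⟩
  have hνL : ∀ B ∈ 𝒜L, ν B = π B := by
    intro B hB
    by_cases hBne : B.Nonempty
    · have hB𝒜 := hsub hB
      have h1 := (hbound hB𝒜).1
      have h2 := (hbound hB𝒜).2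
      have hcu := cong_up hH h𝒜L h𝒜f hsub hπ hσ h𝒜f.1 hB hBne
      have hcl := cong_low hH h𝒜L h𝒜f hsub hπ hσ h𝒜f.1 hB hBne
      have he : (fun i => σ (Set.univ ∩ B) i) = fun i => σ B i := by
        funext i; rw [Set.univ_inter]
      rw [he] at hcu hcl
      have hcst : (fun i => σ Set.univ i) = fun _ => (1:ℝ) := by
        funext i
        exact (hσ i).2 Set.univ h𝒜f.1 (Set.subset_univ _)
      rw [hcst, supOn_const hH h𝒜L hB hBne, mul_one] at hcu
      rw [hcst, infOn_const hH h𝒜L hB hBne, mul_one] at hcl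
      linarith
    · rw [Set.not_nonempty_iff_eq_empty] at hBne
      subst hBne
      have hcst : (fun i => σ (∅ : Set Ω) i) = fun _ => (0:ℝ) := by
        funext i
        exact str_zero h𝒜f hσ (sf_empty h𝒜f) (by simp)
      have h1 := (hbound (sf_empty h𝒜f)).1
      have h2 := (hbound (sf_empty h𝒜f)).2
      rw [hcst, lowerSInt_const hH h𝒜L hπ] at h1
      rw [hcst, upperSInt_const hH h𝒜L hπ] at h2
      rw [fap_empty h𝒜L.1 hπ]
      linarith
  have hνF₀ : ν F₀ = l := by
    rw [νapp hF₀]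
    exact hg0
  have hνprod : ∀ F ∈ 𝒜, ∀ i, ν (F ∩ H i) = σ F i * ν (H i) := by
    intro F hF i
    have hHi𝒜 : H i ∈ 𝒜 := hsub (h𝒜L.2.1 i)
    have hFHi : F ∩ H i ∈ 𝒜 := sf_inter h𝒜f hF hHi𝒜
    have hsm : (⟨fun j => σ (F ∩ H i) j, 1, str_bdd hσ hFHi⟩ : ↥(bddV ι))
        = σ F i • ⟨fun j => σ (H i) j, 1, str_bdd hσ hHi𝒜⟩ := by
      refine Subtype.ext (funext fun j => ?_)
      show σ (F ∩ H i) j = σ F i * σ (H i) j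
      by_cases hij : j = i
      · subst hij
        rw [(hσ j).2 (H j) hHi𝒜 subset_rfl, mul_one]
        exact str_inter_eq h𝒜f hσ hF hHi𝒜 subset_rfl
      · have hdisj : H j ⊆ (H i)ᶜ := by
          have hd : Disjoint (H j) (H i) := hH.2.1 hij
          rw [Set.disjoint_iff] at hd
          intro x hx
          exact fun hxi => hd ⟨hx, hxi⟩
        rw [str_zero h𝒜f hσ hHi𝒜 hdisj, mul_zero]
        exact str_inter_zero h𝒜f hσ hF hHi𝒜 hdisj
    rw [νapp hFHi, νapp hHi𝒜, hsm, map_smul, smul_eq_mul]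
  have hνcong : ∀ F ∈ 𝒜, ∀ B ∈ 𝒜L, B.Nonempty →
      π B * infOn H (fun i => σ F i) B ≤ ν (F ∩ B) ∧
      ν (F ∩ B) ≤ π B * supOn H (fun i => σ F i) B := by
    intro F hF B hB hBne
    have hFB : F ∩ B ∈ 𝒜 := sf_inter h𝒜f hF (hsub hB)
    have h1 := (hbound hFB).1
    have h2 := (hbound hFB).2
    have hcu := cong_up hH h𝒜L h𝒜f hsub hπ hσ hF hB hBne
    have hcl := cong_low hH h𝒜L h𝒜f hsub hπ hσ hF hB hBne
    exact ⟨le_trans hcl h1, le_trans h2 hcu⟩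
  exact ⟨ν, hνFAP, hνL, hνF₀, hνprod, hνcong⟩

end Nu


section FiniteField

variable {Ω : Type*}

/-- The cell of a finite family `G` determined by the "positive part" `T`. -/
def cellOf (G T : Finset (Set Ω)) : Set Ω := (⋂ A ∈ T, A) ∩ ⋂ A ∈ G \ T, Aᶜ

/-- The positive part determined by a point. -/
noncomputable def tagOf (G : Finset (Set Ω)) (ω : Ω) : Finset (Set Ω) :=
  G.filter (fun A => ω ∈ A)

/-- The (finite) field generated by a finite family `G`. -/
noncomputable def fld (G : Finset (Set Ω)) : Finset (Set Ω) :=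
  (G.powerset.powerset).image fun S => ⋃ T ∈ S, cellOf G T

lemma mem_cellOf {G T : Finset (Set Ω)} {ω : Ω} :
    ω ∈ cellOf G T ↔ (∀ A ∈ T, ω ∈ A) ∧ ∀ A ∈ G \ T, ω ∉ A := by
  unfold cellOf
  simp only [Set.mem_inter_iff, Set.mem_iInter, Set.mem_compl_iff]

lemma tag_subset (G : Finset (Set Ω)) (ω : Ω) : tagOf G ω ⊆ G := Finset.filter_subset _ _

lemma mem_cell_tag (G : Finset (Set Ω)) (ω : Ω) : ω ∈ cellOf G (tagOf G ω) := by
  rw [mem_cellOf]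
  constructor
  · intro A hA
    exact (Finset.mem_filter.mp hA).2
  · intro A hA
    rw [Finset.mem_sdiff] at hA
    intro hωA
    exact hA.2 (Finset.mem_filter.mpr ⟨hA.1, hωA⟩)

lemma cell_eq_tag {G T : Finset (Set Ω)} {ω : Ω} (hT : T ⊆ G) (hω : ω ∈ cellOf G T) :
    T = tagOf G ω := by
  rw [mem_cellOf] at hω
  ext A
  simp only [tagOf, Finset.mem_filter]
  constructor
  · intro hA
    exact ⟨hT hA, hω.1 A hA⟩
  · rintro ⟨hAG, hωA⟩
    by_contra hAT
    exact hω.2 A (Finset.mem_sdiff.mpr ⟨hAG, hAT⟩) hωA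

lemma mem_fld_iff {G : Finset (Set Ω)} {B : Set Ω} :
    B ∈ fld G ↔ ∃ S : Finset (Finset (Set Ω)), (∀ T ∈ S, T ⊆ G) ∧
      B = ⋃ T ∈ S, cellOf G T := by
  unfold fld
  rw [Finset.mem_image]
  constructor
  · rintro ⟨S, hS, rfl⟩
    rw [Finset.mem_powerset] at hS
    exact ⟨S, fun T hT => Finset.mem_powerset.mp (hS hT), rfl⟩
  · rintro ⟨S, hS, rfl⟩
    exact ⟨S, Finset.mem_powerset.mpr fun T hT => Finset.mem_powerset.mpr (hS T hT), rfl⟩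

lemma univ_mem_fld (G : Finset (Set Ω)) : Set.univ ∈ fld G := by
  rw [mem_fld_iff]
  refine ⟨G.powerset, fun T hT => Finset.mem_powerset.mp hT, ?_⟩
  ext x
  simp only [Set.mem_univ, true_iff, Set.mem_iUnion, exists_prop]
  exact ⟨tagOf G x, Finset.mem_powerset.mpr (tag_subset G x), mem_cell_tag G x⟩

lemma fld_compl {G : Finset (Set Ω)} {B : Set Ω} (hB : B ∈ fld G) : Bᶜ ∈ fld G := by
  classical
  rw [mem_fld_iff] at hB ⊢
  obtain ⟨S, hS, rfl⟩ := hB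
  refine ⟨G.powerset \ S, fun T hT => Finset.mem_powerset.mp (Finset.mem_sdiff.mp hT).1, ?_⟩
  ext x
  simp only [Set.mem_compl_iff, Set.mem_iUnion, exists_prop, not_exists, not_and]
  constructor
  · intro hx
    refine ⟨tagOf G x, ?_, mem_cell_tag G x⟩
    rw [Finset.mem_sdiff, Finset.mem_powerset]
    refine ⟨tag_subset G x, fun hmem => ?_⟩
    exact hx _ hmem (mem_cell_tag G x)
  · rintro ⟨T, hT, hxT⟩ T' hT' hxT'
    rw [Finset.mem_sdiff] at hT
    have h1 : T = tagOf G x := cell_eq_tag (Finset.mem_powerset.mp hT.1) hxT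
    have h2 : T' = tagOf G x := cell_eq_tag (hS T' hT') hxT'
    exact hT.2 (h1 ▸ h2 ▸ hT')

lemma fld_inter {G : Finset (Set Ω)} {B B' : Set Ω} (hB : B ∈ fld G)
    (hB' : B' ∈ fld G) : B ∩ B' ∈ fld G := by
  classical
  rw [mem_fld_iff] at hB hB' ⊢
  obtain ⟨S, hS, rfl⟩ := hB
  obtain ⟨S', hS', rfl⟩ := hB'
  refine ⟨S ∩ S', fun T hT => hS T (Finset.mem_inter.mp hT).1, ?_⟩
  ext x
  simp only [Set.mem_inter_iff, Set.mem_iUnion, exists_prop]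
  constructor
  · rintro ⟨⟨T, hT, hxT⟩, T', hT', hxT'⟩
    have h1 : T = tagOf G x := cell_eq_tag (hS T hT) hxT
    have h2 : T' = tagOf G x := cell_eq_tag (hS' T' hT') hxT'
    exact ⟨T, Finset.mem_inter.mpr ⟨hT, by rw [h1.trans h2.symm]; exact hT'⟩, hxT⟩
  · rintro ⟨T, hT, hxT⟩
    rw [Finset.mem_inter] at hT
    exact ⟨⟨T, hT.1, hxT⟩, T, hT.2, hxT⟩

lemma fld_union {G : Finset (Set Ω)} {B B' : Set Ω} (hB : B ∈ fld G)
    (hB' : B' ∈ fld G) : B ∪ B' ∈ fld G := by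
  classical
  rw [mem_fld_iff] at hB hB' ⊢
  obtain ⟨S, hS, rfl⟩ := hB
  obtain ⟨S', hS', rfl⟩ := hB'
  refine ⟨S ∪ S', fun T hT => ?_, ?_⟩
  · rcases Finset.mem_union.mp hT with h | h
    · exact hS T h
    · exact hS' T h
  · ext x
    simp only [Set.mem_union, Set.mem_iUnion, exists_prop, Finset.mem_union]
    constructor
    · rintro (⟨T, hT, hxT⟩ | ⟨T, hT, hxT⟩)
      · exact ⟨T, Or.inl hT, hxT⟩
      · exact ⟨T, Or.inr hT, hxT⟩
    · rintro ⟨T, hT | hT, hxT⟩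
      · exact Or.inl ⟨T, hT, hxT⟩
      · exact Or.inr ⟨T, hT, hxT⟩

lemma gen_mem_fld {G : Finset (Set Ω)} {A : Set Ω} (hA : A ∈ G) : A ∈ fld G := by
  classical
  rw [mem_fld_iff]
  refine ⟨G.powerset.filter (fun T => A ∈ T), fun T hT =>
    Finset.mem_powerset.mp (Finset.mem_filter.mp hT).1, ?_⟩
  ext x
  simp only [Set.mem_iUnion, exists_prop, Finset.mem_filter, Finset.mem_powerset]
  constructor
  · intro hx
    exact ⟨tagOf G x, ⟨tag_subset G x, Finset.mem_filter.mpr ⟨hA, hx⟩⟩, mem_cell_tag G x⟩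
  · rintro ⟨T, ⟨hTG, hAT⟩, hxT⟩
    have := (mem_cellOf.mp hxT).1 A hAT
    exact this

lemma sf_biInter {𝒜 : Set (Set Ω)} (h : IsSetField 𝒜) {β : Type*} (T : Finset β)
    (f : β → Set Ω) (hf : ∀ b ∈ T, f b ∈ 𝒜) : (⋂ b ∈ T, f b) ∈ 𝒜 := by
  classical
  induction T using Finset.induction_on with
  | empty => simpa using h.1
  | @insert a s ha ih =>
    rw [Finset.set_biInter_insert]
    exact sf_inter h (hf a (Finset.mem_insert_self a s))
      (ih fun b hbs => hf b (Finset.mem_insert_of_mem hbs))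

lemma cell_mem_field {𝒜 : Set (Set Ω)} (h : IsSetField 𝒜) {G : Finset (Set Ω)}
    (hG : ∀ A ∈ G, A ∈ 𝒜) (T : Finset (Set Ω)) (hT : T ⊆ G) : cellOf G T ∈ 𝒜 := by
  unfold cellOf
  refine sf_inter h (sf_biInter h T _ fun A hA => hG A (hT hA))
    (sf_biInter h _ _ fun A hA => h.2.1 _ (hG A (Finset.mem_sdiff.mp hA).1))

lemma fld_sub_field {𝒜 : Set (Set Ω)} (h : IsSetField 𝒜) {G : Finset (Set Ω)}
    (hG : ∀ A ∈ G, A ∈ 𝒜) {B : Set Ω} (hB : B ∈ fld G) : B ∈ 𝒜 := by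
  rw [mem_fld_iff] at hB
  obtain ⟨S, hS, rfl⟩ := hB
  exact sf_biUnion h S _ fun T hT => cell_mem_field h hG T (hS T hT)

lemma cell_mono {G G₂ T₂ : Finset (Set Ω)} (hG : G ⊆ G₂) (hT₂ : T₂ ⊆ G₂) :
    cellOf G₂ T₂ ⊆ cellOf G (T₂ ∩ G) := by
  classical
  intro x hx
  rw [mem_cellOf] at hx ⊢
  constructor
  · intro A hA
    exact hx.1 A (Finset.mem_inter.mp hA).1
  · intro A hA
    rw [Finset.mem_sdiff, Finset.mem_inter] at hA
    refine hx.2 A (Finset.mem_sdiff.mpr ⟨hG hA.1, fun hmem => ?_⟩)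
    exact hA.2 ⟨hmem, hA.1⟩

lemma tag_inter {G G₂ : Finset (Set Ω)} (hG : G ⊆ G₂) (ω : Ω) :
    tagOf G₂ ω ∩ G = tagOf G ω := by
  classical
  ext A
  simp only [Finset.mem_inter, tagOf, Finset.mem_filter]
  constructor
  · rintro ⟨⟨_, h2⟩, h3⟩
    exact ⟨h3, h2⟩
  · rintro ⟨h1, h2⟩
    exact ⟨⟨hG h1, h2⟩, h1⟩

lemma fld_mono {G G₂ : Finset (Set Ω)} (hG : G ⊆ G₂) {B : Set Ω} (hB : B ∈ fld G) :
    B ∈ fld G₂ := by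
  classical
  rw [mem_fld_iff] at hB ⊢
  obtain ⟨S, hS, rfl⟩ := hB
  refine ⟨G₂.powerset.filter (fun T₂ => T₂ ∩ G ∈ S), fun T hT =>
    Finset.mem_powerset.mp (Finset.mem_filter.mp hT).1, ?_⟩
  ext x
  simp only [Set.mem_iUnion, exists_prop, Finset.mem_filter, Finset.mem_powerset]
  constructor
  · rintro ⟨T, hT, hxT⟩
    refine ⟨tagOf G₂ x, ⟨tag_subset G₂ x, ?_⟩, mem_cell_tag G₂ x⟩
    rw [tag_inter hG x, ← cell_eq_tag (hS T hT) hxT]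
    exact hT
  · rintro ⟨T₂, ⟨hT₂G₂, hT₂S⟩, hxT₂⟩
    exact ⟨T₂ ∩ G, hT₂S, cell_mono hG hT₂G₂ hxT₂⟩

lemma part_injective {ι : Type*} {H : ι → Set Ω} (hH : IsPartition H) :
    Function.Injective H := by
  intro i j hij
  by_contra hne
  have hd : Disjoint (H i) (H j) := hH.2.1 hne
  obtain ⟨x, hx⟩ := hH.1 i
  exact Set.disjoint_iff.mp hd ⟨hx, hij ▸ hx⟩

lemma finite_idx {ι : Type*} {H : ι → Set Ω} (hH : IsPartition H)
    (G : Finset (Set Ω)) : {i | H i ∈ fld G}.Finite := by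
  have : {i | H i ∈ fld G} = H ⁻¹' ↑(fld G) := rfl
  rw [this]
  exact Set.Finite.preimage (Set.injOn_of_injective (part_injective hH)) (fld G).finite_toSet

end FiniteField


section Hier

variable {Ω : Type*} {𝒜 : Set (Set Ω)} {ρ0 ρ1 ρ2 : Set Ω → ℝ}

/-- Conditional probability built from a three-layer hierarchy of finitely additive
probabilities. -/
noncomputable def hierQ (ρ0 ρ1 ρ2 : Set Ω → ℝ) (E K : Set Ω) : ℝ :=
  if 0 < ρ0 K then ρ0 (E ∩ K) / ρ0 K
  else if 0 < ρ1 K then ρ1 (E ∩ K) / ρ1 K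
  else if 0 < ρ2 K then ρ2 (E ∩ K) / ρ2 K
  else 0

lemma fap_nonneg {P : Set Ω → ℝ} (h : IsFAP 𝒜 P) {A : Set Ω} (hA : A ∈ 𝒜) :
    0 ≤ P A := (h.1 A hA).1

lemma hierQ_sel (hf : IsSetField 𝒜) (h0 : IsFAP 𝒜 ρ0) (h1 : IsFAP 𝒜 ρ1)
    (h2 : IsFAP 𝒜 ρ2) {K : Set Ω} (hK : K ∈ 𝒜)
    (hch : 0 < ρ0 K ∨ 0 < ρ1 K ∨ 0 < ρ2 K) :
    ∃ ρ : Set Ω → ℝ, IsFAP 𝒜 ρ ∧ 0 < ρ K ∧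
      (∀ E, hierQ ρ0 ρ1 ρ2 E K = ρ (E ∩ K) / ρ K) ∧
      (∀ L, L ∈ 𝒜 → L ⊆ K → 0 < ρ L → ∀ E, hierQ ρ0 ρ1 ρ2 E L = ρ (E ∩ L) / ρ L) := by
  by_cases hc0 : 0 < ρ0 K
  · refine ⟨ρ0, h0, hc0, fun E => ?_, fun L hL hLK hρL E => ?_⟩
    · unfold hierQ; rw [if_pos hc0]
    · unfold hierQ; rw [if_pos hρL]
  · by_cases hc1 : 0 < ρ1 K
    · refine ⟨ρ1, h1, hc1, fun E => ?_, fun L hL hLK hρL E => ?_⟩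
      · unfold hierQ; rw [if_neg hc0, if_pos hc1]
      · have hz0 : ¬ 0 < ρ0 L := by
          have hm := fap_mono hf h0 hL hK hLK
          have h0K : ρ0 K ≤ 0 := not_lt.mp hc0
          have := fap_nonneg h0 hL
          intro hcon
          linarith
        unfold hierQ; rw [if_neg hz0, if_pos hρL]
    · have hc2 : 0 < ρ2 K := by tauto
      refine ⟨ρ2, h2, hc2, fun E => ?_, fun L hL hLK hρL E => ?_⟩
      · unfold hierQ; rw [if_neg hc0, if_neg hc1, if_pos hc2]
      · have hz0 : ¬ 0 < ρ0 L := by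
          have hm := fap_mono hf h0 hL hK hLK
          have h0K : ρ0 K ≤ 0 := not_lt.mp hc0
          have := fap_nonneg h0 hL
          intro hcon
          linarith
        have hz1 : ¬ 0 < ρ1 L := by
          have hm := fap_mono hf h1 hL hK hLK
          have h1K : ρ1 K ≤ 0 := not_lt.mp hc1
          have := fap_nonneg h1 hL
          intro hcon
          linarith
        unfold hierQ; rw [if_neg hz0, if_neg hz1, if_pos hρL]

lemma hierQ_inter (ρ0 ρ1 ρ2 : Set Ω → ℝ) (E K : Set Ω) :
    hierQ ρ0 ρ1 ρ2 (E ∩ K) K = hierQ ρ0 ρ1 ρ2 E K := by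
  unfold hierQ
  simp only [Set.inter_assoc, Set.inter_self]

lemma hierQ_mem_Icc (hf : IsSetField 𝒜) (h0 : IsFAP 𝒜 ρ0) (h1 : IsFAP 𝒜 ρ1)
    (h2 : IsFAP 𝒜 ρ2) {E K : Set Ω} (hE : E ∈ 𝒜) (hK : K ∈ 𝒜) :
    hierQ ρ0 ρ1 ρ2 E K ∈ Set.Icc (0:ℝ) 1 := by
  have hEK : E ∩ K ∈ 𝒜 := sf_inter hf hE hK
  have key : ∀ ρ : Set Ω → ℝ, IsFAP 𝒜 ρ → 0 < ρ K → ρ (E ∩ K) / ρ K ∈ Set.Icc (0:ℝ) 1 := by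
    intro ρ h hρ
    constructor
    · exact div_nonneg (fap_nonneg h hEK) hρ.le
    · rw [div_le_one hρ]
      exact fap_mono hf h hEK hK Set.inter_subset_right
  unfold hierQ
  split_ifs with hc0 hc1 hc2
  · exact key ρ0 h0 hc0
  · exact key ρ1 h1 hc1
  · exact key ρ2 h2 hc2
  · exact ⟨le_refl 0, zero_le_one⟩

/-- Dirac measure as a finitely additive probability. -/
lemma fap_dirac (hf : IsSetField 𝒜) (ω : Ω) :
    IsFAP 𝒜 (fun B => if ω ∈ B then (1:ℝ) else 0) := by
  refine ⟨fun A hA => ?_, by simp, fun A hA B hB hAB => ?_⟩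
  · beta_reduce
    split_ifs <;> norm_num
  · beta_reduce
    by_cases hωA : ω ∈ A
    · have hωB : ω ∉ B := fun h => Set.disjoint_iff.mp hAB ⟨hωA, h⟩
      simp [hωA, hωB, Set.mem_union]
    · by_cases hωB : ω ∈ B
      · simp [hωA, hωB, Set.mem_union]
      · simp [hωA, hωB, Set.mem_union]

/-- Uniform average of finitely many finitely additive probabilities. -/
lemma fap_avg {β : Type*} (T : Finset β) (hT : T.Nonempty) (f : β → Set Ω → ℝ)
    (hfap : ∀ b ∈ T, IsFAP 𝒜 (f b)) :
    IsFAP 𝒜 (fun B => (T.card : ℝ)⁻¹ * ∑ b ∈ T, f b B) := by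
  have hcard : (0:ℝ) < T.card := by
    have := Finset.card_pos.mpr hT
    exact_mod_cast this
  refine ⟨fun A hA => ⟨?_, ?_⟩, ?_, fun A hA B hB hAB => ?_⟩
  all_goals beta_reduce
  · exact mul_nonneg (by positivity)
      (Finset.sum_nonneg fun b hb => ((hfap b hb).1 A hA).1)
  · rw [inv_mul_le_iff₀ hcard, mul_one]
    calc ∑ b ∈ T, f b A ≤ ∑ b ∈ T, 1 :=
          Finset.sum_le_sum fun b hb => ((hfap b hb).1 A hA).2
      _ = T.card := by rw [Finset.sum_const, nsmul_eq_mul, mul_one]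
  · have : ∀ b ∈ T, f b Set.univ = 1 := fun b hb => (hfap b hb).2.1
    rw [Finset.sum_congr rfl this, Finset.sum_const, nsmul_eq_mul, mul_one,
      inv_mul_cancel₀ (ne_of_gt hcard)]
  · have : ∀ b ∈ T, f b (A ∪ B) = f b A + f b B := fun b hb =>
      (hfap b hb).2.2 A hA B hB hAB
    rw [Finset.sum_congr rfl this, Finset.sum_add_distrib, mul_add]

end Hier


section Construct

variable {Ω : Type*} {ι : Type*} {H : ι → Set Ω} {𝒜L 𝒜 : Set (Set Ω)} {π : Set Ω → ℝ}
  {σ : Set Ω → ι → ℝ}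

/-- The unit cube of conditional assessments. -/
def cubeQ (Ω : Type*) : Set (Set Ω → Set Ω → ℝ) :=
  {q | ∀ E K : Set Ω, q E K ∈ Set.Icc (0:ℝ) 1}

/-- Partial full-conditional-probability constraints over the family `𝔉`. -/
def ConAt (ν : Set Ω → ℝ) (H : ι → Set Ω) (σ : Set Ω → ι → ℝ)
    (𝔉 : Set (Set Ω)) (q : Set Ω → Set Ω → ℝ) : Prop :=
  (∀ E ∈ 𝔉, ∀ K ∈ 𝔉, K.Nonempty → q E K = q (E ∩ K) K) ∧
  (∀ K ∈ 𝔉, K.Nonempty → q Set.univ K = 1) ∧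
  (∀ K ∈ 𝔉, K.Nonempty → ∀ A ∈ 𝔉, ∀ B ∈ 𝔉, Disjoint A B →
    q (A ∪ B) K = q A K + q B K) ∧
  (∀ E ∈ 𝔉, ∀ F ∈ 𝔉, ∀ K ∈ 𝔉, K.Nonempty → (E ∩ K).Nonempty →
    q (E ∩ F) K = q E K * q F (E ∩ K)) ∧
  (∀ B ∈ 𝔉, q B Set.univ = ν B) ∧
  (∀ F ∈ 𝔉, ∀ i, H i ∈ 𝔉 → q F (H i) = σ F i)

lemma conAt_mono {ν : Set Ω → ℝ} {𝔉 𝔉' : Set (Set Ω)} {q : Set Ω → Set Ω → ℝ}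
    (hsub : 𝔉 ⊆ 𝔉') (h : ConAt ν H σ 𝔉' q) : ConAt ν H σ 𝔉 q :=
  ⟨fun E hE K hK => h.1 E (hsub hE) K (hsub hK),
   fun K hK => h.2.1 K (hsub hK),
   fun K hK hKne A hA B hB => h.2.2.1 K (hsub hK) hKne A (hsub hA) B (hsub hB),
   fun E hE F hF K hK => h.2.2.2.1 E (hsub hE) F (hsub hF) K (hsub hK),
   fun B hB => h.2.2.2.2.1 B (hsub hB),
   fun F hF i hi => h.2.2.2.2.2 F (hsub hF) i (hsub hi)⟩

set_option maxHeartbeats 1000000 in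
/-- Construction of a partial conditional assessment satisfying the constraints over the
finite field generated by `G`. -/
lemma exists_hier_q [Nonempty Ω] (hH : IsPartition H) (h𝒜L : IsFieldOver H 𝒜L)
    (h𝒜f : IsSetField 𝒜) (hsub : 𝒜L ⊆ 𝒜) (hσ : IsStrategy 𝒜 H σ)
    {ν : Set Ω → ℝ} (hν : IsFAP 𝒜 ν)
    (hνprod : ∀ F ∈ 𝒜, ∀ i, ν (F ∩ H i) = σ F i * ν (H i))
    (G : Finset (Set Ω)) (hG : ∀ A ∈ G, A ∈ 𝒜) :
    ∃ q ∈ cubeQ Ω, ConAt ν H σ {B | B ∈ fld G} q := by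
  classical
  -- the three layers
  have hNfin : {i | H i ∈ fld G ∧ ν (H i) = 0}.Finite :=
    (finite_idx hH G).subset fun i hi => hi.1
  set Nf : Finset ι := hNfin.toFinset with hNf
  have hHi𝒜 : ∀ i, H i ∈ 𝒜 := fun i => hsub (h𝒜L.2.1 i)
  set ω₀ : Ω := Classical.arbitrary Ω with hω₀
  set ρ1 : Set Ω → ℝ := if hNe : Nf.Nonempty
    then fun B => (Nf.card : ℝ)⁻¹ * ∑ i ∈ Nf, σ B i
    else fun B => if ω₀ ∈ B then 1 else 0 with hρ1
  have hρ1fap : IsFAP 𝒜 ρ1 := by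
    rw [hρ1]
    split_ifs with hNe
    · exact fap_avg Nf hNe (fun i B => σ B i) (fun i _ => (hσ i).1)
    · exact fap_dirac h𝒜f ω₀
  set NE : Finset (Finset (Set Ω)) := G.powerset.filter (fun T => (cellOf G T).Nonempty)
    with hNE
  set pt : Finset (Set Ω) → Ω := fun T =>
    if h : (cellOf G T).Nonempty then h.choose else ω₀ with hpt
  have hNEne : NE.Nonempty := by
    refine ⟨tagOf G ω₀, ?_⟩
    rw [hNE, Finset.mem_filter, Finset.mem_powerset]
    exact ⟨tag_subset G ω₀, ⟨ω₀, mem_cell_tag G ω₀⟩⟩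
  set ρ2 : Set Ω → ℝ := fun B => (NE.card : ℝ)⁻¹ * ∑ T ∈ NE, (if pt T ∈ B then (1:ℝ) else 0)
    with hρ2
  have hρ2fap : IsFAP 𝒜 ρ2 :=
    fap_avg NE hNEne (fun T B => if pt T ∈ B then (1:ℝ) else 0)
      (fun T _ => fap_dirac h𝒜f (pt T))
  have hρ2pos : ∀ B ∈ fld G, B.Nonempty → 0 < ρ2 B := by
    intro B hB hBne
    rw [mem_fld_iff] at hB
    obtain ⟨S, hS, rfl⟩ := hB
    obtain ⟨x, hx⟩ := hBne
    rw [Set.mem_iUnion] at hx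
    obtain ⟨T, hT⟩ := hx
    rw [Set.mem_iUnion] at hT
    obtain ⟨hTS, hxT⟩ := hT
    have hTNE : T ∈ NE := by
      rw [hNE, Finset.mem_filter, Finset.mem_powerset]
      exact ⟨hS T hTS, ⟨x, hxT⟩⟩
    have hptT : pt T ∈ cellOf G T := by
      rw [hpt]
      simp only
      rw [dif_pos ⟨x, hxT⟩]
      exact (Exists.choose_spec (⟨x, hxT⟩ : (cellOf G T).Nonempty))
    have hptB : pt T ∈ ⋃ T' ∈ S, cellOf G T' := by
      rw [Set.mem_iUnion]
      exact ⟨T, Set.mem_iUnion.mpr ⟨hTS, hptT⟩⟩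
    rw [hρ2]
    simp only
    have hsumpos : (0:ℝ) < ∑ T' ∈ NE, (if pt T' ∈ ⋃ T'' ∈ S, cellOf G T'' then (1:ℝ) else 0) := by
      have hone : (if pt T ∈ ⋃ T'' ∈ S, cellOf G T'' then (1:ℝ) else 0) = 1 := if_pos hptB
      calc (0:ℝ) < 1 := one_pos
        _ = _ := hone.symm
        _ ≤ _ := Finset.single_le_sum (f := fun T' =>
            (if pt T' ∈ ⋃ T'' ∈ S, cellOf G T'' then (1:ℝ) else 0))
            (fun T' _ => by beta_reduce; split_ifs <;> norm_num) hTNE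
    have hcardpos : (0:ℝ) < (NE.card : ℝ) := by
      exact_mod_cast Finset.card_pos.mpr hNEne
    exact mul_pos (inv_pos.mpr hcardpos) hsumpos
  -- ρ1 on the H i with i ∈ Nf
  have hρ1Hi : ∀ i ∈ Nf, ∀ F ∈ 𝒜, ρ1 (F ∩ H i) = (Nf.card : ℝ)⁻¹ * σ F i := by
    intro i hi F hF
    have hNe : Nf.Nonempty := ⟨i, hi⟩
    rw [hρ1, dif_pos hNe]
    congr 1
    rw [Finset.sum_eq_single i]
    · exact str_inter_eq h𝒜f hσ hF (hHi𝒜 i) subset_rfl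
    · intro j hj hji
      have hdisj : H j ⊆ (H i)ᶜ := by
        have hd : Disjoint (H j) (H i) := hH.2.1 hji
        rw [Set.disjoint_iff] at hd
        intro x hx hxi
        exact hd ⟨hx, hxi⟩
      exact str_inter_zero h𝒜f hσ hF (hHi𝒜 i) hdisj
    · intro h
      exact absurd hi h
  have hρ1Hi' : ∀ i ∈ Nf, ρ1 (H i) = (Nf.card : ℝ)⁻¹ := by
    intro i hi
    have h1 := hρ1Hi i hi Set.univ h𝒜f.1
    rw [Set.univ_inter] at h1
    rw [h1, (hσ i).2 Set.univ h𝒜f.1 (Set.subset_univ _), mul_one]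
  -- the conditional assessment
  set q : Set Ω → Set Ω → ℝ := fun E K =>
    if E ∈ 𝒜 ∧ K ∈ 𝒜 then hierQ ν ρ1 ρ2 E K else 0 with hq
  have hqapp : ∀ {E K : Set Ω}, E ∈ 𝒜 → K ∈ 𝒜 → q E K = hierQ ν ρ1 ρ2 E K := by
    intro E K hE hK
    rw [hq]
    simp only [if_pos (And.intro hE hK)]
  have hfldmem : ∀ {B : Set Ω}, B ∈ fld G → B ∈ 𝒜 := fun hB => fld_sub_field h𝒜f hG hB
  have hcharged : ∀ {K : Set Ω}, K ∈ fld G → K.Nonempty →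
      0 < ν K ∨ 0 < ρ1 K ∨ 0 < ρ2 K := fun {K} hK hKne =>
    Or.inr (Or.inr (hρ2pos K hK hKne))
  refine ⟨q, ?_, ?_, ?_, ?_, ?_, ?_, ?_⟩
  · -- cube
    intro E K
    rw [hq]
    simp only
    split_ifs with h
    · exact hierQ_mem_Icc h𝒜f hν hρ1fap hρ2fap h.1 h.2
    · exact ⟨le_refl 0, zero_le_one⟩
  · -- C1
    intro E hE K hK hKne
    have hE𝒜 := hfldmem hE
    have hK𝒜 := hfldmem hK
    rw [hqapp hE𝒜 hK𝒜, hqapp (sf_inter h𝒜f hE𝒜 hK𝒜) hK𝒜]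
    exact (hierQ_inter ν ρ1 ρ2 E K).symm
  · -- C2a
    intro K hK hKne
    have hK𝒜 := hfldmem hK
    rw [hqapp h𝒜f.1 hK𝒜]
    obtain ⟨ρ, hρfap, hρK, happ, _⟩ :=
      hierQ_sel h𝒜f hν hρ1fap hρ2fap hK𝒜 (hcharged hK hKne)
    rw [happ, Set.univ_inter, div_self (ne_of_gt hρK)]
  · -- C2b
    intro K hK hKne A hA B hB hAB
    have hK𝒜 := hfldmem hK
    have hA𝒜 := hfldmem hA
    have hB𝒜 := hfldmem hB
    rw [hqapp (h𝒜f.2.2 _ hA𝒜 _ hB𝒜) hK𝒜, hqapp hA𝒜 hK𝒜, hqapp hB𝒜 hK𝒜]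
    obtain ⟨ρ, hρfap, hρK, happ, _⟩ :=
      hierQ_sel h𝒜f hν hρ1fap hρ2fap hK𝒜 (hcharged hK hKne)
    rw [happ, happ, happ]
    have hsplit : (A ∪ B) ∩ K = (A ∩ K) ∪ (B ∩ K) := Set.union_inter_distrib_right A B K
    rw [hsplit, hρfap.2.2 _ (sf_inter h𝒜f hA𝒜 hK𝒜) _ (sf_inter h𝒜f hB𝒜 hK𝒜)
      ((hAB.inter_left' K).inter_right' K |>.mono
        (by rw [Set.inter_comm]) (by rw [Set.inter_comm]))]
    rw [add_div]
  · -- C3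
    intro E hE F hF K hK hKne hEKne
    have hE𝒜 := hfldmem hE
    have hF𝒜 := hfldmem hF
    have hK𝒜 := hfldmem hK
    have hEK𝒜 : E ∩ K ∈ 𝒜 := sf_inter h𝒜f hE𝒜 hK𝒜
    have hEKfld : E ∩ K ∈ fld G := fld_inter hE hK
    rw [hqapp (sf_inter h𝒜f hE𝒜 hF𝒜) hK𝒜, hqapp hE𝒜 hK𝒜, hqapp hF𝒜 hEK𝒜]
    obtain ⟨ρ, hρfap, hρK, happ, hlower⟩ :=
      hierQ_sel h𝒜f hν hρ1fap hρ2fap hK𝒜 (hcharged hK hKne)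
    by_cases hρEK : 0 < ρ (E ∩ K)
    · rw [happ, happ, hlower (E ∩ K) hEK𝒜 Set.inter_subset_right hρEK]
      have hs1 : E ∩ F ∩ K = F ∩ (E ∩ K) := by
        rw [Set.inter_comm E F, Set.inter_assoc]
      rw [hs1]
      field_simp
    · have hρEK0 : ρ (E ∩ K) = 0 :=
        le_antisymm (not_lt.mp hρEK) (fap_nonneg hρfap hEK𝒜)
      have hnum : ρ (E ∩ F ∩ K) = 0 := by
        have hle : ρ (E ∩ F ∩ K) ≤ ρ (E ∩ K) := by
          refine fap_mono h𝒜f hρfap (sf_inter h𝒜f (sf_inter h𝒜f hE𝒜 hF𝒜) hK𝒜) hEK𝒜 ?_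
          intro x hx
          exact ⟨hx.1.1, hx.2⟩
        have hge := fap_nonneg hρfap (sf_inter h𝒜f (sf_inter h𝒜f hE𝒜 hF𝒜) hK𝒜)
        linarith [hρEK0 ▸ hle]
      rw [happ, happ, hnum, hρEK0]
      simp
  · -- value constraint
    intro B hB
    have hB𝒜 := hfldmem hB
    rw [hqapp hB𝒜 h𝒜f.1]
    unfold hierQ
    have hνuniv : 0 < ν Set.univ := by rw [hν.2.1]; norm_num
    rw [if_pos hνuniv, Set.inter_univ, hν.2.1, div_one]
  · -- strategy constraint
    intro F hF i hi
    have hF𝒜 := hfldmem hF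
    rw [hqapp hF𝒜 (hHi𝒜 i)]
    unfold hierQ
    by_cases hνHi : 0 < ν (H i)
    · rw [if_pos hνHi, hνprod F hF𝒜 i, mul_div_assoc, div_self (ne_of_gt hνHi), mul_one]
    · have hνHi0 : ν (H i) = 0 := le_antisymm (not_lt.mp hνHi) (fap_nonneg hν (hHi𝒜 i))
      have hiNf : i ∈ Nf := by
        rw [hNf, Set.Finite.mem_toFinset]
        exact ⟨hi, hνHi0⟩
      have hcpos : (0:ℝ) < (Nf.card : ℝ) := by
        exact_mod_cast Finset.card_pos.mpr ⟨i, hiNf⟩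
      have hρ1pos : 0 < ρ1 (H i) := by
        rw [hρ1Hi' i hiNf]
        exact inv_pos.mpr hcpos
      rw [if_neg hνHi, if_pos hρ1pos, hρ1Hi i hiNf F hF𝒜, hρ1Hi' i hiNf]
      rw [mul_comm, mul_div_assoc, div_self (ne_of_gt (inv_pos.mpr hcpos)), mul_one]

end Construct


section Topo

variable {Ω : Type*} {ι : Type*} {H : ι → Set Ω} {𝒜L 𝒜 : Set (Set Ω)} {π : Set Ω → ℝ}
  {σ : Set Ω → ι → ℝ}

lemma cubeQ_eq (Ω : Type*) : cubeQ Ω =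
    Set.univ.pi (fun _ : Set Ω => Set.univ.pi fun _ : Set Ω => Set.Icc (0:ℝ) 1) := by
  ext q
  simp only [cubeQ, Set.mem_setOf_eq, Set.mem_univ_pi]

lemma cubeQ_compact (Ω : Type*) : IsCompact (cubeQ Ω) := by
  rw [cubeQ_eq]
  exact isCompact_univ_pi fun _ => isCompact_univ_pi fun _ => isCompact_Icc

lemma cubeQ_closed (Ω : Type*) : IsClosed (cubeQ Ω) := by
  rw [cubeQ_eq]
  exact isClosed_set_pi fun _ _ => isClosed_set_pi fun _ _ => isClosed_Icc

lemma capp (E K : Set Ω) : Continuous fun q : Set Ω → Set Ω → ℝ => q E K :=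
  (continuous_apply K).comp (continuous_apply (A := fun _ : Set Ω => Set Ω → ℝ) E)

lemma isClosed_conAt (ν : Set Ω → ℝ) (H : ι → Set Ω)
    (σ : Set Ω → ι → ℝ) (𝔉 : Set (Set Ω)) :
    IsClosed {q : Set Ω → Set Ω → ℝ | ConAt ν H σ 𝔉 q} := by
  simp only [ConAt, Set.setOf_and]
  refine IsClosed.inter ?_ (IsClosed.inter ?_ (IsClosed.inter ?_
    (IsClosed.inter ?_ (IsClosed.inter ?_ ?_))))
  · simp only [Set.setOf_forall]
    exact isClosed_iInter fun E => isClosed_iInter fun _ => isClosed_iInter fun K =>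
      isClosed_iInter fun _ => isClosed_iInter fun _ =>
        isClosed_eq (capp E K) (capp (E ∩ K) K)
  · simp only [Set.setOf_forall]
    exact isClosed_iInter fun K => isClosed_iInter fun _ => isClosed_iInter fun _ =>
      isClosed_eq (capp Set.univ K) continuous_const
  · simp only [Set.setOf_forall]
    exact isClosed_iInter fun K => isClosed_iInter fun _ => isClosed_iInter fun _ =>
      isClosed_iInter fun A => isClosed_iInter fun _ => isClosed_iInter fun B =>
        isClosed_iInter fun _ => isClosed_iInter fun _ =>
          isClosed_eq (capp (A ∪ B) K) ((capp A K).add (capp B K))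
  · simp only [Set.setOf_forall]
    exact isClosed_iInter fun E => isClosed_iInter fun _ => isClosed_iInter fun F =>
      isClosed_iInter fun _ => isClosed_iInter fun K => isClosed_iInter fun _ =>
        isClosed_iInter fun _ => isClosed_iInter fun _ =>
          isClosed_eq (capp (E ∩ F) K) ((capp E K).mul (capp F (E ∩ K)))
  · simp only [Set.setOf_forall]
    exact isClosed_iInter fun B => isClosed_iInter fun _ =>
      isClosed_eq (capp B Set.univ) continuous_const
  · simp only [Set.setOf_forall]
    exact isClosed_iInter fun F => isClosed_iInter fun _ => isClosed_iInter fun i =>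
      isClosed_iInter fun _ => isClosed_eq (capp F (H i)) continuous_const

set_option maxHeartbeats 1000000 in
/-- Existence of a full conditional probability on `𝒜` with joint `ν` and strategy `σ`. -/
lemma exists_fcp [Nonempty Ω] (hH : IsPartition H) (h𝒜L : IsFieldOver H 𝒜L)
    (h𝒜f : IsSetField 𝒜) (hsub : 𝒜L ⊆ 𝒜) (hσ : IsStrategy 𝒜 H σ)
    {ν : Set Ω → ℝ} (hν : IsFAP 𝒜 ν)
    (hνprod : ∀ F ∈ 𝒜, ∀ i, ν (F ∩ H i) = σ F i * ν (H i)) :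
    ∃ P : Set Ω → Set Ω → ℝ, IsFCP 𝒜 P ∧ (∀ F ∈ 𝒜, ∀ i, P F (H i) = σ F i) ∧
      ∀ B ∈ 𝒜, P B Set.univ = ν B := by
  classical
  set C : Finset (Set Ω) → Set (Set Ω → Set Ω → ℝ) := fun G =>
    cubeQ Ω ∩ {q | ConAt ν H σ {B | B ∈ fld (G.filter (· ∈ 𝒜))} q} with hC
  have hCmono : ∀ {G G' : Finset (Set Ω)}, G ⊆ G' → C G' ⊆ C G := by
    intro G G' hGG' q hq
    refine ⟨hq.1, conAt_mono ?_ hq.2⟩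
    intro B hB
    exact fld_mono (Finset.filter_subset_filter _ hGG') hB
  have hdir : Directed (fun x1 x2 : Set (Set Ω → Set Ω → ℝ) => x1 ⊇ x2) C := by
    intro G G'
    exact ⟨G ∪ G', hCmono Finset.subset_union_left, hCmono Finset.subset_union_right⟩
  have hne : ∀ G, (C G).Nonempty := by
    intro G
    obtain ⟨q, hq1, hq2⟩ := exists_hier_q hH h𝒜L h𝒜f hsub hσ hν hνprod
      (G.filter (· ∈ 𝒜)) (fun A hA => (Finset.mem_filter.mp hA).2)
    exact ⟨q, hq1, hq2⟩
  have hcomp : ∀ G, IsCompact (C G) :=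
    fun G => (cubeQ_compact Ω).inter_right (isClosed_conAt _ _ _ _)
  have hclosed : ∀ G, IsClosed (C G) :=
    fun G => (cubeQ_closed Ω).inter (isClosed_conAt _ _ _ _)
  obtain ⟨q, hq⟩ := IsCompact.nonempty_iInter_of_directed_nonempty_isCompact_isClosed
    C hdir hne hcomp hclosed
  simp only [Set.mem_iInter] at hq
  have hqG : ∀ G : Finset (Set Ω), q ∈ C G := hq
  have hcube : q ∈ cubeQ Ω := (hqG ∅).1
  -- memberships in generated fields
  have hmemfld : ∀ {A : Set Ω} {G : Finset (Set Ω)}, A ∈ G → A ∈ 𝒜 →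
      A ∈ {B | B ∈ fld (G.filter (· ∈ 𝒜))} := by
    intro A G hAG hA𝒜
    exact gen_mem_fld (Finset.mem_filter.mpr ⟨hAG, hA𝒜⟩)
  refine ⟨q, ⟨?_, ?_, ?_⟩, ?_, ?_⟩
  · -- C1
    intro E hE K hK hKne
    have h := (hqG {E, K}).2.1 E
      (hmemfld (by simp) hE) K (hmemfld (by simp) hK) hKne
    exact h
  · -- C2
    intro K hK hKne
    refine ⟨fun A hA => ⟨(hcube A K).1, (hcube A K).2⟩, ?_, ?_⟩
    · exact (hqG {K}).2.2.1 K (hmemfld (by simp) hK) hKne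
    · intro A hA B hB hAB
      exact (hqG {K, A, B}).2.2.2.1 K (hmemfld (by simp) hK) hKne A
        (hmemfld (by simp) hA) B (hmemfld (by simp) hB) hAB
  · -- C3
    intro E hE F hF K hK hKne hEKne
    exact (hqG {E, F, K}).2.2.2.2.1 E (hmemfld (by simp) hE) F (hmemfld (by simp) hF)
      K (hmemfld (by simp) hK) hKne hEKne
  · -- strategy
    intro F hF i
    exact (hqG {F, H i}).2.2.2.2.2.2 F (hmemfld (by simp) hF) i
      (hmemfld (by simp) (hsub (h𝒜L.2.1 i)))
  · -- joint
    intro B hB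
    exact (hqG {B}).2.2.2.2.2.1 B (hmemfld (by simp) hB)

end Topo


section PscLemmas

variable {Ω : Type*} {ι : Type*} {H : ι → Set Ω} {𝒜L 𝒜 : Set (Set Ω)} {π : Set Ω → ℝ}
  {σ : Set Ω → ι → ℝ}

set_option maxHeartbeats 1000000 in
/-- Any value between lower and upper Stieltjes integral is attained by some strongly
conglomerable joint probability. -/
lemma exists_mu_psc [Nonempty Ω] (hH : IsPartition H) (h𝒜L : IsFieldOver H 𝒜L)
    (h𝒜f : IsSetField 𝒜) (hsub : 𝒜L ⊆ 𝒜) (hπ : IsFAP 𝒜L π) (hσ : IsStrategy 𝒜 H σ)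
    {F₀ : Set Ω} (hF₀ : F₀ ∈ 𝒜) {l : ℝ}
    (hl1 : lowerSInt H 𝒜L (fun i => σ F₀ i) π ≤ l)
    (hl2 : l ≤ upperSInt H 𝒜L (fun i => σ F₀ i) π) :
    ∃ μ ∈ PscSet 𝒜 𝒜L H π σ, μ F₀ = l := by
  obtain ⟨ν, hνFAP, hνL, hνF₀, hνprod, hνcong⟩ :=
    exists_nu hH h𝒜L h𝒜f hsub hπ hσ hF₀ hl1 hl2
  obtain ⟨P, hPfcp, hPσ, hPval⟩ := exists_fcp hH h𝒜L h𝒜f hsub hσ hνFAP hνprod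
  refine ⟨fun F => P F Set.univ, ⟨⟨P, ⟨hPfcp, ⟨?_, hPσ⟩⟩, rfl⟩, ?_⟩, ?_⟩
  · intro B hB
    rw [hPval B (hsub hB)]
    exact hνL B hB
  · intro F hF B hB hBne
    have hFB : F ∩ B ∈ 𝒜 := sf_inter h𝒜f hF (hsub hB)
    have h2 := hνcong F hF B hB hBne
    beta_reduce
    rw [hPval (F ∩ B) hFB]
    exact h2
  · beta_reduce
    rw [hPval F₀ hF₀]
    exact hνF₀

/-- Every strongly conglomerable joint probability lies between the lower and upper
Stieltjes integrals. -/
lemma psc_bounds [Nonempty Ω] (hH : IsPartition H) (h𝒜L : IsFieldOver H 𝒜L)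
    (h𝒜f : IsSetField 𝒜) (hsub : 𝒜L ⊆ 𝒜) (hπ : IsFAP 𝒜L π) (hσ : IsStrategy 𝒜 H σ)
    {μ : Set Ω → ℝ} (hμ : μ ∈ PscSet 𝒜 𝒜L H π σ) {F : Set Ω} (hF : F ∈ 𝒜) :
    lowerSInt H 𝒜L (fun i => σ F i) π ≤ μ F ∧
    μ F ≤ upperSInt H 𝒜L (fun i => σ F i) π := by
  obtain ⟨⟨P, hPF, hμP⟩, hcong⟩ := hμ
  have hμFAP : IsFAP 𝒜 μ := by
    rw [hμP]
    exact hPF.1.2.1 Set.univ h𝒜f.1 Set.univ_nonempty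
  have hsplit : ∀ {T : Finset (Set Ω)}, IsFinPart 𝒜L T → μ F = ∑ A ∈ T, μ (F ∩ A) := by
    intro T hT
    have hU : (⋃ A ∈ T, F ∩ A) = F := by
      ext x
      simp only [Set.mem_iUnion, Set.mem_inter_iff, exists_prop]
      constructor
      · rintro ⟨A, _, h, _⟩; exact h
      · intro hx
        have : x ∈ ⋃₀ (↑T : Set (Set Ω)) := hT.2.2.2 ▸ Set.mem_univ x
        obtain ⟨A, hAT, hxA⟩ := this
        exact ⟨A, hAT, hx, hxA⟩
    calc μ F = μ (⋃ A ∈ T, F ∩ A) := by rw [hU]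
      _ = ∑ A ∈ T, μ (F ∩ A) := fap_sum h𝒜f hμFAP T _
          (fun A hA => sf_inter h𝒜f hF (hsub (hT.1 hA)))
          (fun A hA B hB hAB => ((hT.2.2.1 A hA B hB hAB).inter_left' F).inter_right' F)
  constructor
  · rw [lowerSInt_eq]
    refine csSup_le (lowSet_nonempty h𝒜L) ?_
    rintro x ⟨T, hT, rfl⟩
    rw [hsplit hT]
    unfold lowSum
    refine Finset.sum_le_sum fun A hA => ?_
    have h1 := (hcong F hF A (hT.1 hA) (hT.2.1 A hA)).1
    rw [mul_comm]
    exact h1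
  · rw [upperSInt_eq]
    refine le_csInf (upSet_nonempty h𝒜L) ?_
    rintro x ⟨T, hT, rfl⟩
    rw [hsplit hT]
    unfold upSum
    refine Finset.sum_le_sum fun A hA => ?_
    have h1 := (hcong F hF A (hT.1 hA) (hT.2.1 A hA)).2
    rw [mul_comm]
    exact h1

end PscLemmas


section CompactImage

variable {Ω : Type*} {ι : Type*}

/-- Full constraint set characterizing (restrictions of) members of `𝒫^sc`. -/
def ConFull (𝒜 𝒜L : Set (Set Ω)) (H : ι → Set Ω) (π : Set Ω → ℝ)
    (σ : Set Ω → ι → ℝ) (q : Set Ω → Set Ω → ℝ) : Prop :=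
  (∀ E ∈ 𝒜, ∀ K ∈ 𝒜, K.Nonempty → q E K = q (E ∩ K) K) ∧
  (∀ K ∈ 𝒜, K.Nonempty → q Set.univ K = 1) ∧
  (∀ K ∈ 𝒜, K.Nonempty → ∀ A ∈ 𝒜, ∀ B ∈ 𝒜, Disjoint A B →
    q (A ∪ B) K = q A K + q B K) ∧
  (∀ E ∈ 𝒜, ∀ F ∈ 𝒜, ∀ K ∈ 𝒜, K.Nonempty → (E ∩ K).Nonempty →
    q (E ∩ F) K = q E K * q F (E ∩ K)) ∧
  (∀ B ∈ 𝒜L, q B Set.univ = π B) ∧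
  (∀ F ∈ 𝒜, ∀ i, q F (H i) = σ F i) ∧
  (∀ F ∈ 𝒜, ∀ B ∈ 𝒜L, B.Nonempty →
    π B * sInf {x | ∃ i, H i ⊆ B ∧ x = σ F i} ≤ q (F ∩ B) Set.univ ∧
    q (F ∩ B) Set.univ ≤ π B * sSup {x | ∃ i, H i ⊆ B ∧ x = σ F i})

lemma isClosed_conFull (𝒜 𝒜L : Set (Set Ω)) (H : ι → Set Ω) (π : Set Ω → ℝ)
    (σ : Set Ω → ι → ℝ) :
    IsClosed {q : Set Ω → Set Ω → ℝ | ConFull 𝒜 𝒜L H π σ q} := by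
  simp only [ConFull, Set.setOf_and]
  refine IsClosed.inter ?_ (IsClosed.inter ?_ (IsClosed.inter ?_
    (IsClosed.inter ?_ (IsClosed.inter ?_ (IsClosed.inter ?_ ?_)))))
  · simp only [Set.setOf_forall]
    exact isClosed_iInter fun E => isClosed_iInter fun _ => isClosed_iInter fun K =>
      isClosed_iInter fun _ => isClosed_iInter fun _ =>
        isClosed_eq (capp E K) (capp (E ∩ K) K)
  · simp only [Set.setOf_forall]
    exact isClosed_iInter fun K => isClosed_iInter fun _ => isClosed_iInter fun _ =>
      isClosed_eq (capp Set.univ K) continuous_const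
  · simp only [Set.setOf_forall]
    exact isClosed_iInter fun K => isClosed_iInter fun _ => isClosed_iInter fun _ =>
      isClosed_iInter fun A => isClosed_iInter fun _ => isClosed_iInter fun B =>
        isClosed_iInter fun _ => isClosed_iInter fun _ =>
          isClosed_eq (capp (A ∪ B) K) ((capp A K).add (capp B K))
  · simp only [Set.setOf_forall]
    exact isClosed_iInter fun E => isClosed_iInter fun _ => isClosed_iInter fun F =>
      isClosed_iInter fun _ => isClosed_iInter fun K => isClosed_iInter fun _ =>
        isClosed_iInter fun _ => isClosed_iInter fun _ =>
          isClosed_eq (capp (E ∩ F) K) ((capp E K).mul (capp F (E ∩ K)))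
  · simp only [Set.setOf_forall]
    exact isClosed_iInter fun B => isClosed_iInter fun _ =>
      isClosed_eq (capp B Set.univ) continuous_const
  · simp only [Set.setOf_forall]
    exact isClosed_iInter fun F => isClosed_iInter fun _ => isClosed_iInter fun i =>
      isClosed_eq (capp F (H i)) continuous_const
  · simp only [Set.setOf_forall]
    refine isClosed_iInter fun F => isClosed_iInter fun _ => isClosed_iInter fun B =>
      isClosed_iInter fun _ => isClosed_iInter fun _ => IsClosed.inter ?_ ?_
    · exact isClosed_le continuous_const (capp (F ∩ B) Set.univ)
    · exact isClosed_le (capp (F ∩ B) Set.univ) continuous_const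

variable {H : ι → Set Ω} {𝒜L 𝒜 : Set (Set Ω)} {π : Set Ω → ℝ} {σ : Set Ω → ι → ℝ}

set_option maxHeartbeats 1000000 in
lemma image_psc_eq [Nonempty Ω] (h𝒜f : IsSetField 𝒜) (hsub : 𝒜L ⊆ 𝒜)
    (hH : IsPartition H) (hHmem : ∀ i, H i ∈ 𝒜) :
    restrictDom 𝒜 '' PscSet 𝒜 𝒜L H π σ =
      (fun q (A : {A : Set Ω // A ∈ 𝒜}) => q A.val Set.univ) ''
        (cubeQ Ω ∩ {q : Set Ω → Set Ω → ℝ | ConFull 𝒜 𝒜L H π σ q}) := by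
  classical
  ext f
  constructor
  · rintro ⟨μ, ⟨⟨P, ⟨hPfcp, hPext⟩, hμP⟩, hcong⟩, rfl⟩
    set q : Set Ω → Set Ω → ℝ := fun E K =>
      if E ∈ 𝒜 ∧ K ∈ 𝒜 ∧ K.Nonempty then P E K else 0 with hq
    have hqapp : ∀ {E K : Set Ω}, E ∈ 𝒜 → K ∈ 𝒜 → K.Nonempty → q E K = P E K := by
      intro E K h1 h2 h3
      rw [hq]
      simp only [if_pos (And.intro h1 (And.intro h2 h3))]
    have hbounds : ∀ {E K : Set Ω}, E ∈ 𝒜 → K ∈ 𝒜 → K.Nonempty →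
        0 ≤ P E K ∧ P E K ≤ 1 := by
      intro E K h1 h2 h3
      exact (hPfcp.2.1 K h2 h3).1 E h1
    refine ⟨q, ⟨?_, ?_, ?_, ?_, ?_, ?_, ?_, ?_⟩, ?_⟩
    · -- cube
      intro E K
      rw [hq]
      beta_reduce
      split_ifs with h
      · exact hbounds h.1 h.2.1 h.2.2
      · exact ⟨le_refl 0, zero_le_one⟩
    · -- C1
      intro E hE K hK hKne
      rw [hqapp hE hK hKne, hqapp (sf_inter h𝒜f hE hK) hK hKne]
      exact hPfcp.1 E hE K hK hKne
    · -- C2a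
      intro K hK hKne
      rw [hqapp h𝒜f.1 hK hKne]
      exact (hPfcp.2.1 K hK hKne).2.1
    · -- C2b
      intro K hK hKne A hA B hB hAB
      rw [hqapp (h𝒜f.2.2 _ hA _ hB) hK hKne, hqapp hA hK hKne, hqapp hB hK hKne]
      exact (hPfcp.2.1 K hK hKne).2.2 A hA B hB hAB
    · -- C3
      intro E hE F hF K hK hKne hEKne
      rw [hqapp (sf_inter h𝒜f hE hF) hK hKne, hqapp hE hK hKne,
        hqapp hF (sf_inter h𝒜f hE hK) hEKne]
      exact hPfcp.2.2 E hE F hF K hK hKne hEKne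
    · -- prior
      intro B hB
      rw [hqapp (hsub hB) h𝒜f.1 Set.univ_nonempty]
      exact hPext.1 B hB
    · -- strategy
      intro F hF i
      rw [hqapp hF (hHmem i) (hH.1 i)]
      exact hPext.2 F hF i
    · -- conglomerability
      intro F hF B hB hBne
      have hFB : F ∩ B ∈ 𝒜 := sf_inter h𝒜f hF (hsub hB)
      rw [hqapp hFB h𝒜f.1 Set.univ_nonempty]
      have h2 := hcong F hF B hB hBne
      have hμval : μ (F ∩ B) = P (F ∩ B) Set.univ := by rw [hμP]
      rw [← hμval]
      exact h2
    · -- image value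
      funext A
      beta_reduce
      rw [hqapp A.2 h𝒜f.1 Set.univ_nonempty]
      unfold restrictDom
      rw [hμP]
  · rintro ⟨q, ⟨hcube, hcon⟩, rfl⟩
    refine ⟨fun F => q F Set.univ, ⟨⟨q, ⟨⟨hcon.1, ?_, hcon.2.2.2.1⟩,
      ⟨hcon.2.2.2.2.1, hcon.2.2.2.2.2.1⟩⟩, rfl⟩, ?_⟩, rfl⟩
    · intro K hK hKne
      exact ⟨fun A hA => ⟨(hcube A K).1, (hcube A K).2⟩, hcon.2.1 K hK hKne,
        fun A hA B hB hAB => hcon.2.2.1 K hK hKne A hA B hB hAB⟩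
    · intro F hF B hB hBne
      exact hcon.2.2.2.2.2.2 F hF B hB hBne

end CompactImage

/-- `𝒫^sc` is a nonempty compact subset of `[0,1]^𝒜` and its envelopes
are attained and equal the lower and upper Stieltjes integrals of `σ(F|·)` w.r.t. `π`. -/
theorem statement10 {Ω ι κ : Type*} [Nonempty Ω] (H : ι → Set Ω) (E : κ → Set Ω)
    (𝒜L 𝒜E 𝒜 : Set (Set Ω))
    (hH : IsPartition H) (hE : IsPartition E)
    (h𝒜L : IsFieldOver H 𝒜L) (h𝒜E : IsFieldOver E 𝒜E)
    (h𝒜 : IsJointField H E 𝒜L 𝒜E 𝒜)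
    (π : Set Ω → ℝ) (hπ : IsFAP 𝒜L π)
    (σ : Set Ω → ι → ℝ) (hσ : IsStrategy 𝒜 H σ) :
    (restrictDom 𝒜 '' PscSet 𝒜 𝒜L H π σ).Nonempty ∧
    IsCompact (restrictDom 𝒜 '' PscSet 𝒜 𝒜L H π σ) ∧
    ∀ F ∈ 𝒜,
      IsLeast {x | ∃ μ ∈ PscSet 𝒜 𝒜L H π σ, x = μ F}
        (lowerSInt H 𝒜L (fun i => σ F i) π) ∧
      IsGreatest {x | ∃ μ ∈ PscSet 𝒜 𝒜L H π σ, x = μ F}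
        (upperSInt H 𝒜L (fun i => σ F i) π) := by
  have h𝒜f : IsSetField 𝒜 := h𝒜.1
  have hsub : 𝒜L ⊆ 𝒜 := h𝒜.2.1
  have hHmem : ∀ i, H i ∈ 𝒜 := fun i => hsub (h𝒜L.2.1 i)
  refine ⟨?_, ?_, ?_⟩
  · -- nonempty
    obtain ⟨μ, hμ, _⟩ := exists_mu_psc hH h𝒜L h𝒜f hsub hπ hσ h𝒜f.1
      (le_refl _) (lowerSInt_le_upperSInt hH h𝒜L hπ (str_bdd hσ h𝒜f.1))
    exact ⟨restrictDom 𝒜 μ, μ, hμ, rfl⟩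
  · -- compact
    rw [image_psc_eq h𝒜f hsub hH hHmem]
    exact IsCompact.image ((cubeQ_compact Ω).inter_right (isClosed_conFull 𝒜 𝒜L H π σ))
      (continuous_pi fun A => capp A.val Set.univ)
  · -- envelopes
    intro F hF
    constructor
    · constructor
      · obtain ⟨μ, hμ, hval⟩ := exists_mu_psc hH h𝒜L h𝒜f hsub hπ hσ hF
          (le_refl _) (lowerSInt_le_upperSInt hH h𝒜L hπ (str_bdd hσ hF))
        exact ⟨μ, hμ, hval.symm⟩
      · rintro x ⟨μ, hμ, rfl⟩
        exact (psc_bounds hH h𝒜L h𝒜f hsub hπ hσ hμ hF).1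
    · constructor
      · obtain ⟨μ, hμ, hval⟩ := exists_mu_psc hH h𝒜L h𝒜f hsub hπ hσ hF
          (lowerSInt_le_upperSInt hH h𝒜L hπ (str_bdd hσ hF)) (le_refl _)
        exact ⟨μ, hμ, hval.symm⟩
      · rintro x ⟨μ, hμ, rfl⟩
        exact (psc_bounds hH h𝒜L h𝒜f hsub hπ hσ hμ hF).2
end

section
/- 𝒬^fsc is a nonempty compact subset of [0,1]^{𝒜×𝒜⁰} endowed with the product topology of pointwise convergence. -/
open Set

open scoped Classical

variable {Ω : Type*}

namespace S11

variable {ι : Type*} {𝒜 𝒜L : Set (Set Ω)} {H : ι → Set Ω} {P : Set Ω → ℝ}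

lemma sf_empty_mem (h : IsSetField 𝒜) : (∅ : Set Ω) ∈ 𝒜 := by
  have := h.2.1 _ h.1; simpa using this

lemma sf_inter_mem (h : IsSetField 𝒜) {A B : Set Ω} (hA : A ∈ 𝒜) (hB : B ∈ 𝒜) :
    A ∩ B ∈ 𝒜 := by
  have := h.2.1 _ (h.2.2 _ (h.2.1 _ hA) _ (h.2.1 _ hB))
  simpa [compl_union] using this

lemma fap_empty (hF : IsSetField 𝒜) (h : IsFAP 𝒜 P) : P ∅ = 0 := by
  have := h.2.2 ∅ (sf_empty_mem hF) ∅ (sf_empty_mem hF) (by simp)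
  simp at this; linarith

lemma fap_nonneg (h : IsFAP 𝒜 P) {A : Set Ω} (hA : A ∈ 𝒜) : 0 ≤ P A := (h.1 A hA).1

lemma fap_mono (hF : IsSetField 𝒜) (h : IsFAP 𝒜 P) {A B : Set Ω} (hA : A ∈ 𝒜) (hB : B ∈ 𝒜)
    (hAB : A ⊆ B) : P A ≤ P B := by
  have hBA : B ∩ Aᶜ ∈ 𝒜 := sf_inter_mem hF hB (hF.2.1 _ hA)
  have hu : B = A ∪ (B ∩ Aᶜ) := by
    ext x; constructor
    · intro hx; by_cases hxA : x ∈ A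
      · exact Or.inl hxA
      · exact Or.inr ⟨hx, hxA⟩
    · rintro (hx | hx); exacts [hAB hx, hx.1]
  have hd : Disjoint A (B ∩ Aᶜ) := by
    rw [Set.disjoint_iff]; rintro x ⟨hx1, _, hx2⟩; exact hx2 hx1
  have hadd := h.2.2 A hA _ hBA hd
  rw [← hu] at hadd
  have := fap_nonneg h hBA
  linarith

lemma fap_compl (hF : IsSetField 𝒜) (h : IsFAP 𝒜 P) {A : Set Ω} (hA : A ∈ 𝒜) :
    P Aᶜ = 1 - P A := by
  have := h.2.2 A hA Aᶜ (hF.2.1 _ hA) disjoint_compl_right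
  rw [Set.union_compl_self] at this
  rw [h.2.1] at this; linarith

lemma biUnion_mem (hF : IsSetField 𝒜) {β : Type*} (t : Finset β) (g : β → Set Ω)
    (hg : ∀ b ∈ t, g b ∈ 𝒜) : (⋃ b ∈ t, g b) ∈ 𝒜 := by
  classical
  induction t using Finset.induction_on with
  | empty => simpa using sf_empty_mem hF
  | @insert a u ha ih =>
    rw [Finset.set_biUnion_insert]
    exact hF.2.2 _ (hg a (Finset.mem_insert_self a u)) _
      (ih fun b hb => hg b (Finset.mem_insert_of_mem hb))

lemma fap_biUnion (hF : IsSetField 𝒜) (h : IsFAP 𝒜 P) {β : Type*} (t : Finset β)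
    (g : β → Set Ω) (hg : ∀ b ∈ t, g b ∈ 𝒜)
    (hd : ∀ a ∈ t, ∀ b ∈ t, a ≠ b → Disjoint (g a) (g b)) :
    P (⋃ b ∈ t, g b) = ∑ b ∈ t, P (g b) := by
  classical
  induction t using Finset.induction_on with
  | empty => simpa using fap_empty hF h
  | @insert a u ha ih =>
    rw [Finset.set_biUnion_insert, Finset.sum_insert ha]
    have hrest : (⋃ b ∈ u, g b) ∈ 𝒜 := biUnion_mem hF u g
      (fun b hb => hg b (Finset.mem_insert_of_mem hb))
    have hdisj : Disjoint (g a) (⋃ b ∈ u, g b) := by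
      rw [Set.disjoint_iUnion₂_right]
      intro b hb
      exact hd a (Finset.mem_insert_self a u) b (Finset.mem_insert_of_mem hb)
        (fun hab => ha (hab ▸ hb))
    rw [h.2.2 _ (hg a (Finset.mem_insert_self a u)) _ hrest hdisj,
      ih (fun b hb => hg b (Finset.mem_insert_of_mem hb))
        (fun x hx y hy => hd x (Finset.mem_insert_of_mem hx) y (Finset.mem_insert_of_mem hy))]

end S11
namespace S11

variable {ι : Type*} {𝒜 𝒜L : Set (Set Ω)} {H : ι → Set Ω} {σ : Set Ω → ι → ℝ}

lemma part_subset_or_disjoint (hH : IsPartition H) (h𝒜L : IsFieldOver H 𝒜L)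
    {A : Set Ω} (hA : A ∈ 𝒜L) (i : ι) : H i ⊆ A ∨ Disjoint (H i) A := by
  obtain ⟨S, rfl⟩ := h𝒜L.2.2 A hA
  by_cases h : Disjoint (H i) (⋃ j ∈ S, H j)
  · exact Or.inr h
  · left
    rw [Set.disjoint_iUnion₂_right] at h
    push_neg at h
    obtain ⟨j, hj, hij⟩ := h
    have : i = j := by
      by_contra hne
      exact hij (hH.2.1 hne)
    subst this
    exact Set.subset_biUnion_of_mem hj

lemma exists_H_subset (hH : IsPartition H) (h𝒜L : IsFieldOver H 𝒜L)
    {A : Set Ω} (hA : A ∈ 𝒜L) (hne : A.Nonempty) : ∃ i, H i ⊆ A := by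
  obtain ⟨S, rfl⟩ := h𝒜L.2.2 A hA
  obtain ⟨x, hx⟩ := hne
  simp only [Set.mem_iUnion] at hx
  obtain ⟨i, hi, _⟩ := hx
  exact ⟨i, Set.subset_biUnion_of_mem hi⟩

lemma exists_mem_part (hH : IsPartition H) (x : Ω) : ∃ i, x ∈ H i := by
  have : x ∈ ⋃ i, H i := hH.2.2 ▸ Set.mem_univ x
  simpa using this

lemma part_eq_of_subset (hH : IsPartition H) {i j : ι} (h : H i ⊆ H j) : i = j := by
  by_contra hne
  obtain ⟨x, hx⟩ := hH.1 i
  exact Set.disjoint_iff.mp (hH.2.1 hne) ⟨hx, h hx⟩ |>.elim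

-- strategy lemmas
lemma strat_mem01 (hσ : IsStrategy 𝒜 H σ) {F : Set Ω} (hF : F ∈ 𝒜) (i : ι) :
    0 ≤ σ F i ∧ σ F i ≤ 1 := (hσ i).1.1 F hF

lemma strat_zero_of_disjoint (h𝒜 : IsSetField 𝒜) (hσ : IsStrategy 𝒜 H σ)
    {F : Set Ω} (hF : F ∈ 𝒜) {i : ι} (h : Disjoint (H i) F) : σ F i = 0 := by
  have h1 : σ Fᶜ i = 1 := (hσ i).2 Fᶜ (h𝒜.2.1 _ hF) (Set.subset_compl_iff_disjoint_right.mpr h)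
  have := fap_compl h𝒜 (hσ i).1 hF
  linarith

lemma strat_mono (h𝒜 : IsSetField 𝒜) (hσ : IsStrategy 𝒜 H σ) {A B : Set Ω}
    (hA : A ∈ 𝒜) (hB : B ∈ 𝒜) (hAB : A ⊆ B) (i : ι) : σ A i ≤ σ B i :=
  fap_mono h𝒜 (hσ i).1 hA hB hAB

lemma strat_inter_part (h𝒜 : IsSetField 𝒜) (hσ : IsStrategy 𝒜 H σ)
    {F : Set Ω} (hF : F ∈ 𝒜) {i : ι} (hHi : H i ∈ 𝒜) : σ (F ∩ H i) i = σ F i := by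
  have hsplit : F = (F ∩ H i) ∪ (F ∩ (H i)ᶜ) := by
    ext x; by_cases hx : x ∈ H i <;> simp [hx]
  have hd : Disjoint (F ∩ H i) (F ∩ (H i)ᶜ) := by
    rw [Set.disjoint_iff]; rintro x ⟨⟨_, h1⟩, _, h2⟩; exact h2 h1
  have hm1 : F ∩ H i ∈ 𝒜 := sf_inter_mem h𝒜 hF hHi
  have hm2 : F ∩ (H i)ᶜ ∈ 𝒜 := sf_inter_mem h𝒜 hF (h𝒜.2.1 _ hHi)
  have hz : σ (F ∩ (H i)ᶜ) i = 0 :=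
    strat_zero_of_disjoint h𝒜 hσ hm2 (Set.disjoint_left.mpr fun x hx ⟨_, h2⟩ => h2 hx)
  have := (hσ i).1.2.2 _ hm1 _ hm2 hd
  rw [← hsplit] at this
  simp only at this hz ⊢
  linarith

-- well-order min helper
lemma wf_min_subset_eq {α : Type*} {r : α → α → Prop} [IsWellOrder α r]
    (wf : WellFounded r) {S T : Set α} (hST : S ⊆ T) (hS : S.Nonempty) (hT : T.Nonempty)
    (hmem : wf.min T hT ∈ S) : wf.min S hS = wf.min T hT := by
  rcases trichotomous_of r (wf.min S hS) (wf.min T hT) with h | h | h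
  · exact absurd h (wf.not_lt_min T (hST (wf.min_mem S hS)))
  · exact h
  · exact absurd h (wf.not_lt_min S hmem)

end S11
namespace S11

section Construction

variable {ι : Type*}

/-- The atom ("cell") of the finite field generated by `s` with positive pattern `u`. -/
def cell (s u : Finset (Set Ω)) : Set Ω :=
  (⋂ A ∈ u, A) ∩ ⋂ A ∈ s \ u, Aᶜ

variable [Nonempty ι]

noncomputable def jdx (H : ι → Set Ω) (s u : Finset (Set Ω)) : ι :=
  if h : ∃ i, H i ⊆ cell s u then h.choose else Classical.arbitrary ι

noncomputable def mu (H : ι → Set Ω) (π : Set Ω → ℝ) (σ : Set Ω → ι → ℝ)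
    (s : Finset (Set Ω)) (F : Set Ω) : ℝ :=
  ∑ u ∈ s.powerset, π (cell s u) * σ F (jdx H s u)

noncomputable def jK (σ : Set Ω → ι → ℝ) (K : Set Ω) : ι :=
  if h : { i | 0 < σ K i }.Nonempty then
    (IsWellFounded.wf (r := (WellOrderingRel : ι → ι → Prop))).min _ h
  else Classical.arbitrary ι

noncomputable def omK [Nonempty Ω] (K : Set Ω) : Ω :=
  if h : K.Nonempty then
    (IsWellFounded.wf (r := (WellOrderingRel : Ω → Ω → Prop))).min _ h
  else Classical.arbitrary Ω

noncomputable def QC [Nonempty Ω] (H : ι → Set Ω) (π : Set Ω → ℝ) (σ : Set Ω → ι → ℝ)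
    (s : Finset (Set Ω)) (F K : Set Ω) : ℝ :=
  if 0 < mu H π σ s K then mu H π σ s (F ∩ K) / mu H π σ s K
  else if { i | 0 < σ K i }.Nonempty then σ (F ∩ K) (jK σ K) / σ K (jK σ K)
  else if omK K ∈ F then 1 else 0

-- basic cell lemmas
lemma mem_cell {s u : Finset (Set Ω)} {x : Ω} :
    x ∈ cell s u ↔ (∀ A ∈ u, x ∈ A) ∧ ∀ A ∈ s, A ∉ u → x ∉ A := by
  simp only [cell, Set.mem_inter_iff, Set.mem_iInter, Set.mem_compl_iff, Finset.mem_sdiff]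
  tauto

lemma cell_subset {s u : Finset (Set Ω)} {A : Set Ω} (hA : A ∈ u) : cell s u ⊆ A :=
  fun _ hx => (mem_cell.mp hx).1 A hA

lemma cell_subset_compl {s u : Finset (Set Ω)} {A : Set Ω} (hA : A ∈ s) (hAu : A ∉ u) :
    cell s u ⊆ Aᶜ := fun _ hx => (mem_cell.mp hx).2 A hA hAu

lemma mem_cell_filter (s : Finset (Set Ω)) (x : Ω) :
    x ∈ cell s (s.filter (fun A => x ∈ A)) := by
  classical
  rw [mem_cell]
  constructor
  · intro A hA; exact (Finset.mem_filter.mp hA).2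
  · intro A hA hAu hxA; exact hAu (Finset.mem_filter.mpr ⟨hA, hxA⟩)

lemma cell_disjoint {s u v : Finset (Set Ω)} (hu : u ⊆ s) (hv : v ⊆ s) (huv : u ≠ v) :
    Disjoint (cell s u) (cell s v) := by
  classical
  rw [Set.disjoint_iff]
  rintro x ⟨hxu, hxv⟩
  have : ∃ A, (A ∈ u ∧ A ∉ v) ∨ (A ∈ v ∧ A ∉ u) := by
    by_contra hcon
    push_neg at hcon
    exact huv (Finset.ext fun A => ⟨fun h => (hcon A).1 h, fun h => (hcon A).2 h⟩)
  obtain ⟨A, ⟨h1, h2⟩ | ⟨h1, h2⟩⟩ := this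
  · exact cell_subset_compl (hu h1) h2 hxv (cell_subset h1 hxu)
  · exact cell_subset_compl (hv h1) h2 hxu (cell_subset h1 hxv)

lemma cell_cover (s : Finset (Set Ω)) : (⋃ u ∈ s.powerset, cell s u) = Set.univ := by
  classical
  ext x
  simp only [Set.mem_iUnion, Set.mem_univ, iff_true]
  exact ⟨s.filter (fun A => x ∈ A), Finset.mem_powerset.mpr (Finset.filter_subset _ _),
    mem_cell_filter s x⟩

lemma biInter_mem {𝒜L : Set (Set Ω)} (hF : IsSetField 𝒜L) (u : Finset (Set Ω))
    (hu : ↑u ⊆ 𝒜L) : (⋂ A ∈ u, A) ∈ 𝒜L := by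
  classical
  induction u using Finset.induction_on with
  | empty => simpa using hF.1
  | @insert a t ha ih =>
    rw [Finset.set_biInter_insert]
    exact sf_inter_mem hF (hu (by simp)) (ih fun b hb => hu (by simp [hb]))

lemma cell_mem {𝒜L : Set (Set Ω)} (hF : IsSetField 𝒜L) {s u : Finset (Set Ω)}
    (hs : ↑s ⊆ 𝒜L) (hu : u ⊆ s) : cell s u ∈ 𝒜L := by
  classical
  refine sf_inter_mem hF (biInter_mem hF u (subset_trans (by exact_mod_cast hu) hs)) ?_
  have : ∀ t : Finset (Set Ω), ↑t ⊆ 𝒜L → (⋂ A ∈ t, Aᶜ) ∈ 𝒜L := by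
    intro t ht
    induction t using Finset.induction_on with
    | empty => simpa using hF.1
    | @insert a r ha ih =>
      rw [Finset.set_biInter_insert]
      exact sf_inter_mem hF (hF.2.1 _ (ht (by simp))) (ih fun b hb => ht (by simp [hb]))
  exact this (s \ u) (fun A hA => hs (by exact_mod_cast (Finset.mem_sdiff.mp (by exact_mod_cast hA)).1))

end Construction

end S11
namespace S11

section MuLemmas

variable {ι : Type*} [Nonempty Ω] [Nonempty ι]
variable {H : ι → Set Ω} {𝒜L 𝒜 : Set (Set Ω)} {π : Set Ω → ℝ} {σ : Set Ω → ι → ℝ}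
variable {s : Finset (Set Ω)}

lemma strat_inter_of_subset (h𝒜 : IsSetField 𝒜) (hσ : IsStrategy 𝒜 H σ)
    {F B : Set Ω} (hF : F ∈ 𝒜) (hB : B ∈ 𝒜) {j : ι} (hj : H j ⊆ B) :
    σ (F ∩ B) j = σ F j := by
  have hsplit : F = (F ∩ B) ∪ (F ∩ Bᶜ) := by
    ext x; by_cases hx : x ∈ B <;> simp [hx]
  have hd : Disjoint (F ∩ B) (F ∩ Bᶜ) := by
    rw [Set.disjoint_iff]; rintro x ⟨⟨_, h1⟩, _, h2⟩; exact h2 h1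
  have hm1 : F ∩ B ∈ 𝒜 := sf_inter_mem h𝒜 hF hB
  have hm2 : F ∩ Bᶜ ∈ 𝒜 := sf_inter_mem h𝒜 hF (h𝒜.2.1 _ hB)
  have hz : σ (F ∩ Bᶜ) j = 0 := by
    refine strat_zero_of_disjoint h𝒜 hσ hm2 (Set.disjoint_left.mpr fun x hx ⟨_, h2⟩ => h2 (hj hx))
  have := (hσ j).1.2.2 _ hm1 _ hm2 hd
  rw [← hsplit] at this
  simp only at this hz ⊢
  linarith

lemma strat_zero_of_subset_compl (h𝒜 : IsSetField 𝒜) (hσ : IsStrategy 𝒜 H σ)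
    {F B : Set Ω} (hF : F ∈ 𝒜) {j : ι} (hj : H j ⊆ Bᶜ) (hFB : F ⊆ B) : σ F j = 0 :=
  strat_zero_of_disjoint h𝒜 hσ hF
    (Set.disjoint_left.mpr fun x hx hxF => (hj hx) (hFB hxF))

lemma jdx_spec (hH : IsPartition H) (h𝒜L : IsFieldOver H 𝒜L) (hs : ↑s ⊆ 𝒜L)
    {u : Finset (Set Ω)} (hu : u ⊆ s) (hne : (cell s u).Nonempty) :
    H (jdx H s u) ⊆ cell s u := by
  have hex : ∃ i, H i ⊆ cell s u :=
    exists_H_subset hH h𝒜L (cell_mem h𝒜L.1 hs hu) hne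
  rw [jdx, dif_pos hex]
  exact hex.choose_spec

lemma pi_cell_empty (h𝒜Lf : IsSetField 𝒜L) (hπ : IsFAP 𝒜L π)
    {u : Finset (Set Ω)} (hne : ¬(cell s u).Nonempty) : π (cell s u) = 0 := by
  rw [Set.not_nonempty_iff_eq_empty] at hne
  rw [hne]; exact fap_empty h𝒜Lf hπ

lemma sum_pi_cell (h𝒜Lf : IsSetField 𝒜L) (hπ : IsFAP 𝒜L π) (hs : ↑s ⊆ 𝒜L) :
    ∑ u ∈ s.powerset, π (cell s u) = 1 := by
  classical
  have := fap_biUnion h𝒜Lf hπ s.powerset (cell s)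
    (fun u hu => cell_mem h𝒜Lf hs (Finset.mem_powerset.mp hu))
    (fun u hu v hv huv => cell_disjoint (Finset.mem_powerset.mp hu)
      (Finset.mem_powerset.mp hv) huv)
  rw [cell_cover s] at this
  rw [← this, hπ.2.1]

lemma mu_fap (hH : IsPartition H) (h𝒜L : IsFieldOver H 𝒜L) (h𝒜 : IsSetField 𝒜)
    (hπ : IsFAP 𝒜L π) (hσ : IsStrategy 𝒜 H σ) (hs : ↑s ⊆ 𝒜L) :
    IsFAP 𝒜 (mu H π σ s) := by
  classical
  have hpc : ∀ u ∈ s.powerset, 0 ≤ π (cell s u) := fun u hu =>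
    fap_nonneg hπ (cell_mem h𝒜L.1 hs (Finset.mem_powerset.mp hu))
  refine ⟨fun F hF => ⟨?_, ?_⟩, ?_, ?_⟩
  · exact Finset.sum_nonneg fun u hu =>
      mul_nonneg (hpc u hu) (strat_mem01 hσ hF _).1
  · calc ∑ u ∈ s.powerset, π (cell s u) * σ F (jdx H s u)
        ≤ ∑ u ∈ s.powerset, π (cell s u) := Finset.sum_le_sum fun u hu => by
          nlinarith [hpc u hu, (strat_mem01 hσ hF (jdx H s u)).2]
      _ = 1 := sum_pi_cell h𝒜L.1 hπ hs
  · rw [mu]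
    have huniv : ∀ u ∈ s.powerset, π (cell s u) * σ Set.univ (jdx H s u) = π (cell s u) := by
      intro u hu
      have h1 : σ Set.univ (jdx H s u) = 1 := (hσ (jdx H s u)).1.2.1
      rw [h1, mul_one]
    rw [Finset.sum_congr rfl huniv, sum_pi_cell h𝒜L.1 hπ hs]
  · intro A hA B hB hAB
    rw [mu, mu, mu, ← Finset.sum_add_distrib]
    refine Finset.sum_congr rfl fun u _ => ?_
    have h2 : σ (A ∪ B) (jdx H s u) = σ A (jdx H s u) + σ B (jdx H s u) :=
      (hσ (jdx H s u)).1.2.2 A hA B hB hAB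
    rw [h2, mul_add]

lemma mu_eq_pi (hH : IsPartition H) (h𝒜L : IsFieldOver H 𝒜L) (h𝒜 : IsSetField 𝒜)
    (hsub : 𝒜L ⊆ 𝒜) (hπ : IsFAP 𝒜L π) (hσ : IsStrategy 𝒜 H σ) (hs : ↑s ⊆ 𝒜L)
    {B : Set Ω} (hB : B ∈ s) : mu H π σ s B = π B := by
  classical
  have hB𝒜L : B ∈ 𝒜L := hs hB
  have hterm : ∀ u ∈ s.powerset,
      π (cell s u) * σ B (jdx H s u) = if B ∈ u then π (cell s u) else 0 := by
    intro u hu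
    have hu' := Finset.mem_powerset.mp hu
    by_cases hne : (cell s u).Nonempty
    · have hj := jdx_spec hH h𝒜L hs hu' hne
      by_cases hBu : B ∈ u
      · rw [if_pos hBu, (hσ _).2 B (hsub hB𝒜L) (hj.trans (cell_subset hBu)), mul_one]
      · rw [if_neg hBu,
          strat_zero_of_subset_compl h𝒜 hσ (hsub hB𝒜L)
            (hj.trans (cell_subset_compl hB hBu)) (subset_refl B), mul_zero]
    · simp [pi_cell_empty h𝒜L.1 hπ hne]
  rw [mu, Finset.sum_congr rfl hterm, ← Finset.sum_filter]
  have hBdec : B = ⋃ u ∈ s.powerset.filter (fun u => B ∈ u), cell s u := by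
    ext x
    simp only [Set.mem_iUnion, Finset.mem_filter, Finset.mem_powerset]
    constructor
    · intro hx
      exact ⟨s.filter (fun A => x ∈ A), ⟨Finset.filter_subset _ _,
        Finset.mem_filter.mpr ⟨hB, hx⟩⟩, mem_cell_filter s x⟩
    · rintro ⟨u, ⟨hus, hBu⟩, hxu⟩
      exact cell_subset hBu hxu
  have := fap_biUnion h𝒜L.1 hπ (s.powerset.filter (fun u => B ∈ u)) (cell s)
    (fun u hu => cell_mem h𝒜L.1 hs (Finset.mem_powerset.mp (Finset.mem_filter.mp hu).1))
    (fun u hu v hv huv => cell_disjoint (Finset.mem_powerset.mp (Finset.mem_filter.mp hu).1)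
      (Finset.mem_powerset.mp (Finset.mem_filter.mp hv).1) huv)
  rw [← hBdec] at this
  rw [← this]

lemma mu_inter_Hi (hH : IsPartition H) (h𝒜L : IsFieldOver H 𝒜L) (h𝒜 : IsSetField 𝒜)
    (hsub : 𝒜L ⊆ 𝒜) (hπ : IsFAP 𝒜L π) (hσ : IsStrategy 𝒜 H σ) (hs : ↑s ⊆ 𝒜L)
    {i : ι} (hi : H i ∈ s) {F : Set Ω} (hF : F ∈ 𝒜) :
    mu H π σ s (F ∩ H i) = σ F i * mu H π σ s (H i) := by
  classical
  have hHi𝒜 : H i ∈ 𝒜 := hsub (hs hi)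
  rw [mu, mu, Finset.mul_sum]
  refine Finset.sum_congr rfl fun u hu => ?_
  have hu' := Finset.mem_powerset.mp hu
  by_cases hne : (cell s u).Nonempty
  · have hj := jdx_spec hH h𝒜L hs hu' hne
    by_cases hBu : H i ∈ u
    · have hji : H (jdx H s u) ⊆ H i := hj.trans (cell_subset hBu)
      have : jdx H s u = i := part_eq_of_subset hH hji
      rw [this, strat_inter_of_subset h𝒜 hσ hF hHi𝒜 (subset_refl _),
        (hσ i).2 (H i) hHi𝒜 (subset_refl _), mul_one]
      ring
    · have hjc : H (jdx H s u) ⊆ (H i)ᶜ := hj.trans (cell_subset_compl hi hBu)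
      rw [strat_zero_of_subset_compl h𝒜 hσ (sf_inter_mem h𝒜 hF hHi𝒜) hjc
          (Set.inter_subset_right),
        strat_zero_of_subset_compl h𝒜 hσ hHi𝒜 hjc (subset_refl _)]
      ring
  · rw [pi_cell_empty h𝒜L.1 hπ hne]
    ring

lemma mu_bounds (hH : IsPartition H) (h𝒜L : IsFieldOver H 𝒜L) (h𝒜 : IsSetField 𝒜)
    (hsub : 𝒜L ⊆ 𝒜) (hπ : IsFAP 𝒜L π) (hσ : IsStrategy 𝒜 H σ) (hs : ↑s ⊆ 𝒜L)
    {B : Set Ω} (hB : B ∈ s) {F : Set Ω} (hF : F ∈ 𝒜) :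
    mu H π σ s B * sInf {x | ∃ i, H i ⊆ B ∧ x = σ F i} ≤ mu H π σ s (F ∩ B) ∧
    mu H π σ s (F ∩ B) ≤ mu H π σ s B * sSup {x | ∃ i, H i ⊆ B ∧ x = σ F i} := by
  classical
  have hB𝒜 : B ∈ 𝒜 := hsub (hs hB)
  have hFB𝒜 : F ∩ B ∈ 𝒜 := sf_inter_mem h𝒜 hF hB𝒜
  set SB := {x | ∃ i, H i ⊆ B ∧ x = σ F i} with hSB
  have hbdd : BddBelow SB := ⟨0, fun x ⟨i, _, hx⟩ => hx ▸ (strat_mem01 hσ hF i).1⟩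
  have hbdd' : BddAbove SB := ⟨1, fun x ⟨i, _, hx⟩ => hx ▸ (strat_mem01 hσ hF i).2⟩
  have key : ∀ u ∈ s.powerset,
      (π (cell s u) * σ B (jdx H s u)) * sInf SB ≤ π (cell s u) * σ (F ∩ B) (jdx H s u) ∧
      π (cell s u) * σ (F ∩ B) (jdx H s u) ≤ (π (cell s u) * σ B (jdx H s u)) * sSup SB := by
    intro u hu
    have hu' := Finset.mem_powerset.mp hu
    by_cases hne : (cell s u).Nonempty
    · have hj := jdx_spec hH h𝒜L hs hu' hne
      have hpc : 0 ≤ π (cell s u) := fap_nonneg hπ (cell_mem h𝒜L.1 hs hu')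
      by_cases hBu : B ∈ u
      · have hjB : H (jdx H s u) ⊆ B := hj.trans (cell_subset hBu)
        have h1 : σ B (jdx H s u) = 1 := (hσ _).2 B hB𝒜 hjB
        have h2 : σ (F ∩ B) (jdx H s u) = σ F (jdx H s u) :=
          strat_inter_of_subset h𝒜 hσ hF hB𝒜 hjB
        have hmem : σ F (jdx H s u) ∈ SB := ⟨jdx H s u, hjB, rfl⟩
        constructor
        · rw [h1, mul_one, h2]
          exact mul_le_mul_of_nonneg_left (csInf_le hbdd hmem) hpc
        · rw [h1, mul_one, h2]
          exact mul_le_mul_of_nonneg_left (le_csSup hbdd' hmem) hpc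
      · have hjc : H (jdx H s u) ⊆ Bᶜ := hj.trans (cell_subset_compl hB hBu)
        rw [strat_zero_of_subset_compl h𝒜 hσ hFB𝒜 hjc Set.inter_subset_right,
          strat_zero_of_subset_compl h𝒜 hσ hB𝒜 hjc (subset_refl _)]
        simp
    · rw [pi_cell_empty h𝒜L.1 hπ hne]
      simp
  constructor
  · rw [mu, mu, Finset.sum_mul]
    exact Finset.sum_le_sum fun u hu => (key u hu).1
  · rw [mu, mu, Finset.sum_mul]
    exact Finset.sum_le_sum fun u hu => (key u hu).2

end MuLemmas

end S11
namespace S11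

section QCLemmas

variable {ι : Type*} [Nonempty Ω] [Nonempty ι]
variable {H : ι → Set Ω} {𝒜L 𝒜 : Set (Set Ω)} {π : Set Ω → ℝ} {σ : Set Ω → ι → ℝ}
variable {s : Finset (Set Ω)}

omit [Nonempty Ω] [Nonempty ι] in
lemma ratio_fap (h𝒜 : IsSetField 𝒜) {ν : Set Ω → ℝ} (hν : IsFAP 𝒜 ν) {K : Set Ω}
    (hK : K ∈ 𝒜) (hpos : 0 < ν K) : IsFAP 𝒜 (fun E => ν (E ∩ K) / ν K) := by
  refine ⟨fun A hA => ⟨div_nonneg (fap_nonneg hν (sf_inter_mem h𝒜 hA hK)) hpos.le, ?_⟩,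
    ?_, ?_⟩
  · rw [div_le_one hpos]
    exact fap_mono h𝒜 hν (sf_inter_mem h𝒜 hA hK) hK Set.inter_subset_right
  · show ν (Set.univ ∩ K) / ν K = 1
    rw [Set.univ_inter, div_self hpos.ne']
  · intro A hA B hB hAB
    have hset : (A ∪ B) ∩ K = (A ∩ K) ∪ (B ∩ K) := Set.union_inter_distrib_right A B K
    show ν ((A ∪ B) ∩ K) / ν K = ν (A ∩ K) / ν K + ν (B ∩ K) / ν K
    rw [hset, hν.2.2 _ (sf_inter_mem h𝒜 hA hK) _ (sf_inter_mem h𝒜 hB hK)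
      (hAB.mono Set.inter_subset_left Set.inter_subset_left), add_div]

omit [Nonempty Ω] [Nonempty ι] in
lemma ind_fap (x : Ω) : IsFAP 𝒜 (fun E => if x ∈ E then (1 : ℝ) else 0) := by
  refine ⟨fun A _ => by dsimp only; split <;> norm_num, by simp, ?_⟩
  intro A hA B hB hAB
  by_cases hxA : x ∈ A
  · have hxB : x ∉ B := fun hxB => Set.disjoint_iff.mp hAB ⟨hxA, hxB⟩
    simp [Set.mem_union, hxA, hxB]
  · by_cases hxB : x ∈ B <;> simp [Set.mem_union, hxA, hxB]

omit [Nonempty Ω] in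
lemma jK_spec {K : Set Ω} (h : {i | 0 < σ K i}.Nonempty) : 0 < σ K (jK σ K) := by
  rw [jK, dif_pos h]
  exact (IsWellFounded.wf (r := (WellOrderingRel : ι → ι → Prop))).min_mem _ h

omit [Nonempty Ω] in
lemma jK_eq {K K' : Set Ω} (h : {i | 0 < σ K i}.Nonempty)
    (hmono : ∀ i, σ K' i ≤ σ K i) (hpos : 0 < σ K' (jK σ K)) : jK σ K' = jK σ K := by
  have h' : {i | 0 < σ K' i}.Nonempty := ⟨jK σ K, hpos⟩
  rw [jK, dif_pos h', jK, dif_pos h]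
  refine wf_min_subset_eq _ (fun i hi => lt_of_lt_of_le hi (hmono i)) h' h ?_
  rw [jK, dif_pos h] at hpos
  exact hpos

omit [Nonempty ι] in
lemma omK_mem {K : Set Ω} (h : K.Nonempty) : omK K ∈ K := by
  rw [omK, dif_pos h]
  exact (IsWellFounded.wf (r := (WellOrderingRel : Ω → Ω → Prop))).min_mem _ h

omit [Nonempty ι] in
lemma omK_eq {K K' : Set Ω} (h' : K'.Nonempty) (h : K.Nonempty) (hsub : K' ⊆ K)
    (hmem : omK K ∈ K') : omK K' = omK K := by
  rw [omK, dif_pos h', omK, dif_pos h]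
  refine wf_min_subset_eq _ hsub h' h ?_
  rw [omK, dif_pos h] at hmem
  exact hmem

lemma QC_isFCP (hH : IsPartition H) (h𝒜L : IsFieldOver H 𝒜L) (h𝒜 : IsSetField 𝒜)
    (hπ : IsFAP 𝒜L π) (hσ : IsStrategy 𝒜 H σ) (hs : ↑s ⊆ 𝒜L) :
    IsFCP 𝒜 (QC H π σ s) := by
  classical
  have hfap := mu_fap hH h𝒜L h𝒜 hπ hσ hs
  have hmono : ∀ {A B : Set Ω}, A ∈ 𝒜 → B ∈ 𝒜 → A ⊆ B →
      mu H π σ s A ≤ mu H π σ s B := fun hA hB hAB => fap_mono h𝒜 hfap hA hB hAB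
  have hnn : ∀ {A : Set Ω}, A ∈ 𝒜 → 0 ≤ mu H π σ s A := fun hA => fap_nonneg hfap hA
  refine ⟨?_, ?_, ?_⟩
  · -- C1
    intro E hE K hK hKne
    have hset : E ∩ K ∩ K = E ∩ K := by rw [Set.inter_assoc, Set.inter_self]
    by_cases h1 : 0 < mu H π σ s K
    · simp only [QC, hset, if_pos h1]
    · by_cases h2 : {i | 0 < σ K i}.Nonempty
      · simp only [QC, hset, if_neg h1, if_pos h2]
      · simp only [QC, if_neg h1, if_neg h2]
        have hω : omK K ∈ K := omK_mem hKne
        by_cases hE' : omK K ∈ E <;> simp [Set.mem_inter_iff, hE', hω]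
  · -- C2
    intro K hK hKne
    by_cases h1 : 0 < mu H π σ s K
    · have : (fun E => QC H π σ s E K) = fun E => mu H π σ s (E ∩ K) / mu H π σ s K :=
        funext fun E => by rw [QC, if_pos h1]
      rw [this]
      exact ratio_fap h𝒜 hfap hK h1
    · by_cases h2 : {i | 0 < σ K i}.Nonempty
      · have : (fun E => QC H π σ s E K) =
            fun E => σ (E ∩ K) (jK σ K) / σ K (jK σ K) :=
          funext fun E => by rw [QC, if_neg h1, if_pos h2]
        rw [this]
        exact ratio_fap h𝒜 (hσ (jK σ K)).1 hK (jK_spec h2)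
      · have : (fun E => QC H π σ s E K) = fun E => if omK K ∈ E then (1 : ℝ) else 0 :=
          funext fun E => by rw [QC, if_neg h1, if_neg h2]
        rw [this]
        exact ind_fap (omK K)
  · -- C3
    intro E hE F hF K hK hKne hEKne
    have hEK : E ∩ K ∈ 𝒜 := sf_inter_mem h𝒜 hE hK
    have hEFK : E ∩ F ∩ K ∈ 𝒜 := sf_inter_mem h𝒜 (sf_inter_mem h𝒜 hE hF) hK
    have hset : E ∩ F ∩ K = F ∩ (E ∩ K) := by ext x; simp only [Set.mem_inter_iff]; tauto
    by_cases h1 : 0 < mu H π σ s K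
    · by_cases h1' : 0 < mu H π σ s (E ∩ K)
      · simp only [QC, if_pos h1, if_pos h1']
        rw [hset]
        field_simp
      · have hEK0 : mu H π σ s (E ∩ K) = 0 := le_antisymm (not_lt.mp h1') (hnn hEK)
        have hnum : mu H π σ s (E ∩ F ∩ K) = 0 :=
          le_antisymm (hEK0 ▸ hmono hEFK hEK (by rw [hset]; exact Set.inter_subset_right))
            (hnn hEFK)
        simp only [QC, if_pos h1, hnum, hEK0]
        simp
    · have hEK1 : ¬ 0 < mu H π σ s (E ∩ K) := fun hc =>
        h1 (lt_of_lt_of_le hc (hmono hEK hK Set.inter_subset_right))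
      by_cases h2 : {i | 0 < σ K i}.Nonempty
      · have hjpos : 0 < σ K (jK σ K) := jK_spec h2
        have hσm : ∀ i, σ (E ∩ K) i ≤ σ K i := fun i =>
          strat_mono h𝒜 hσ hEK hK Set.inter_subset_right i
        by_cases h3 : 0 < σ (E ∩ K) (jK σ K)
        · have h2' : {i | 0 < σ (E ∩ K) i}.Nonempty := ⟨jK σ K, h3⟩
          have hjeq : jK σ (E ∩ K) = jK σ K := jK_eq h2 hσm h3
          simp only [QC, if_neg h1, if_pos h2, if_neg hEK1, if_pos h2', hjeq]
          rw [hset]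
          field_simp
        · have hEKj : σ (E ∩ K) (jK σ K) = 0 :=
            le_antisymm (not_lt.mp h3) (strat_mem01 hσ hEK _).1
          have hnum : σ (E ∩ F ∩ K) (jK σ K) = 0 :=
            le_antisymm (hEKj ▸ strat_mono h𝒜 hσ hEFK hEK
                (by rw [hset]; exact Set.inter_subset_right) _)
              (strat_mem01 hσ hEFK _).1
          simp only [QC, if_neg h1, if_pos h2, hnum, hEKj]
          simp
      · have h2' : ¬ {i | 0 < σ (E ∩ K) i}.Nonempty := fun ⟨i, hi⟩ =>
          h2 ⟨i, lt_of_lt_of_le hi (strat_mono h𝒜 hσ hEK hK Set.inter_subset_right i)⟩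
        simp only [QC, if_neg h1, if_neg h2, if_neg hEK1, if_neg h2']
        have hωK : omK K ∈ K := omK_mem hKne
        by_cases hE' : omK K ∈ E
        · have hom : omK (E ∩ K) = omK K := omK_eq hEKne hKne Set.inter_subset_right ⟨hE', hωK⟩
          rw [hom]
          by_cases hF' : omK K ∈ F <;> simp [hE', hF', Set.mem_inter_iff]
        · simp [Set.mem_inter_iff, hE']

end QCLemmas

end S11
namespace S11

section QCExt

variable {ι : Type*} [Nonempty Ω] [Nonempty ι]
variable {H : ι → Set Ω} {𝒜L 𝒜 : Set (Set Ω)} {π : Set Ω → ℝ} {σ : Set Ω → ι → ℝ}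
variable {s : Finset (Set Ω)}

lemma QC_univ (hH : IsPartition H) (h𝒜L : IsFieldOver H 𝒜L) (h𝒜 : IsSetField 𝒜)
    (hπ : IsFAP 𝒜L π) (hσ : IsStrategy 𝒜 H σ) (hs : ↑s ⊆ 𝒜L) (F : Set Ω) :
    QC H π σ s F Set.univ = mu H π σ s F := by
  have h1 : mu H π σ s Set.univ = 1 := (mu_fap hH h𝒜L h𝒜 hπ hσ hs).2.1
  rw [QC, if_pos (by rw [h1]; norm_num), h1, Set.inter_univ, div_one]

lemma QC_prior (hH : IsPartition H) (h𝒜L : IsFieldOver H 𝒜L) (h𝒜 : IsSetField 𝒜)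
    (hsub : 𝒜L ⊆ 𝒜) (hπ : IsFAP 𝒜L π) (hσ : IsStrategy 𝒜 H σ) (hs : ↑s ⊆ 𝒜L)
    {B : Set Ω} (hB : B ∈ s) : QC H π σ s B Set.univ = π B := by
  rw [QC_univ hH h𝒜L h𝒜 hπ hσ hs, mu_eq_pi hH h𝒜L h𝒜 hsub hπ hσ hs hB]

lemma QC_strat (hH : IsPartition H) (h𝒜L : IsFieldOver H 𝒜L) (h𝒜 : IsSetField 𝒜)
    (hsub : 𝒜L ⊆ 𝒜) (hπ : IsFAP 𝒜L π) (hσ : IsStrategy 𝒜 H σ) (hs : ↑s ⊆ 𝒜L)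
    {i : ι} (hi : H i ∈ s) {F : Set Ω} (hF : F ∈ 𝒜) :
    QC H π σ s F (H i) = σ F i := by
  have hHi𝒜 : H i ∈ 𝒜 := hsub (hs hi)
  by_cases h1 : 0 < mu H π σ s (H i)
  · rw [QC, if_pos h1, mu_inter_Hi hH h𝒜L h𝒜 hsub hπ hσ hs hi hF,
      mul_div_assoc, div_self h1.ne', mul_one]
  · have hone : σ (H i) i = 1 := (hσ i).2 _ hHi𝒜 (subset_refl _)
    have h2 : {i' | 0 < σ (H i) i'}.Nonempty := ⟨i, by rw [Set.mem_setOf_eq, hone]; norm_num⟩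
    have hj : jK σ (H i) = i := by
      have hmem : 0 < σ (H i) (jK σ (H i)) := jK_spec h2
      by_contra hne
      have hd : Disjoint (H (jK σ (H i))) (H i) := hH.2.1 hne
      rw [strat_zero_of_disjoint h𝒜 hσ hHi𝒜 hd] at hmem
      exact lt_irrefl 0 hmem
    rw [QC, if_neg h1, if_pos h2, hj, hone, div_one,
      strat_inter_of_subset h𝒜 hσ hF hHi𝒜 (subset_refl _)]

lemma QC_congl (hH : IsPartition H) (h𝒜L : IsFieldOver H 𝒜L) (h𝒜 : IsSetField 𝒜)
    (hsub : 𝒜L ⊆ 𝒜) (hπ : IsFAP 𝒜L π) (hσ : IsStrategy 𝒜 H σ) (hs : ↑s ⊆ 𝒜L)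
    {F K B : Set Ω} (hF : F ∈ 𝒜) (hK : K ∈ 𝒜L) (hKne : K.Nonempty)
    (hB : B ∈ s) (hBne : B.Nonempty) (hBK : B ⊆ K) :
    QC H π σ s B K * sInf {x | ∃ i, H i ⊆ B ∧ x = σ F i} ≤ QC H π σ s (F ∩ B) K ∧
    QC H π σ s (F ∩ B) K ≤ QC H π σ s B K * sSup {x | ∃ i, H i ⊆ B ∧ x = σ F i} := by
  classical
  have hB𝒜L : B ∈ 𝒜L := hs hB
  have hB𝒜 : B ∈ 𝒜 := hsub hB𝒜L
  have hK𝒜 : K ∈ 𝒜 := hsub hK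
  have hBKset : B ∩ K = B := Set.inter_eq_left.mpr hBK
  have hFBK : F ∩ B ∩ K = F ∩ B :=
    Set.inter_eq_left.mpr (Set.inter_subset_right.trans hBK)
  have hbdd : BddBelow {x | ∃ i, H i ⊆ B ∧ x = σ F i} :=
    ⟨0, fun x ⟨i, _, hx⟩ => hx ▸ (strat_mem01 hσ hF i).1⟩
  have hbdd' : BddAbove {x | ∃ i, H i ⊆ B ∧ x = σ F i} :=
    ⟨1, fun x ⟨i, _, hx⟩ => hx ▸ (strat_mem01 hσ hF i).2⟩
  by_cases h1 : 0 < mu H π σ s K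
  · simp only [QC, if_pos h1, hBKset, hFBK]
    obtain ⟨hlo, hhi⟩ := mu_bounds hH h𝒜L h𝒜 hsub hπ hσ hs hB hF
    constructor
    · rw [div_mul_eq_mul_div]
      gcongr
    · rw [div_mul_eq_mul_div]
      gcongr
  · obtain ⟨i0, hi0⟩ := exists_H_subset hH h𝒜L hK hKne
    have hex : {i | 0 < σ K i}.Nonempty :=
      ⟨i0, by rw [Set.mem_setOf_eq, (hσ i0).2 K hK𝒜 hi0]; norm_num⟩
    have hjpos : 0 < σ K (jK σ K) := jK_spec hex
    have hjK : ¬ Disjoint (H (jK σ K)) K := fun hd => by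
      rw [strat_zero_of_disjoint h𝒜 hσ hK𝒜 hd] at hjpos
      exact lt_irrefl 0 hjpos
    have hjsub : H (jK σ K) ⊆ K := (part_subset_or_disjoint hH h𝒜L hK (jK σ K)).resolve_right hjK
    have hKone : σ K (jK σ K) = 1 := (hσ _).2 K hK𝒜 hjsub
    simp only [QC, if_neg h1, if_pos hex, hBKset, hFBK, hKone, div_one]
    rcases part_subset_or_disjoint hH h𝒜L hB𝒜L (jK σ K) with hjB | hjB
    · have hone : σ B (jK σ K) = 1 := (hσ _).2 B hB𝒜 hjB
      have heq : σ (F ∩ B) (jK σ K) = σ F (jK σ K) :=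
        strat_inter_of_subset h𝒜 hσ hF hB𝒜 hjB
      rw [hone, heq, one_mul, one_mul]
      exact ⟨csInf_le hbdd ⟨jK σ K, hjB, rfl⟩, le_csSup hbdd' ⟨jK σ K, hjB, rfl⟩⟩
    · have hz : σ B (jK σ K) = 0 := strat_zero_of_disjoint h𝒜 hσ hB𝒜 hjB
      have hz' : σ (F ∩ B) (jK σ K) = 0 :=
        strat_zero_of_disjoint h𝒜 hσ (sf_inter_mem h𝒜 hF hB𝒜)
          (hjB.mono_right Set.inter_subset_right)
      rw [hz, hz']
      simp

end QCExt

end S11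
namespace S11

section Topo

variable {ι : Type*}
variable {H : ι → Set Ω} {𝒜L 𝒜 ℬ : Set (Set Ω)} {π : Set Ω → ℝ} {σ : Set Ω → ι → ℝ}

def QRelSet (𝒜 𝒜L : Set (Set Ω)) (H : ι → Set Ω) (π : Set Ω → ℝ) (σ : Set Ω → ι → ℝ)
    (ℬ : Set (Set Ω)) : Set (Set Ω → Set Ω → ℝ) :=
  {Q | IsFCP 𝒜 Q ∧ (∀ B ∈ ℬ, Q B Set.univ = π B) ∧
    (∀ i, H i ∈ ℬ → ∀ F ∈ 𝒜, Q F (H i) = σ F i) ∧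
    ∀ F ∈ 𝒜, ∀ K ∈ 𝒜L, K.Nonempty → ∀ B ∈ ℬ, B.Nonempty → B ⊆ K →
      Q B K * sInf {x | ∃ i, H i ⊆ B ∧ x = σ F i} ≤ Q (F ∩ B) K ∧
      Q (F ∩ B) K ≤ Q B K * sSup {x | ∃ i, H i ⊆ B ∧ x = σ F i}}

lemma QRelSet_anti {ℬ ℬ' : Set (Set Ω)} (h : ℬ' ⊆ ℬ) :
    QRelSet 𝒜 𝒜L H π σ ℬ ⊆ QRelSet 𝒜 𝒜L H π σ ℬ' :=
  fun _ ⟨h1, h2, h3, h4⟩ => ⟨h1, fun B hB => h2 B (h hB), fun i hi => h3 i (h hi),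
    fun F hF K hK hKne B hB => h4 F hF K hK hKne B (h hB)⟩

lemma QfscSet_eq (h𝒜L : IsFieldOver H 𝒜L) :
    QfscSet 𝒜 𝒜L H π σ = QRelSet 𝒜 𝒜L H π σ 𝒜L := by
  ext Q
  constructor
  · rintro ⟨h1, ⟨h2a, h2b⟩, h3⟩
    exact ⟨h1, h2a, fun i _ F hF => h2b F hF i, h3⟩
  · rintro ⟨h1, h2, h3, h4⟩
    exact ⟨h1, ⟨h2, fun F hF i => h3 i (h𝒜L.2.1 i) F hF⟩, h4⟩

noncomputable def extQ (𝒜 : Set (Set Ω))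
    (f : {p : Set Ω × Set Ω // p.1 ∈ 𝒜 ∧ p.2 ∈ 𝒜 ∧ p.2.Nonempty} → ℝ) :
    Set Ω → Set Ω → ℝ := fun F K =>
  if h : F ∈ 𝒜 ∧ K ∈ 𝒜 ∧ K.Nonempty then f ⟨(F, K), h⟩ else 0

lemma extQ_apply {f : {p : Set Ω × Set Ω // p.1 ∈ 𝒜 ∧ p.2 ∈ 𝒜 ∧ p.2.Nonempty} → ℝ}
    {F K : Set Ω} (h : F ∈ 𝒜 ∧ K ∈ 𝒜 ∧ K.Nonempty) :
    extQ 𝒜 f F K = f ⟨(F, K), h⟩ := dif_pos h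

lemma restrict_extQ (f : {p : Set Ω × Set Ω // p.1 ∈ 𝒜 ∧ p.2 ∈ 𝒜 ∧ p.2.Nonempty} → ℝ) :
    restrictPairs 𝒜 𝒜 (extQ 𝒜 f) = f := by
  funext p
  show extQ 𝒜 f p.val.1 p.val.2 = f p
  rw [extQ_apply p.2]

lemma extQ_local [Nonempty Ω] (hH : IsPartition H) (h𝒜sf : IsSetField 𝒜)
    (hsub : 𝒜L ⊆ 𝒜) (hℬ : ℬ ⊆ 𝒜L) {Q : Set Ω → Set Ω → ℝ}
    (hQ : Q ∈ QRelSet 𝒜 𝒜L H π σ ℬ) :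
    extQ 𝒜 (restrictPairs 𝒜 𝒜 Q) ∈ QRelSet 𝒜 𝒜L H π σ ℬ := by
  have key : ∀ {F K : Set Ω}, F ∈ 𝒜 → K ∈ 𝒜 → K.Nonempty →
      extQ 𝒜 (restrictPairs 𝒜 𝒜 Q) F K = Q F K := fun hF hK hne => by
    rw [extQ_apply ⟨hF, hK, hne⟩]; rfl
  refine ⟨⟨?_, ?_, ?_⟩, ?_, ?_, ?_⟩
  · intro E hE K hK hKne
    rw [key hE hK hKne, key (sf_inter_mem h𝒜sf hE hK) hK hKne]
    exact hQ.1.1 E hE K hK hKne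
  · intro K hK hKne
    refine ⟨fun A hA => ?_, ?_, ?_⟩
    · show 0 ≤ extQ 𝒜 (restrictPairs 𝒜 𝒜 Q) A K ∧ extQ 𝒜 (restrictPairs 𝒜 𝒜 Q) A K ≤ 1
      rw [key hA hK hKne]
      exact (hQ.1.2.1 K hK hKne).1 A hA
    · show extQ 𝒜 (restrictPairs 𝒜 𝒜 Q) Set.univ K = 1
      rw [key h𝒜sf.1 hK hKne]
      exact (hQ.1.2.1 K hK hKne).2.1
    · intro A hA B hB hd
      show extQ 𝒜 (restrictPairs 𝒜 𝒜 Q) (A ∪ B) K = _ + _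
      rw [key (h𝒜sf.2.2 _ hA _ hB) hK hKne]
      show _ = extQ 𝒜 (restrictPairs 𝒜 𝒜 Q) A K + extQ 𝒜 (restrictPairs 𝒜 𝒜 Q) B K
      rw [key hA hK hKne, key hB hK hKne]
      exact (hQ.1.2.1 K hK hKne).2.2 A hA B hB hd
  · intro E hE F hF K hK hKne hEKne
    rw [key (sf_inter_mem h𝒜sf hE hF) hK hKne, key hE hK hKne,
      key hF (sf_inter_mem h𝒜sf hE hK) hEKne]
    exact hQ.1.2.2 E hE F hF K hK hKne hEKne
  · intro B hB
    rw [key (hsub (hℬ hB)) h𝒜sf.1 Set.univ_nonempty]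
    exact hQ.2.1 B hB
  · intro i hi F hF
    rw [key hF (hsub (hℬ hi)) (hH.1 i)]
    exact hQ.2.2.1 i hi F hF
  · intro F hF K hK hKne B hB hBne hBK
    have hB𝒜 : B ∈ 𝒜 := hsub (hℬ hB)
    rw [key hB𝒜 (hsub hK) hKne, key (sf_inter_mem h𝒜sf hF hB𝒜) (hsub hK) hKne]
    exact hQ.2.2.2 F hF K hK hKne B hB hBne hBK

lemma image_QRelSet [Nonempty Ω] (hH : IsPartition H) (h𝒜sf : IsSetField 𝒜)
    (hsub : 𝒜L ⊆ 𝒜) (hℬ : ℬ ⊆ 𝒜L) :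
    restrictPairs 𝒜 𝒜 '' QRelSet 𝒜 𝒜L H π σ ℬ =
      {f | extQ 𝒜 f ∈ QRelSet 𝒜 𝒜L H π σ ℬ} := by
  ext f
  constructor
  · rintro ⟨Q, hQ, rfl⟩
    exact extQ_local hH h𝒜sf hsub hℬ hQ
  · intro hf
    exact ⟨extQ 𝒜 f, hf, restrict_extQ f⟩

lemma QRel_sub_cube :
    {f | extQ 𝒜 f ∈ QRelSet 𝒜 𝒜L H π σ ℬ} ⊆
      Set.pi Set.univ (fun _ : {p : Set Ω × Set Ω // p.1 ∈ 𝒜 ∧ p.2 ∈ 𝒜 ∧ p.2.Nonempty} =>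
        Set.Icc (0 : ℝ) 1) := by
  intro f hf p _
  have h := (hf.1.2.1 p.val.2 p.2.2.1 p.2.2.2).1 p.val.1 p.2.1
  have he : extQ 𝒜 f p.val.1 p.val.2 = f p := by
    rw [extQ_apply p.2]
  dsimp only at h
  rw [he] at h
  exact Set.mem_Icc.mpr ⟨h.1, h.2⟩

lemma continuous_ev {F K : Set Ω} (h : F ∈ 𝒜 ∧ K ∈ 𝒜 ∧ K.Nonempty) :
    Continuous fun f : {p : Set Ω × Set Ω // p.1 ∈ 𝒜 ∧ p.2 ∈ 𝒜 ∧ p.2.Nonempty} → ℝ =>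
      extQ 𝒜 f F K := by
  have : (fun f : {p : Set Ω × Set Ω // p.1 ∈ 𝒜 ∧ p.2 ∈ 𝒜 ∧ p.2.Nonempty} → ℝ =>
      extQ 𝒜 f F K) = fun f => f ⟨(F, K), h⟩ := funext fun f => extQ_apply h
  rw [this]
  exact continuous_apply _

end Topo

end S11
namespace S11

section Closed

variable {ι : Type*}
variable {H : ι → Set Ω} {𝒜L 𝒜 ℬ : Set (Set Ω)} {π : Set Ω → ℝ} {σ : Set Ω → ι → ℝ}

lemma closed_QRel [Nonempty Ω] (hH : IsPartition H) (h𝒜sf : IsSetField 𝒜)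
    (hsub : 𝒜L ⊆ 𝒜) (hℬ : ℬ ⊆ 𝒜L) :
    IsClosed {f : {p : Set Ω × Set Ω // p.1 ∈ 𝒜 ∧ p.2 ∈ 𝒜 ∧ p.2.Nonempty} → ℝ |
      extQ 𝒜 f ∈ QRelSet 𝒜 𝒜L H π σ ℬ} := by
  have hdec : {f : {p : Set Ω × Set Ω // p.1 ∈ 𝒜 ∧ p.2 ∈ 𝒜 ∧ p.2.Nonempty} → ℝ |
      extQ 𝒜 f ∈ QRelSet 𝒜 𝒜L H π σ ℬ} =
      ((((( ⋂ (E) (_ : E ∈ 𝒜) (K) (_ : K ∈ 𝒜) (_ : K.Nonempty),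
        {f | extQ 𝒜 f E K = extQ 𝒜 f (E ∩ K) K}) ∩
      (((⋂ (K) (_ : K ∈ 𝒜) (_ : K.Nonempty) (A) (_ : A ∈ 𝒜),
        ({f | 0 ≤ extQ 𝒜 f A K} ∩ {f | extQ 𝒜 f A K ≤ 1})) ∩
       (⋂ (K) (_ : K ∈ 𝒜) (_ : K.Nonempty), {f | extQ 𝒜 f Set.univ K = 1})) ∩
       (⋂ (K) (_ : K ∈ 𝒜) (_ : K.Nonempty) (A) (_ : A ∈ 𝒜) (B) (_ : B ∈ 𝒜)
          (_ : Disjoint A B),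
          {f | extQ 𝒜 f (A ∪ B) K = extQ 𝒜 f A K + extQ 𝒜 f B K}))) ∩
      (⋂ (E) (_ : E ∈ 𝒜) (F) (_ : F ∈ 𝒜) (K) (_ : K ∈ 𝒜) (_ : K.Nonempty)
         (_ : (E ∩ K).Nonempty),
        {f | extQ 𝒜 f (E ∩ F) K = extQ 𝒜 f E K * extQ 𝒜 f F (E ∩ K)})) ∩
      (⋂ (B) (_ : B ∈ ℬ), {f | extQ 𝒜 f B Set.univ = π B})) ∩
      (⋂ (i) (_ : H i ∈ ℬ) (F) (_ : F ∈ 𝒜), {f | extQ 𝒜 f F (H i) = σ F i})) ∩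
      (⋂ (F) (_ : F ∈ 𝒜) (K) (_ : K ∈ 𝒜L) (_ : K.Nonempty) (B) (_ : B ∈ ℬ)
         (_ : B.Nonempty) (_ : B ⊆ K),
        ({f | extQ 𝒜 f B K * sInf {x | ∃ i, H i ⊆ B ∧ x = σ F i} ≤ extQ 𝒜 f (F ∩ B) K} ∩
         {f | extQ 𝒜 f (F ∩ B) K ≤ extQ 𝒜 f B K * sSup {x | ∃ i, H i ⊆ B ∧ x = σ F i}})) := by
    ext f
    simp only [QRelSet, IsFCP, IsFAP, Set.mem_setOf_eq, Set.mem_inter_iff, Set.mem_iInter]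
    constructor
    · rintro ⟨⟨c1, c2, c3⟩, h4, h5, h6⟩
      refine ⟨⟨⟨⟨⟨c1, ⟨⟨?_, ?_⟩, ?_⟩⟩, c3⟩, h4⟩, h5⟩, ?_⟩
      · intro K hK hKne A hA
        exact ⟨((c2 K hK hKne).1 A hA).1, ((c2 K hK hKne).1 A hA).2⟩
      · intro K hK hKne
        exact (c2 K hK hKne).2.1
      · intro K hK hKne A hA B hB hd
        exact (c2 K hK hKne).2.2 A hA B hB hd
      · intro F hF K hK hKne B hB hBne hBK
        exact ⟨(h6 F hF K hK hKne B hB hBne hBK).1, (h6 F hF K hK hKne B hB hBne hBK).2⟩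
    · rintro ⟨⟨⟨⟨⟨c1, ⟨⟨c2a, c2b⟩, c2c⟩⟩, c3⟩, h4⟩, h5⟩, h6⟩
      refine ⟨⟨c1, ?_, c3⟩, h4, h5, ?_⟩
      · intro K hK hKne
        exact ⟨fun A hA => c2a K hK hKne A hA, c2b K hK hKne, fun A hA B hB hd =>
          c2c K hK hKne A hA B hB hd⟩
      · intro F hF K hK hKne B hB hBne hBK
        exact (h6 F hF K hK hKne B hB hBne hBK)
  rw [hdec]
  refine (((((IsClosed.inter ?_ ?_).inter ?_).inter ?_).inter ?_).inter ?_)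
  · exact isClosed_iInter fun E => isClosed_iInter fun hE => isClosed_iInter fun K =>
      isClosed_iInter fun hK => isClosed_iInter fun hKne =>
        isClosed_eq (continuous_ev ⟨hE, hK, hKne⟩)
          (continuous_ev ⟨sf_inter_mem h𝒜sf hE hK, hK, hKne⟩)
  · refine IsClosed.inter (IsClosed.inter ?_ ?_) ?_
    · exact isClosed_iInter fun K => isClosed_iInter fun hK => isClosed_iInter fun hKne =>
        isClosed_iInter fun A => isClosed_iInter fun hA =>
          (isClosed_le continuous_const (continuous_ev ⟨hA, hK, hKne⟩)).inter
            (isClosed_le (continuous_ev ⟨hA, hK, hKne⟩) continuous_const)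
    · exact isClosed_iInter fun K => isClosed_iInter fun hK => isClosed_iInter fun hKne =>
        isClosed_eq (continuous_ev ⟨h𝒜sf.1, hK, hKne⟩) continuous_const
    · exact isClosed_iInter fun K => isClosed_iInter fun hK => isClosed_iInter fun hKne =>
        isClosed_iInter fun A => isClosed_iInter fun hA => isClosed_iInter fun B =>
          isClosed_iInter fun hB => isClosed_iInter fun hd =>
            isClosed_eq (continuous_ev ⟨h𝒜sf.2.2 _ hA _ hB, hK, hKne⟩)
              ((continuous_ev ⟨hA, hK, hKne⟩).add (continuous_ev ⟨hB, hK, hKne⟩))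
  · exact isClosed_iInter fun E => isClosed_iInter fun hE => isClosed_iInter fun F =>
      isClosed_iInter fun hF => isClosed_iInter fun K => isClosed_iInter fun hK =>
        isClosed_iInter fun hKne => isClosed_iInter fun hEKne =>
          isClosed_eq (continuous_ev ⟨sf_inter_mem h𝒜sf hE hF, hK, hKne⟩)
            ((continuous_ev ⟨hE, hK, hKne⟩).mul
              (continuous_ev ⟨hF, sf_inter_mem h𝒜sf hE hK, hEKne⟩))
  · exact isClosed_iInter fun B => isClosed_iInter fun hB =>
      isClosed_eq (continuous_ev ⟨hsub (hℬ hB), h𝒜sf.1, Set.univ_nonempty⟩) continuous_const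
  · exact isClosed_iInter fun i => isClosed_iInter fun hi => isClosed_iInter fun F =>
      isClosed_iInter fun hF =>
        isClosed_eq (continuous_ev ⟨hF, hsub (hℬ hi), hH.1 i⟩) continuous_const
  · exact isClosed_iInter fun F => isClosed_iInter fun hF => isClosed_iInter fun K =>
      isClosed_iInter fun hK => isClosed_iInter fun hKne => isClosed_iInter fun B =>
        isClosed_iInter fun hB => isClosed_iInter fun hBne => isClosed_iInter fun hBK =>
          (isClosed_le ((continuous_ev ⟨hsub (hℬ hB), hsub hK, hKne⟩).mul continuous_const)
            (continuous_ev ⟨sf_inter_mem h𝒜sf hF (hsub (hℬ hB)), hsub hK, hKne⟩)).inter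
          (isClosed_le
            (continuous_ev ⟨sf_inter_mem h𝒜sf hF (hsub (hℬ hB)), hsub hK, hKne⟩)
            ((continuous_ev ⟨hsub (hℬ hB), hsub hK, hKne⟩).mul continuous_const))

end Closed

end S11

/-- `𝒬^fsc` is a nonempty compact subset of `[0,1]^(𝒜 × 𝒜⁰)` with the
product topology of pointwise convergence. -/
theorem statement11 {Ω ι κ : Type*} [Nonempty Ω] (H : ι → Set Ω) (E : κ → Set Ω)
    (𝒜L 𝒜E 𝒜 : Set (Set Ω))
    (hH : IsPartition H) (hE : IsPartition E)
    (h𝒜L : IsFieldOver H 𝒜L) (h𝒜E : IsFieldOver E 𝒜E)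
    (h𝒜 : IsJointField H E 𝒜L 𝒜E 𝒜)
    (π : Set Ω → ℝ) (hπ : IsFAP 𝒜L π)
    (σ : Set Ω → ι → ℝ) (hσ : IsStrategy 𝒜 H σ) :
    (restrictPairs 𝒜 𝒜 '' QfscSet 𝒜 𝒜L H π σ).Nonempty ∧
    IsCompact (restrictPairs 𝒜 𝒜 '' QfscSet 𝒜 𝒜L H π σ) := by
  classical
  obtain ⟨h𝒜sf, hsubL, hsubE, hatoms⟩ := h𝒜
  haveI hι : Nonempty ι := by
    obtain ⟨x⟩ := ‹Nonempty Ω›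
    obtain ⟨i, _⟩ := S11.exists_mem_part hH x
    exact ⟨i⟩
  rw [S11.QfscSet_eq h𝒜L, S11.image_QRelSet hH h𝒜sf hsubL (subset_refl _)]
  have hclosed : ∀ ℬ' : Set (Set Ω), ℬ' ⊆ 𝒜L →
      IsClosed {f | S11.extQ 𝒜 f ∈ S11.QRelSet 𝒜 𝒜L H π σ ℬ'} :=
    fun ℬ' h => S11.closed_QRel hH h𝒜sf hsubL h
  have hcube : IsCompact (Set.pi Set.univ
      (fun _ : {p : Set Ω × Set Ω // p.1 ∈ 𝒜 ∧ p.2 ∈ 𝒜 ∧ p.2.Nonempty} =>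
        Set.Icc (0 : ℝ) 1)) := isCompact_univ_pi fun _ => isCompact_Icc
  have hcomp : ∀ ℬ' : Set (Set Ω), ℬ' ⊆ 𝒜L →
      IsCompact {f | S11.extQ 𝒜 f ∈ S11.QRelSet 𝒜 𝒜L H π σ ℬ'} :=
    fun ℬ' h => hcube.of_isClosed_subset (hclosed ℬ' h) S11.QRel_sub_cube
  refine ⟨?_, hcomp _ (subset_refl _)⟩
  -- nonemptiness via directed intersection of compacts
  have hInter : {f | S11.extQ 𝒜 f ∈ S11.QRelSet 𝒜 𝒜L H π σ 𝒜L} =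
      ⋂ s : {s : Finset (Set Ω) // ↑s ⊆ 𝒜L},
        {f | S11.extQ 𝒜 f ∈ S11.QRelSet 𝒜 𝒜L H π σ ↑s.val} := by
    ext f
    simp only [Set.mem_iInter, Set.mem_setOf_eq]
    constructor
    · intro hf s
      exact S11.QRelSet_anti s.2 hf
    · intro hf
      have h0 := hf ⟨∅, by simp⟩
      refine ⟨h0.1, ?_, ?_, ?_⟩
      · intro B hB
        exact (hf ⟨{B}, by simpa using hB⟩).2.1 B (by simp)
      · intro i hi F hF
        exact (hf ⟨{H i}, by simpa using hi⟩).2.2.1 i (by simp) F hF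
      · intro F hF K hK hKne B hB hBne hBK
        exact (hf ⟨{B}, by simpa using hB⟩).2.2.2 F hF K hK hKne B (by simp) hBne hBK
  have hne : ∀ s : {s : Finset (Set Ω) // ↑s ⊆ 𝒜L},
      {f | S11.extQ 𝒜 f ∈ S11.QRelSet 𝒜 𝒜L H π σ ↑s.val}.Nonempty := by
    intro s
    rw [← S11.image_QRelSet hH h𝒜sf hsubL s.2]
    refine ⟨restrictPairs 𝒜 𝒜 (S11.QC H π σ s.val), Set.mem_image_of_mem _ ?_⟩
    refine ⟨S11.QC_isFCP hH h𝒜L h𝒜sf hπ hσ s.2, ?_, ?_, ?_⟩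
    · intro B hB
      exact S11.QC_prior hH h𝒜L h𝒜sf hsubL hπ hσ s.2 (by exact_mod_cast hB)
    · intro i hi F hF
      exact S11.QC_strat hH h𝒜L h𝒜sf hsubL hπ hσ s.2 (by exact_mod_cast hi) hF
    · intro F hF K hK hKne B hB hBne hBK
      exact S11.QC_congl hH h𝒜L h𝒜sf hsubL hπ hσ s.2 hF hK hKne (by exact_mod_cast hB)
        hBne hBK
  rw [hInter]
  haveI : Nonempty {s : Finset (Set Ω) // ↑s ⊆ 𝒜L} := ⟨⟨∅, by simp⟩⟩
  refine IsCompact.nonempty_iInter_of_directed_nonempty_isCompact_isClosed _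
    ?_ hne (fun s => hcomp _ s.2) (fun s => hclosed _ s.2)
  intro a b
  refine ⟨⟨a.1 ∪ b.1, ?_⟩, ?_, ?_⟩
  · rw [Finset.coe_union]
    exact Set.union_subset a.2 b.2
  · intro f hf
    exact S11.QRelSet_anti (Finset.coe_subset.mpr Finset.subset_union_left) hf
  · intro f hf
    exact S11.QRelSet_anti (Finset.coe_subset.mpr Finset.subset_union_right) hf
end
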